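/- arXiv:1807.10684 — 7 statements merged into one kernel-verified Lean document; each statement's English description precedes it below -/
import Mathlib

section
/- Let N = {1,…,n} be a set of agents, O a finite set of indivisible items, and for each agent i an additive utility function u_i : O → ℝ extended to bundles by u_i(X) = ∑_{o∈X} u_i(o). If a complete allocation π is EF1, i.e., for all agents i, j either u_i(π(i)) ≥ u_i(π(j)) or there is an item o ∈ π(i) ∪ π(j) with u_i(π(i)∖{o}) ≥ u_i(π(j)∖{o}), then π satisfies PROP1: for every agent i, either u_i(π(i)) ≥ u_i(O)/n, or u_i(π(i)) + u_i(o) ≥ u_i(O)/n for some o ∈ O∖π(i), or u_i(π(i)) − u_i(o) ≥ u_i(O)/n for some o ∈ π(i). -/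
/-- For additive utilities, an EF1 complete allocation satisfies PROP1. -/
theorem ef1_complete_implies_prop1
    (n : ℕ) (ι : Type*) [DecidableEq ι] (O : Finset ι)
    (u : Fin n → ι → ℝ)
    (π : Fin n → Finset ι)
    (hsub : ∀ i, π i ⊆ O)
    (hdisj : ∀ i j : Fin n, i ≠ j → Disjoint (π i) (π j))
    (hcomplete : Finset.univ.biUnion π = O)
    (hEF1 : ∀ i j : Fin n,
      (∑ o ∈ π j, u i o ≤ ∑ o ∈ π i, u i o) ∨
      (∃ o ∈ π i ∪ π j,
        ∑ p ∈ (π j).erase o, u i p ≤ ∑ p ∈ (π i).erase o, u i p)) :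
    ∀ i : Fin n,
      ((∑ o ∈ O, u i o) / n ≤ ∑ o ∈ π i, u i o) ∨
      (∃ o ∈ O \ π i, (∑ o ∈ O, u i o) / n ≤ (∑ p ∈ π i, u i p) + u i o) ∨
      (∃ o ∈ π i, (∑ o ∈ O, u i o) / n ≤ (∑ p ∈ π i, u i p) - u i o) := by
  intro i
  have hn : 0 < (n : ℝ) := by
    have : 0 < n := i.pos
    exact_mod_cast this
  -- total = sum over agents
  have htotal : ∑ o ∈ O, u i o = ∑ j : Fin n, ∑ o ∈ π j, u i o := by
    rw [← hcomplete, Finset.sum_biUnion]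
    intro a _ b _ hab
    exact hdisj a b hab
  -- choose j* maximizing u_i(π j)
  obtain ⟨j, -, hj⟩ := Finset.exists_max_image Finset.univ
    (fun j : Fin n => ∑ o ∈ π j, u i o) ⟨i, Finset.mem_univ i⟩
  have hmax : (∑ o ∈ O, u i o) / n ≤ ∑ o ∈ π j, u i o := by
    rw [div_le_iff₀ hn, htotal]
    calc ∑ k : Fin n, ∑ o ∈ π k, u i o
        ≤ ∑ _k : Fin n, ∑ o ∈ π j, u i o :=
          Finset.sum_le_sum (fun k _ => hj k (Finset.mem_univ k))
      _ = (∑ o ∈ π j, u i o) * n := by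
          simp [Finset.sum_const, mul_comm]
  by_cases hij : j = i
  · subst hij; exact Or.inl hmax
  rcases hEF1 i j with h | ⟨o, ho, h⟩
  · exact Or.inl (le_trans hmax h)
  rcases Finset.mem_union.mp ho with hoi | hoj
  · -- o ∈ π i, so o ∉ π j
    have honj : o ∉ π j := Finset.disjoint_left.mp (hdisj i j (Ne.symm hij)) hoi
    rw [Finset.erase_eq_of_notMem honj, Finset.sum_erase_eq_sub hoi] at h
    exact Or.inr (Or.inr ⟨o, hoi, le_trans hmax h⟩)
  · -- o ∈ π j, so o ∉ π i
    have honi : o ∉ π i := Finset.disjoint_right.mp (hdisj i j (Ne.symm hij)) hoj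
    rw [Finset.erase_eq_of_notMem honi, Finset.sum_erase_eq_sub hoj] at h
    refine Or.inr (Or.inl ⟨o, Finset.mem_sdiff.mpr ⟨hsub j hoj, honi⟩, ?_⟩)
    linarith
end

section
/- For every instance with a set N = {1,…,n} of agents, a finite set O of indivisible items, and additive utilities u_i : O → ℝ (where each item may be a good, i.e. have positive utility, for some agents and a chore, i.e. have negative utility, for others), there exists a complete allocation π that is EF1: for all agents i, j, either u_i(π(i)) ≥ u_i(π(j)) or there is an item o ∈ π(i) ∪ π(j) with u_i(π(i)∖{o}) ≥ u_i(π(j)∖{o}). -/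
namespace EF1

variable {n : ℕ} {ι : Type*} [DecidableEq ι]

noncomputable def run (f : Fin n → Finset ι → Option ι) :
    List (Fin n) → Finset ι → (Fin n → Finset ι) × Finset ι
  | [], S => (fun _ => ∅, S)
  | a :: T, S =>
    match f a S with
    | none => run f T S
    | some x =>
      let r := run f T (S.erase x)
      (fun b => if b = a then insert x (r.1 b) else r.1 b, r.2)

variable {f : Fin n → Finset ι → Option ι}

lemma run_nil (S : Finset ι) : run f [] S = (fun _ => ∅, S) := rfl

lemma run_cons_none {a : Fin n} {S : Finset ι} (h : f a S = none) (T : List (Fin n)) :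
    run f (a :: T) S = run f T S := by
  simp [run, h]

lemma run_cons_some {a : Fin n} {S : Finset ι} {x : ι} (h : f a S = some x) (T : List (Fin n)) :
    run f (a :: T) S =
      (fun b => if b = a then insert x ((run f T (S.erase x)).1 b) else (run f T (S.erase x)).1 b,
       (run f T (S.erase x)).2) := by
  simp [run, h]

lemma rem_subset : ∀ (T : List (Fin n)) (S : Finset ι), (run f T S).2 ⊆ S
  | [], S => by simp [run_nil]
  | a :: T, S => by
    cases h : f a S with
    | none => rw [run_cons_none h]; exact rem_subset T S
    | some x =>
      rw [run_cons_some h]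
      exact (rem_subset T (S.erase x)).trans (Finset.erase_subset _ _)

lemma bundle_subset (Hmem : ∀ a S x, f a S = some x → x ∈ S) :
    ∀ (T : List (Fin n)) (S : Finset ι) (b : Fin n), (run f T S).1 b ⊆ S
  | [], S, b => by simp [run_nil]
  | a :: T, S, b => by
    cases h : f a S with
    | none => rw [run_cons_none h]; exact bundle_subset Hmem T S b
    | some x =>
      rw [run_cons_some h]
      have hsub := (bundle_subset Hmem T (S.erase x) b).trans (Finset.erase_subset _ _)
      by_cases hb : b = a
      · subst hb; simp only [if_pos rfl]
        exact Finset.insert_subset (Hmem _ _ _ h) hsub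
      · simpa [hb] using hsub

lemma bundle_nonmem : ∀ (T : List (Fin n)) (S : Finset ι) (b : Fin n), b ∉ T → (run f T S).1 b = ∅
  | [], S, b, _ => rfl
  | a :: T, S, b, hb => by
    have hba : b ≠ a := fun h => hb (h ▸ (List.mem_cons_self : a ∈ a :: T))
    have hbT : b ∉ T := fun h => hb (List.mem_cons_of_mem _ h)
    cases h : f a S with
    | none => rw [run_cons_none h]; exact bundle_nonmem T S b hbT
    | some x => rw [run_cons_some h]; simpa [hba] using bundle_nonmem T (S.erase x) b hbT

lemma bundle_disj_rem (Hmem : ∀ a S x, f a S = some x → x ∈ S) :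
    ∀ (T : List (Fin n)) (S : Finset ι) (b : Fin n), Disjoint ((run f T S).1 b) ((run f T S).2)
  | [], S, b => by simp [run_nil]
  | a :: T, S, b => by
    cases h : f a S with
    | none => rw [run_cons_none h]; exact bundle_disj_rem Hmem T S b
    | some x =>
      rw [run_cons_some h]
      have hd := bundle_disj_rem Hmem T (S.erase x) b
      by_cases hb : b = a
      · subst hb; simp only [if_pos rfl]
        refine Finset.disjoint_insert_left.2 ⟨?_, hd⟩
        intro hx
        exact (Finset.notMem_erase x S) (rem_subset T (S.erase x) hx)
      · simpa [hb] using hd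

lemma bundle_disj (Hmem : ∀ a S x, f a S = some x → x ∈ S) :
    ∀ (T : List (Fin n)) (S : Finset ι) (b c : Fin n), b ≠ c →
      Disjoint ((run f T S).1 b) ((run f T S).1 c)
  | [], S, b, c, _ => by simp [run_nil]
  | a :: T, S, b, c, hbc => by
    cases h : f a S with
    | none => rw [run_cons_none h]; exact bundle_disj Hmem T S b c hbc
    | some x =>
      rw [run_cons_some h]
      have hd := bundle_disj Hmem T (S.erase x) b c hbc
      have hx : ∀ e : Fin n, x ∉ (run f T (S.erase x)).1 e := fun e hmem =>
        (Finset.notMem_erase x S) (bundle_subset Hmem T (S.erase x) e hmem)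
      by_cases hb : b = a
      · subst hb
        have hc : ¬ c = b := fun hc => hbc hc.symm
        simp only [if_pos rfl, if_neg hc]
        exact Finset.disjoint_insert_left.2 ⟨hx c, hd⟩
      · by_cases hc : c = a
        · subst hc
          simp only [if_neg hb, if_pos rfl]
          exact Finset.disjoint_insert_right.2 ⟨hx b, hd⟩
        · simpa [hb, hc] using hd

lemma run_append : ∀ (T₁ T₂ : List (Fin n)) (S : Finset ι),
    run f (T₁ ++ T₂) S =
      (fun b => (run f T₁ S).1 b ∪ (run f T₂ ((run f T₁ S).2)).1 b,
       (run f T₂ ((run f T₁ S).2)).2)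
  | [], T₂, S => by simp [run_nil]
  | a :: T₁, T₂, S => by
    cases h : f a S with
    | none => rw [List.cons_append, run_cons_none h, run_cons_none h, run_append T₁ T₂ S]
    | some x =>
      rw [List.cons_append, run_cons_some h, run_cons_some h, run_append T₁ T₂ (S.erase x)]
      refine Prod.ext ?_ rfl
      funext b
      by_cases hb : b = a <;> simp [hb, Finset.insert_union]

lemma cover (Hmem : ∀ a S x, f a S = some x → x ∈ S) :
    ∀ (T : List (Fin n)) (S : Finset ι) (x : ι), x ∈ S →
      x ∈ (run f T S).2 ∨ ∃ b, x ∈ (run f T S).1 b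
  | [], S, x, hx => Or.inl hx
  | a :: T, S, x, hx => by
    cases h : f a S with
    | none => rw [run_cons_none h]; exact cover Hmem T S x hx
    | some y =>
      rw [run_cons_some h]
      by_cases hxy : x = y
      · exact Or.inr ⟨a, by simp [hxy]⟩
      · rcases cover Hmem T (S.erase y) x (Finset.mem_erase.2 ⟨hxy, hx⟩) with h1 | ⟨b, hb⟩
        · exact Or.inl h1
        · refine Or.inr ⟨b, ?_⟩
          by_cases hba : b = a
          · subst hba; simp [Finset.mem_insert, hb]
          · simp [hba, hb]

lemma run_card (Hmem : ∀ a S x, f a S = some x → x ∈ S)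
    (Hforce : ∀ a (S : Finset ι), f a S = none → S = ∅) :
    ∀ (T : List (Fin n)) (S : Finset ι), T.length ≤ S.card →
      (run f T S).2.card + T.length = S.card
  | [], S, _ => by simp [run_nil]
  | a :: T, S, hlen => by
    cases h : f a S with
    | none =>
      exfalso
      have : S = ∅ := Hforce a S h
      simp [this] at hlen
    | some x =>
      rw [run_cons_some h]
      have hxS : x ∈ S := Hmem a S x h
      have hcard : (S.erase x).card + 1 = S.card := Finset.card_erase_add_one hxS
      have hlen' : T.length ≤ (S.erase x).card := by
        simp only [List.length_cons] at hlen; omega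
      have := run_card Hmem Hforce T (S.erase x) hlen'
      simp only [List.length_cons]
      omega

lemma sum_append (Hmem : ∀ a S x, f a S = some x → x ∈ S) (g : ι → ℝ)
    (T₁ T₂ : List (Fin n)) (S : Finset ι) (b : Fin n) :
    ∑ x ∈ (run f (T₁ ++ T₂) S).1 b, g x =
      ∑ x ∈ (run f T₁ S).1 b, g x + ∑ x ∈ (run f T₂ ((run f T₁ S).2)).1 b, g x := by
  rw [run_append]
  exact Finset.sum_union (Finset.disjoint_of_subset_right
    (bundle_subset Hmem T₂ _ b) (bundle_disj_rem Hmem T₁ S b))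

lemma rem_append (T₁ T₂ : List (Fin n)) (S : Finset ι) :
    (run f (T₁ ++ T₂) S).2 = (run f T₂ ((run f T₁ S).2)).2 := by
  rw [run_append]

/-- Decomposition of a single round `A ++ a :: B ++ b :: C`. -/
lemma run_round (Hmem : ∀ a S x, f a S = some x → x ∈ S) {a b : Fin n} (hab : a ≠ b)
    {A B C : List (Fin n)}
    (haA : a ∉ A) (haB : a ∉ B) (haC : a ∉ C)
    (hbA : b ∉ A) (hbB : b ∉ B) (hbC : b ∉ C) (S : Finset ι) :
    ∃ S₁ S₂ : Finset ι,
      S₁ = (run f A S).2 ∧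
      S₂ = (run f B ((f a S₁).elim S₁ (fun x => S₁.erase x))).2 ∧
      S₂ ⊆ (f a S₁).elim S₁ (fun x => S₁.erase x) ∧
      (run f (A ++ a :: (B ++ b :: C)) S).1 a = (f a S₁).elim ∅ (fun x => {x}) ∧
      (run f (A ++ a :: (B ++ b :: C)) S).1 b = (f b S₂).elim ∅ (fun y => {y}) ∧
      (run f (A ++ a :: (B ++ b :: C)) S).2 =
        (run f C ((f b S₂).elim S₂ (fun y => S₂.erase y))).2 := by
  refine ⟨(run f A S).2, _, rfl, rfl, rem_subset _ _, ?_, ?_, ?_⟩ <;>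
  · set S₁ := (run f A S).2 with hS₁
    cases hfa : f a S₁ with
    | none =>
      rw [run_append, run_cons_none hfa, run_append]
      set S₂ := (run f B S₁).2 with hS₂
      cases hfb : f b S₂ with
      | none =>
        rw [run_cons_none hfb]
        simp [hfa, hfb, bundle_nonmem A S a haA, bundle_nonmem A S b hbA,
          bundle_nonmem B S₁ a haB, bundle_nonmem B S₁ b hbB,
          bundle_nonmem C S₂ a haC, bundle_nonmem C S₂ b hbC, ← hS₂]
      | some y =>
        rw [run_cons_some hfb]
        simp [hfa, hfb, hab, Ne.symm hab, bundle_nonmem A S a haA, bundle_nonmem A S b hbA,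
          bundle_nonmem B S₁ a haB, bundle_nonmem B S₁ b hbB,
          bundle_nonmem C (S₂.erase y) a haC, bundle_nonmem C (S₂.erase y) b hbC, ← hS₂]
    | some x =>
      rw [run_append, run_cons_some hfa]
      set S₂ := (run f B (S₁.erase x)).2 with hS₂
      simp only [hfa, Option.elim_some]
      rw [show (run f (B ++ b :: C) (S₁.erase x)) =
        (run f (B ++ b :: C) (S₁.erase x)) from rfl]
      rw [run_append (f := f) B (b :: C) (S₁.erase x)]
      cases hfb : f b S₂ with
      | none =>
        rw [run_cons_none hfb]
        simp [hfa, hfb, hab, Ne.symm hab, bundle_nonmem A S a haA, bundle_nonmem A S b hbA,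
          bundle_nonmem B (S₁.erase x) a haB, bundle_nonmem B (S₁.erase x) b hbB,
          bundle_nonmem C S₂ a haC, bundle_nonmem C S₂ b hbC, ← hS₂]
      | some y =>
        rw [run_cons_some hfb]
        simp [hfa, hfb, hab, Ne.symm hab, bundle_nonmem A S a haA, bundle_nonmem A S b hbA,
          bundle_nonmem B (S₁.erase x) a haB, bundle_nonmem B (S₁.erase x) b hbB,
          bundle_nonmem C (S₂.erase y) a haC, bundle_nonmem C (S₂.erase y) b hbC, ← hS₂]

section Main

variable {u : Fin n → ι → ℝ} {i j : Fin n}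

/-- Phase-1 style (forced picking, all chores), i picking before j each round:
    i does not envy j at all. -/
lemma chores_aligned (Hmem : ∀ a S x, f a S = some x → x ∈ S)
    (Hforce : ∀ a (S : Finset ι), f a S = none → S = ∅)
    (hij : i ≠ j)
    (HK : ∀ (S : Finset ι), ∀ x ∈ S, u i x ≤ (f i S).elim 0 (u i))
    (rounds : List (List (Fin n))) (S : Finset ι)
    (Hch : ∀ x ∈ S, u i x ≤ 0)
    (Hcard : rounds.flatten.length ≤ S.card)
    (Hshape : ∀ L ∈ rounds,
      (∃ A B C, L = A ++ i :: (B ++ j :: C) ∧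
        i ∉ A ∧ i ∉ B ∧ i ∉ C ∧ j ∉ A ∧ j ∉ B ∧ j ∉ C) ∨ i ∉ L) :
    ∑ x ∈ (run f rounds.flatten S).1 j, u i x ≤ ∑ x ∈ (run f rounds.flatten S).1 i, u i x := by
  induction rounds generalizing S with
  | nil => simp [run_nil]
  | cons L rounds ih =>
    rw [List.flatten_cons] at Hcard ⊢
    rw [sum_append Hmem, sum_append Hmem]
    set R := (run f L S).2 with hR
    have hLlen : L.length ≤ S.card := by
      rw [List.length_append] at Hcard; omega
    have hRcard : R.card + L.length = S.card := run_card Hmem Hforce L S hLlen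
    have hRsub : R ⊆ S := rem_subset L S
    have hrest : rounds.flatten.length ≤ R.card := by
      rw [List.length_append] at Hcard; omega
    have ihr := ih R (fun x hx => Hch x (hRsub hx)) hrest
      (fun L' hL' => Hshape L' (List.mem_cons_of_mem _ hL'))
    rcases Hshape L List.mem_cons_self with ⟨A, B, C, hLeq, hiA, hiB, hiC, hjA, hjB, hjC⟩ | hiL
    · subst hLeq
      obtain ⟨S₁, S₂, hS₁, hS₂, hS₂sub, hbi, hbj, hrem⟩ :=
        run_round Hmem hij hiA hiB hiC hjA hjB hjC S
      have hlenL : A.length + (B.length + (C.length + 2)) = (A ++ i :: (B ++ j :: C)).length := by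
        simp; omega
      have hS₁card : S₁.card + A.length = S.card := by
        rw [hS₁]; exact run_card Hmem Hforce A S (by omega)
      -- i's pick exists
      cases hfi : f i S₁ with
      | none =>
        exfalso
        have := Hforce i S₁ hfi
        rw [this] at hS₁card
        simp at hS₁card
        omega
      | some z =>
        have hzS₁ : z ∈ S₁ := Hmem _ _ _ hfi
        rw [hfi] at hS₂ hS₂sub
        simp only [Option.elim_some] at hS₂ hS₂sub
        have hS₂card : S₂.card + B.length = S₁.card - 1 := by
          rw [hS₂]
          have : (S₁.erase z).card = S₁.card - 1 := Finset.card_erase_of_mem hzS₁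
          rw [← this]
          exact run_card Hmem Hforce B _ (by omega)
        -- j's pick exists
        cases hfj : f j S₂ with
        | none =>
          exfalso
          have := Hforce j S₂ hfj
          rw [this] at hS₂card
          simp at hS₂card
          omega
        | some y =>
          have hyS₂ : y ∈ S₂ := Hmem _ _ _ hfj
          have hyS₁ : y ∈ S₁ := Finset.mem_of_mem_erase (hS₂sub hyS₂)
          have hkey : u i y ≤ u i z := by
            have := HK S₁ y hyS₁
            rwa [hfi, Option.elim_some] at this
          rw [hbi, hbj, hfi, hfj]
          simp only [Option.elim_some, Finset.sum_singleton]
          linarith [ihr]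
    · -- i not in this round: i gets nothing, j gets only chores
      have hbLj : ∑ x ∈ (run f L S).1 j, u i x ≤ 0 :=
        Finset.sum_nonpos fun x hx => Hch x (bundle_subset Hmem L S j hx)
      rw [bundle_nonmem L S i hiL]
      simp only [Finset.sum_empty]
      linarith [ihr]

/-- Phase-1 style, i picking after j each round: i envies j up to i's own last chore. -/
lemma chores_shifted (Hmem : ∀ a S x, f a S = some x → x ∈ S)
    (Hforce : ∀ a (S : Finset ι), f a S = none → S = ∅)
    (hij : i ≠ j)
    (HK : ∀ (S : Finset ι), ∀ x ∈ S, u i x ≤ (f i S).elim 0 (u i))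
    (rounds : List (List (Fin n))) (S : Finset ι) (m : ℝ)
    (Hm : ∀ x ∈ S, u i x ≤ m)
    (Hch : ∀ x ∈ S, u i x ≤ 0)
    (Hshape : ∀ L ∈ rounds,
      ∃ A B C, L = A ++ j :: (B ++ i :: C) ∧
        i ∉ A ∧ i ∉ B ∧ i ∉ C ∧ j ∉ A ∧ j ∉ B ∧ j ∉ C) :
    ∃ r : ℝ,
      (∑ x ∈ (run f rounds.flatten S).1 j, u i x) + r ≤
        (∑ x ∈ (run f rounds.flatten S).1 i, u i x) + m ∧
      ((∃ z ∈ (run f rounds.flatten S).1 i, r = u i z) ∨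
        ((run f rounds.flatten S).1 i = ∅ ∧ r = m)) := by
  induction rounds generalizing S m with
  | nil => exact ⟨m, by simp [run_nil]⟩
  | cons L rounds ih =>
    rw [List.flatten_cons]
    have hsplit := run_append (f := f) L rounds.flatten S
    set R := (run f L S).2 with hR
    obtain ⟨A, B, C, hLeq, hiA, hiB, hiC, hjA, hjB, hjC⟩ := Hshape L List.mem_cons_self
    subst hLeq
    obtain ⟨S₁, S₂, hS₁, hS₂, hS₂sub, hbj, hbi, hrem⟩ :=
      run_round Hmem (Ne.symm hij) hjA hjB hjC hiA hiB hiC S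
    have hS₁S : S₁ ⊆ S := hS₁ ▸ rem_subset A S
    have hRrem : R ⊆ S₂ := by
      rw [hR, hrem]
      refine (rem_subset _ _).trans ?_
      cases hfi : f i S₂ <;> simp [hfi, Finset.erase_subset]
    have hdisj : ∀ b : Fin n,
        Disjoint ((run f (A ++ j :: (B ++ i :: C)) S).1 b) ((run f rounds.flatten R).1 b) :=
      fun b => Finset.disjoint_of_subset_right (bundle_subset Hmem _ _ b)
        (hR ▸ bundle_disj_rem Hmem _ S b)
    have hunion : ∀ b : Fin n,
        (run f ((A ++ j :: (B ++ i :: C)) ++ rounds.flatten) S).1 b =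
          (run f (A ++ j :: (B ++ i :: C)) S).1 b ∪ (run f rounds.flatten R).1 b := by
      intro b; rw [hsplit]
    have hsum : ∀ b : Fin n,
        ∑ x ∈ (run f ((A ++ j :: (B ++ i :: C)) ++ rounds.flatten) S).1 b, u i x =
          ∑ x ∈ (run f (A ++ j :: (B ++ i :: C)) S).1 b, u i x +
          ∑ x ∈ (run f rounds.flatten R).1 b, u i x := by
      intro b; rw [hunion b]; exact Finset.sum_union (hdisj b)
    cases hfj : f j S₁ with
    | none =>
      -- everything downstream is empty
      have hS₁e : S₁ = ∅ := Hforce j S₁ hfj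
      have hS₂e : S₂ = ∅ := by
        have := hS₂sub
        rw [hfj] at this
        simp only [Option.elim_none] at this
        exact Finset.subset_empty.1 (hS₁e ▸ this)
      have hfi : f i S₂ = none := by
        cases hfi : f i S₂ with
        | none => rfl
        | some z => exact absurd (hS₂e ▸ Hmem _ _ _ hfi) (Finset.notMem_empty z)
      have hRe : R = ∅ := Finset.subset_empty.1 (hS₂e ▸ hRrem)
      refine ⟨m, ?_, Or.inr ⟨?_, rfl⟩⟩
      · rw [hsum i, hsum j, hbi, hbj, hfi, hfj]
        have h1 : (run f rounds.flatten R).1 i = ∅ := by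
          rw [hRe]
          exact Finset.subset_empty.1 (bundle_subset Hmem _ _ i)
        have h2 : (run f rounds.flatten R).1 j = ∅ := by
          rw [hRe]
          exact Finset.subset_empty.1 (bundle_subset Hmem _ _ j)
        simp [h1, h2]
      · rw [hunion i, hbi, hfi, hRe]
        have h1 : (run f rounds.flatten (∅ : Finset ι)).1 i = ∅ :=
          Finset.subset_empty.1 (bundle_subset Hmem _ _ i)
        simp [h1]
    | some y =>
      have hyS : y ∈ S := hS₁S (Hmem _ _ _ hfj)
      rw [hfj] at hS₂ hS₂sub
      simp only [Option.elim_some] at hS₂ hS₂sub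
      cases hfi : f i S₂ with
      | none =>
        have hS₂e : S₂ = ∅ := Hforce i S₂ hfi
        have hRe : R = ∅ := Finset.subset_empty.1 (hS₂e ▸ hRrem)
        refine ⟨m, ?_, Or.inr ⟨?_, rfl⟩⟩
        · rw [hsum i, hsum j, hbi, hbj, hfi, hfj]
          have h1 : (run f rounds.flatten R).1 i = ∅ := by
            rw [hRe]; exact Finset.subset_empty.1 (bundle_subset Hmem _ _ i)
          have h2 : (run f rounds.flatten R).1 j = ∅ := by
            rw [hRe]; exact Finset.subset_empty.1 (bundle_subset Hmem _ _ j)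
          simp only [h1, h2, Option.elim_none, Option.elim_some,
            Finset.sum_empty, Finset.sum_singleton, add_zero, zero_add]
          linarith [Hch y hyS]
        · rw [hunion i, hbi, hfi, hRe]
          have h1 : (run f rounds.flatten (∅ : Finset ι)).1 i = ∅ :=
            Finset.subset_empty.1 (bundle_subset Hmem _ _ i)
          simp [h1]
      | some z =>
        have hzS₂ : z ∈ S₂ := Hmem _ _ _ hfi
        have hRsub : R ⊆ S₂ := hRrem
        have Hm' : ∀ x ∈ R, u i x ≤ u i z := by
          intro x hx
          have := HK S₂ x (hRsub hx)
          rwa [hfi, Option.elim_some] at this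
        have Hch' : ∀ x ∈ R, u i x ≤ 0 := by
          intro x hx
          exact Hch x (hS₁S (Finset.mem_of_mem_erase (hS₂sub (hRsub hx))))
        obtain ⟨r', hr'le, hr'⟩ := ih R (u i z) Hm' Hch'
          (fun L' hL' => Hshape L' (List.mem_cons_of_mem _ hL'))
        refine ⟨r', ?_, ?_⟩
        · rw [hsum i, hsum j, hbi, hbj, hfi, hfj]
          simp only [Option.elim_some, Finset.sum_singleton]
          have hym : u i y ≤ m := Hm y hyS
          linarith
        · rcases hr' with ⟨z', hz', hrz⟩ | ⟨hempty, hrz⟩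
          · exact Or.inl ⟨z', by rw [hunion i]; exact Finset.mem_union_right _ hz', hrz⟩
          · refine Or.inl ⟨z, ?_, hrz⟩
            rw [hunion i, hbi, hfi]
            exact Finset.mem_union_left _ (by simp)

/-- Phase-2 style (optional picking, nonnegative pick values), i picking before j:
    i does not envy j. -/
lemma goods_aligned (Hmem : ∀ a S x, f a S = some x → x ∈ S)
    (hij : i ≠ j)
    (HK : ∀ (S : Finset ι), ∀ x ∈ S, u i x ≤ (f i S).elim 0 (u i))
    (HD : ∀ S : Finset ι, 0 ≤ (f i S).elim 0 (u i))
    (rounds : List (List (Fin n))) (S : Finset ι)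
    (Hshape : ∀ L ∈ rounds,
      ∃ A B C, L = A ++ i :: (B ++ j :: C) ∧
        i ∉ A ∧ i ∉ B ∧ i ∉ C ∧ j ∉ A ∧ j ∉ B ∧ j ∉ C) :
    ∑ x ∈ (run f rounds.flatten S).1 j, u i x ≤ ∑ x ∈ (run f rounds.flatten S).1 i, u i x := by
  induction rounds generalizing S with
  | nil => simp [run_nil]
  | cons L rounds ih =>
    rw [List.flatten_cons, sum_append Hmem, sum_append Hmem]
    set R := (run f L S).2 with hR
    obtain ⟨A, B, C, hLeq, hiA, hiB, hiC, hjA, hjB, hjC⟩ := Hshape L List.mem_cons_self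
    subst hLeq
    obtain ⟨S₁, S₂, hS₁, hS₂, hS₂sub, hbi, hbj, hrem⟩ :=
      run_round Hmem hij hiA hiB hiC hjA hjB hjC S
    have ihr := ih R (fun L' hL' => Hshape L' (List.mem_cons_of_mem _ hL'))
    have hS₂S₁ : S₂ ⊆ S₁ := by
      refine hS₂sub.trans ?_
      cases hfi : f i S₁ <;> simp [hfi, Finset.erase_subset]
    have hvi : ∑ x ∈ (run f (A ++ i :: (B ++ j :: C)) S).1 i, u i x =
        (f i S₁).elim 0 (u i) := by
      rw [hbi]; cases hfi : f i S₁ <;> simp [hfi]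
    have hvj : ∑ x ∈ (run f (A ++ i :: (B ++ j :: C)) S).1 j, u i x ≤
        (f i S₁).elim 0 (u i) := by
      rw [hbj]
      cases hfj : f j S₂ with
      | none => simpa using HD S₁
      | some y =>
        have hyS₁ : y ∈ S₁ := hS₂S₁ (Hmem _ _ _ hfj)
        simpa using HK S₁ y hyS₁
    linarith
/-- Phase-2 style, i picking after j: i envies j at most up to `m`. -/
lemma goods_shifted (Hmem : ∀ a S x, f a S = some x → x ∈ S)
    (hij : i ≠ j)
    (HK : ∀ (S : Finset ι), ∀ x ∈ S, u i x ≤ (f i S).elim 0 (u i))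
    (HD : ∀ S : Finset ι, 0 ≤ (f i S).elim 0 (u i))
    (rounds : List (List (Fin n))) (S : Finset ι) (m : ℝ)
    (Hm : ∀ x ∈ S, u i x ≤ m) (Hm0 : 0 ≤ m)
    (Hshape : ∀ L ∈ rounds,
      ∃ A B C, L = A ++ j :: (B ++ i :: C) ∧
        i ∉ A ∧ i ∉ B ∧ i ∉ C ∧ j ∉ A ∧ j ∉ B ∧ j ∉ C) :
    ∑ x ∈ (run f rounds.flatten S).1 j, u i x ≤
      (∑ x ∈ (run f rounds.flatten S).1 i, u i x) + m := by
  induction rounds generalizing S m with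
  | nil => simpa [run_nil] using Hm0
  | cons L rounds ih =>
    rw [List.flatten_cons, sum_append Hmem, sum_append Hmem]
    set R := (run f L S).2 with hR
    obtain ⟨A, B, C, hLeq, hiA, hiB, hiC, hjA, hjB, hjC⟩ := Hshape L List.mem_cons_self
    subst hLeq
    obtain ⟨S₁, S₂, hS₁, hS₂, hS₂sub, hbj, hbi, hrem⟩ :=
      run_round Hmem (Ne.symm hij) hjA hjB hjC hiA hiB hiC S
    have hS₁S : S₁ ⊆ S := hS₁ ▸ rem_subset A S
    have hRS₂ : R ⊆ S₂ := by
      rw [hR, hrem]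
      refine (rem_subset _ _).trans ?_
      cases hfi : f i S₂ <;> simp [hfi, Finset.erase_subset]
    have Hm' : ∀ x ∈ R, u i x ≤ (f i S₂).elim 0 (u i) :=
      fun x hx => HK S₂ x (hRS₂ hx)
    have ihr := ih R ((f i S₂).elim 0 (u i)) Hm' (HD S₂)
      (fun L' hL' => Hshape L' (List.mem_cons_of_mem _ hL'))
    have hvi : ∑ x ∈ (run f (A ++ j :: (B ++ i :: C)) S).1 i, u i x =
        (f i S₂).elim 0 (u i) := by
      rw [hbi]; cases hfi : f i S₂ <;> simp [hfi]
    have hvj : ∑ x ∈ (run f (A ++ j :: (B ++ i :: C)) S).1 j, u i x ≤ m := by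
      rw [hbj]
      cases hfj : f j S₁ with
      | none => simpa using Hm0
      | some y => simpa using Hm y (hS₁S (Hmem _ _ _ hfj))
    linarith

end Main

section Picks

attribute [local instance] Classical.propDecidable

variable (u : Fin n → ι → ℝ)

noncomputable def pick1 (a : Fin n) (S : Finset ι) : Option ι :=
  if h : S.Nonempty then some (S.exists_max_image (u a) h).choose else none

lemma pick1_mem {a : Fin n} {S : Finset ι} {x : ι} (h : pick1 u a S = some x) : x ∈ S := by
  unfold pick1 at h
  split at h
  · rename_i hne
    obtain ⟨hmem, _⟩ := (S.exists_max_image (u a) hne).choose_spec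
    exact (Option.some_injective _ h) ▸ hmem
  · exact absurd h (by simp)

lemma pick1_none {a : Fin n} {S : Finset ι} (h : pick1 u a S = none) : S = ∅ := by
  unfold pick1 at h
  split at h
  · exact absurd h (by simp)
  · rename_i hne
    exact Finset.not_nonempty_iff_eq_empty.1 hne

lemma pick1_max {a : Fin n} {S : Finset ι} {x : ι} (h : pick1 u a S = some x) :
    ∀ y ∈ S, u a y ≤ u a x := by
  unfold pick1 at h
  split at h
  · rename_i hne
    obtain ⟨_, hmax⟩ := (S.exists_max_image (u a) hne).choose_spec
    exact (Option.some_injective _ h) ▸ hmax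
  · exact absurd h (by simp)

lemma pick1_HK (i : Fin n) : ∀ (S : Finset ι), ∀ x ∈ S, u i x ≤ (pick1 u i S).elim 0 (u i) := by
  intro S x hx
  cases h : pick1 u i S with
  | none => exact absurd (pick1_none u h ▸ hx) (Finset.notMem_empty x)
  | some z => simpa using pick1_max u h x hx

noncomputable def pick2 (a : Fin n) (S : Finset ι) : Option ι :=
  pick1 u a (S.filter (fun x => 0 < u a x))

lemma pick2_mem {a : Fin n} {S : Finset ι} {x : ι} (h : pick2 u a S = some x) :
    x ∈ S ∧ 0 < u a x := by
  have := pick1_mem u h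
  simpa using this

lemma pick2_none {a : Fin n} {S : Finset ι} (h : pick2 u a S = none) :
    ∀ y ∈ S, u a y ≤ 0 := by
  intro y hy
  have hemp := pick1_none u h
  by_contra hpos
  push_neg at hpos
  have : y ∈ S.filter (fun x => 0 < u a x) := Finset.mem_filter.2 ⟨hy, hpos⟩
  rw [hemp] at this
  exact Finset.notMem_empty y this

lemma pick2_HD (i : Fin n) : ∀ S : Finset ι, 0 ≤ (pick2 u i S).elim 0 (u i) := by
  intro S
  cases h : pick2 u i S with
  | none => simp
  | some z => simpa using (pick2_mem u h).2.le

lemma pick2_HK (i : Fin n) : ∀ (S : Finset ι), ∀ x ∈ S, u i x ≤ (pick2 u i S).elim 0 (u i) := by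
  intro S x hx
  by_cases hpos : 0 < u i x
  · have hxf : x ∈ S.filter (fun y => 0 < u i y) := Finset.mem_filter.2 ⟨hx, hpos⟩
    cases h : pick2 u i S with
    | none => exact absurd (pick1_none u h ▸ hxf) (Finset.notMem_empty x)
    | some z => simpa using pick1_max u h x hxf
  · push_neg at hpos
    exact hpos.trans (pick2_HD u i S)

end Picks

section Splits

lemma nodup_notins {α : Type*} {A B C : List α} {x y : α}
    (h : (A ++ x :: (B ++ y :: C)).Nodup) :
    x ∉ A ∧ x ∉ B ∧ x ∉ C ∧ y ∉ A ∧ y ∉ B ∧ y ∉ C ∧ x ≠ y := by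
  simp only [List.nodup_append, List.nodup_cons, List.mem_append, List.mem_cons,
    List.disjoint_cons_right, List.disjoint_append_right] at h
  push_neg at h
  obtain ⟨_, ⟨⟨hxB, hxy, hxC⟩, _, ⟨hyC, _⟩, hB⟩, hA⟩ := h
  exact ⟨fun hx => hA x hx x (Or.inl rfl) rfl, hxB, hxC,
    fun hy => hA y hy y (Or.inr (Or.inr (Or.inl rfl))) rfl,
    fun hy => hB y hy y (Or.inl rfl) rfl, hyC, hxy⟩

lemma ordered_split {α : Type*} (l : List α) (p q : ℕ) (hpq : p < q) (hq : q < l.length) :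
    ∃ A B C, l = A ++ l[p]'(by omega) :: (B ++ l[q] :: C) ∧
      A.length = p := by
  have hp : p < l.length := by omega
  refine ⟨l.take p, (l.drop (p+1)).take (q - (p+1)), l.drop (q+1), ?_, by
    simp [List.length_take, hp.le]⟩
  conv_lhs => rw [← List.take_append_drop p l]
  rw [List.drop_eq_getElem_cons hp]
  congr 1
  congr 1
  conv_lhs => rw [← List.take_append_drop (q - (p+1)) (l.drop (p+1))]
  congr 1
  rw [List.drop_drop]
  have hq' : p + 1 + (q - (p + 1)) = q := by omega
  rw [hq']
  exact List.drop_eq_getElem_cons hq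

lemma getElem_drop_finRange {d k : ℕ} (h : k < ((List.finRange n).drop d).length)
    (i : Fin n) (hdk : d + k = i.val) : ((List.finRange n).drop d)[k] = i := by
  rw [List.getElem_drop]
  apply Fin.ext
  simp [List.getElem_finRange, hdk]

lemma mem_drop_finRange {d : ℕ} (x : Fin n) : x ∈ (List.finRange n).drop d ↔ d ≤ x.val := by
  constructor
  · intro hx
    obtain ⟨k, hk, hxk⟩ := List.mem_iff_getElem.1 hx
    rw [List.getElem_drop] at hxk
    have hv : x.val = d + k := by
      rw [← hxk]
      simp [List.getElem_finRange]
    omega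
  · intro hd
    have hlen : x.val - d < ((List.finRange n).drop d).length := by
      simp [List.length_drop, List.length_finRange]
      omega
    exact List.mem_iff_getElem.2 ⟨x.val - d, hlen, getElem_drop_finRange hlen x (by omega)⟩

lemma split_pair {d : ℕ} {i j : Fin n} (hd : d ≤ i.val) (hij : i < j) :
    ∃ A B C, (List.finRange n).drop d = A ++ i :: (B ++ j :: C) ∧
      i ∉ A ∧ i ∉ B ∧ i ∉ C ∧ j ∉ A ∧ j ∉ B ∧ j ∉ C := by
  have hlen : ((List.finRange n).drop d).length = n - d := by
    simp [List.length_drop, List.length_finRange]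
  have hij' : i.val < j.val := hij
  have hq : j.val - d < ((List.finRange n).drop d).length := by
    rw [hlen]; omega
  obtain ⟨A, B, C, heq, -⟩ :=
    ordered_split ((List.finRange n).drop d) (i.val - d) (j.val - d) (by omega) hq
  rw [getElem_drop_finRange _ i (by omega), getElem_drop_finRange _ j (by omega)] at heq
  have hnd : ((List.finRange n).drop d).Nodup :=
    (List.drop_sublist _ _).nodup (List.nodup_finRange n)
  rw [heq] at hnd
  obtain ⟨h1, h2, h3, h4, h5, h6, -⟩ := nodup_notins hnd
  exact ⟨A, B, C, heq, h1, h2, h3, h4, h5, h6⟩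

lemma rev_split {α : Type*} {l A B C : List α} {x y : α}
    (h : l = A ++ x :: (B ++ y :: C)) :
    l.reverse = C.reverse ++ y :: (B.reverse ++ x :: A.reverse) := by
  subst h
  simp [List.reverse_append, List.append_assoc]

lemma single_split {l : List (Fin n)} (hnd : l.Nodup) {a b : Fin n} (ha : a ∈ l)
    (hb : b ∉ l) :
    ∃ A C, l = A ++ a :: C ∧ a ∉ A ∧ a ∉ C ∧ b ∉ A ∧ b ∉ C := by
  obtain ⟨A, C, heq⟩ := List.append_of_mem ha
  subst heq
  simp only [List.nodup_append, List.nodup_cons, List.mem_append, List.mem_cons,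
    List.disjoint_cons_right] at hnd
  simp only [List.mem_append, List.mem_cons] at hb
  refine ⟨A, C, rfl, ?_, ?_, ?_, ?_⟩ <;> tauto

lemma run_progress (Hmem : ∀ a S x, f a S = some x → x ∈ S) {a : Fin n} {x : ι}
    (hpos : ∀ S' : Finset ι, x ∈ S' → f a S' ≠ none) :
    ∀ (T : List (Fin n)) (S : Finset ι), a ∈ T → x ∈ S →
      x ∉ (run f T S).2 ∨ (run f T S).2.card < S.card
  | [], S, haT, _ => absurd haT List.not_mem_nil
  | b :: T, S, haT, hx => by
    cases hfb : f b S with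
    | none =>
      have hba : b ≠ a := by
        rintro rfl
        exact hpos S hx hfb
      rw [run_cons_none hfb]
      have haT' : a ∈ T := by
        rcases List.mem_cons.1 haT with h | h
        · exact absurd h.symm hba
        · exact h
      exact run_progress Hmem hpos T S haT' hx
    | some z =>
      rw [run_cons_some hfb]
      right
      calc (run f T (S.erase z)).2.card
          ≤ (S.erase z).card := Finset.card_le_card (rem_subset _ _)
        _ < S.card := Finset.card_erase_lt_of_mem (Hmem _ _ _ hfb)

end Splits
section Complete

lemma replicate_empty (u : Fin n → ι → ℝ) (T : List (Fin n)) (hT : ∀ a : Fin n, a ∈ T) :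
    ∀ (R : ℕ) (S : Finset ι), (∀ x ∈ S, ∃ a, 0 < u a x) → S.card ≤ R →
      (run (pick2 u) (List.replicate R T).flatten S).2 = ∅ := by
  have Hmem : ∀ (a : Fin n) (S : Finset ι) x, pick2 u a S = some x → x ∈ S :=
    fun a S x h => (pick2_mem u h).1
  intro R
  induction R with
  | zero =>
    intro S _ hcard
    have : S = ∅ := Finset.card_eq_zero.1 (Nat.le_zero.1 hcard)
    subst this
    simpa using Finset.subset_empty.1 (rem_subset _ _)
  | succ k ih =>
    intro S HP hcard
    rw [List.replicate_succ, List.flatten_cons, rem_append]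
    set R₁ := (run (pick2 u) T S).2 with hR₁
    have hR₁S : R₁ ⊆ S := rem_subset _ _
    rcases S.eq_empty_or_nonempty with rfl | ⟨x, hx⟩
    · have : R₁ = ∅ := Finset.subset_empty.1 hR₁S
      rw [this]
      exact ih ∅ (by simp) (by simp)
    · obtain ⟨a, ha⟩ := HP x hx
      have hpos : ∀ S' : Finset ι, x ∈ S' → pick2 u a S' ≠ none := by
        intro S' hx' hnone
        exact absurd (pick2_none u hnone x hx') (not_le.2 ha)
      have hprog := run_progress Hmem hpos T S (hT a) hx
      have hlt : R₁.card < S.card := by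
        rcases hprog with hnot | hlt
        · exact Finset.card_lt_card ⟨hR₁S, fun hsub => hnot (hsub hx)⟩
        · exact hlt
      exact ih R₁ (fun y hy => HP y (hR₁S hy)) (by omega)

end Complete
end EF1
/-- For every instance with additive utilities (items may be goods for
some agents and chores for others), an EF1 complete allocation exists. -/
theorem exists_ef1_complete_allocation
    (n : ℕ) (hn : 0 < n) (ι : Type*) [DecidableEq ι] (O : Finset ι)
    (u : Fin n → ι → ℝ) :
    ∃ π : Fin n → Finset ι,
      (∀ i, π i ⊆ O) ∧
      (∀ i j : Fin n, i ≠ j → Disjoint (π i) (π j)) ∧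
      (Finset.univ.biUnion π = O) ∧
      (∀ i j : Fin n,
        (∑ o ∈ π j, u i o ≤ ∑ o ∈ π i, u i o) ∨
        (∃ o ∈ π i ∪ π j,
          ∑ p ∈ (π j).erase o, u i p ≤ ∑ p ∈ (π i).erase o, u i p)) := by
  classical
  set Sneg : Finset ι := O.filter (fun o => ∀ a, u a o ≤ 0) with hSneg
  set Spos : Finset ι := O \ Sneg with hSpos
  have hnegsub : Sneg ⊆ O := Finset.filter_subset _ _
  have hpossub : Spos ⊆ O := Finset.sdiff_subset
  have hdisjNP : Disjoint Sneg Spos := Finset.disjoint_sdiff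
  have hch : ∀ (i : Fin n) x, x ∈ Sneg → u i x ≤ 0 :=
    fun i x hx => (Finset.mem_filter.1 hx).2 i
  have hpos : ∀ x ∈ Spos, ∃ a, 0 < u a x := by
    intro x hx
    have := Finset.mem_sdiff.1 hx
    have hnot : ¬ (∀ a, u a x ≤ 0) := fun hall =>
      this.2 (Finset.mem_filter.2 ⟨this.1, hall⟩)
    push_neg at hnot
    obtain ⟨a, ha⟩ := hnot
    exact ⟨a, ha⟩
  -- phase-1 machinery
  set f1 : Fin n → Finset ι → Option ι := EF1.pick1 u with hf1
  have Hmem1 : ∀ (a : Fin n) (S : Finset ι) x, f1 a S = some x → x ∈ S :=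
    fun a S x h => EF1.pick1_mem u h
  have Hforce1 : ∀ (a : Fin n) (S : Finset ι), f1 a S = none → S = ∅ :=
    fun a S h => EF1.pick1_none u h
  have HK1 : ∀ (i : Fin n) (S : Finset ι), ∀ x ∈ S, u i x ≤ (f1 i S).elim 0 (u i) :=
    fun i => EF1.pick1_HK u i
  set m := Sneg.card with hm
  set q := (m + n - 1) / n with hqdef
  set d := q * n - m with hddef
  set rounds1 : List (List (Fin n)) :=
    if m = 0 then []
    else ((List.finRange n).drop d) :: List.replicate (q - 1) (List.finRange n) with hrounds1
  set T1 := rounds1.flatten with hT1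
  set π1 := (EF1.run f1 T1 Sneg).1 with hπ1
  -- arithmetic facts
  have harith : m ≠ 0 → d < n ∧ (n - d) + (q - 1) * n = m := by
    intro hm0
    obtain ⟨Q, hQ⟩ : ∃ Q, Q = q * n := ⟨_, rfl⟩
    have h1 : Q = n * ((m + n - 1) / n) := by rw [hQ, hqdef, mul_comm]
    have hdiv := Nat.div_add_mod (m + n - 1) n
    rw [← h1] at hdiv
    have hmod : (m + n - 1) % n < n := Nat.mod_lt _ hn
    have hsub : (q - 1) * n = Q - n := by rw [Nat.sub_mul, one_mul, hQ]
    have hdd : d = Q - m := by rw [hddef, hQ]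
    have hq1 : 1 ≤ q := by
      rw [hqdef]
      rw [Nat.one_le_div_iff hn]
      omega
    have hnQ : n ≤ Q := by
      rw [hQ]
      calc n = 1 * n := (one_mul n).symm
        _ ≤ q * n := Nat.mul_le_mul_right n hq1
    rw [hsub, hdd]
    omega
  have hT1len : T1.length = m := by
    by_cases hm0 : m = 0
    · simp [hT1, hrounds1, if_pos hm0, hm0]
    · obtain ⟨hdn, hlen⟩ := harith hm0
      rw [hT1, hrounds1, if_neg hm0]
      simp only [List.flatten_cons, List.length_append, List.length_drop,
        List.length_finRange, List.length_flatten, List.map_replicate,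
        List.sum_replicate, smul_eq_mul]
      omega
  have hrem1 : (EF1.run f1 T1 Sneg).2 = ∅ := by
    have := EF1.run_card Hmem1 Hforce1 T1 Sneg (le_of_eq hT1len)
    rw [hT1len] at this
    have hc0 : (EF1.run f1 T1 Sneg).2.card = 0 := by omega
    exact Finset.card_eq_zero.1 hc0
  have hπ1sub : ∀ b, π1 b ⊆ Sneg := fun b => EF1.bundle_subset Hmem1 T1 Sneg b
  -- phase-2 machinery
  set f2 : Fin n → Finset ι → Option ι := EF1.pick2 u with hf2
  have Hmem2 : ∀ (a : Fin n) (S : Finset ι) x, f2 a S = some x → x ∈ S :=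
    fun a S x h => (EF1.pick2_mem u h).1
  have HK2 : ∀ (i : Fin n) (S : Finset ι), ∀ x ∈ S, u i x ≤ (f2 i S).elim 0 (u i) :=
    fun i => EF1.pick2_HK u i
  have HD2 : ∀ (i : Fin n) (S : Finset ι), 0 ≤ (f2 i S).elim 0 (u i) :=
    fun i => EF1.pick2_HD u i
  set RV := (List.finRange n).reverse with hRV
  set rounds2 : List (List (Fin n)) := List.replicate Spos.card RV with hrounds2
  set T2 := rounds2.flatten with hT2
  set π2 := (EF1.run f2 T2 Spos).1 with hπ2
  have hrem2 : (EF1.run f2 T2 Spos).2 = ∅ :=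
    EF1.replicate_empty u RV (fun a => by simp [hRV, List.mem_reverse]) Spos.card Spos
      hpos le_rfl
  have hπ2sub : ∀ b, π2 b ⊆ Spos := fun b => EF1.bundle_subset Hmem2 T2 Spos b
  have hπ12disj : ∀ a b : Fin n, Disjoint (π1 a) (π2 b) := fun a b =>
    Finset.disjoint_of_subset_left (hπ1sub a)
      (Finset.disjoint_of_subset_right (hπ2sub b) hdisjNP)
  have hπdisj : ∀ a b : Fin n, a ≠ b → Disjoint (π1 a ∪ π2 a) (π1 b ∪ π2 b) := by
    intro a b hab
    refine Finset.disjoint_union_left.2 ⟨?_, ?_⟩ <;> refine Finset.disjoint_union_right.2 ⟨?_, ?_⟩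
    · exact EF1.bundle_disj Hmem1 T1 Sneg a b hab
    · exact hπ12disj a b
    · exact (hπ12disj b a).symm
    · exact EF1.bundle_disj Hmem2 T2 Spos a b hab
  -- the allocation
  refine ⟨fun a => π1 a ∪ π2 a, ?_, ?_, ?_, ?_⟩
  · exact fun a => Finset.union_subset ((hπ1sub a).trans hnegsub) ((hπ2sub a).trans hpossub)
  · exact hπdisj
  · apply Finset.Subset.antisymm
    · intro x hx
      obtain ⟨a, -, ha⟩ := Finset.mem_biUnion.1 hx
      rcases Finset.mem_union.1 ha with h | h
      · exact hnegsub (hπ1sub a h)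
      · exact hpossub (hπ2sub a h)
    · intro x hx
      by_cases hxneg : x ∈ Sneg
      · rcases EF1.cover Hmem1 T1 Sneg x hxneg with hr | ⟨b, hb⟩
        · rw [hrem1] at hr; exact absurd hr (Finset.notMem_empty x)
        · exact Finset.mem_biUnion.2 ⟨b, Finset.mem_univ b,
            Finset.mem_union_left _ hb⟩
      · have hxpos : x ∈ Spos := Finset.mem_sdiff.2 ⟨hx, hxneg⟩
        rcases EF1.cover Hmem2 T2 Spos x hxpos with hr | ⟨b, hb⟩
        · rw [hrem2] at hr; exact absurd hr (Finset.notMem_empty x)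
        · exact Finset.mem_biUnion.2 ⟨b, Finset.mem_univ b,
            Finset.mem_union_right _ hb⟩
  -- EF1
  · intro i j
    by_cases hij : i = j
    · subst hij; exact Or.inl le_rfl
    have hsumsplit : ∀ b : Fin n, ∑ x ∈ π1 b ∪ π2 b, u i x =
        ∑ x ∈ π1 b, u i x + ∑ x ∈ π2 b, u i x :=
      fun b => Finset.sum_union (hπ12disj b b)
    have hrounds1_mem : m ≠ 0 → ∀ L ∈ rounds1,
        L = (List.finRange n).drop d ∨ L = List.finRange n := by
      intro hm0 L hL
      rw [hrounds1, if_neg hm0] at hL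
      rcases List.mem_cons.1 hL with h | h
      · exact Or.inl h
      · exact Or.inr (List.eq_of_mem_replicate h)
    have hfinsplit : ∀ a b : Fin n, a < b → ∃ A B C,
        List.finRange n = A ++ a :: (B ++ b :: C) ∧
        a ∉ A ∧ a ∉ B ∧ a ∉ C ∧ b ∉ A ∧ b ∉ B ∧ b ∉ C := by
      intro a b hab
      have := EF1.split_pair (d := 0) (Nat.zero_le _) hab
      rwa [List.drop_zero] at this
    rcases lt_trichotomy i j with hlt | heq | hgt
    rotate_left
    · exact absurd heq hij
    -- ==================== CASE j < i ====================
    · -- phase 2: i picks first in every reversed round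
      have hP2 : ∑ x ∈ π2 j, u i x ≤ ∑ x ∈ π2 i, u i x := by
        have hsh : ∀ L ∈ rounds2, ∃ A B C, L = A ++ i :: (B ++ j :: C) ∧
            i ∉ A ∧ i ∉ B ∧ i ∉ C ∧ j ∉ A ∧ j ∉ B ∧ j ∉ C := by
          intro L hL
          have hLRV : L = RV := List.eq_of_mem_replicate (hrounds2 ▸ hL)
          obtain ⟨A, B, C, heq, h1, h2, h3, h4, h5, h6⟩ := hfinsplit j i hgt
          refine ⟨C.reverse, B.reverse, A.reverse, ?_, ?_, ?_, ?_, ?_, ?_, ?_⟩ <;>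
            simp only [hLRV, hRV, List.mem_reverse]
          · exact EF1.rev_split heq
          all_goals assumption
        have := EF1.goods_aligned (f := f2) Hmem2 hij (HK2 i) (HD2 i) rounds2 Spos hsh
        rwa [← hT2] at this
      -- phase 1: j picks before i; i may need to drop one of its own chores
      have hP1 : (∑ x ∈ π1 j, u i x ≤ ∑ x ∈ π1 i, u i x) ∨
          (∃ z ∈ π1 i, ∑ x ∈ π1 j, u i x + u i z ≤ ∑ x ∈ π1 i, u i x) := by
        by_cases hm0 : m = 0
        · left
          have hT1nil : T1 = [] := by rw [hT1, hrounds1, if_pos hm0]; rfl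
          rw [hπ1, hT1nil, EF1.run_nil]
        · have hshrest : ∀ L ∈ List.replicate (q - 1) (List.finRange n),
              ∃ A B C, L = A ++ j :: (B ++ i :: C) ∧
              i ∉ A ∧ i ∉ B ∧ i ∉ C ∧ j ∉ A ∧ j ∉ B ∧ j ∉ C := by
            intro L hL
            rw [List.eq_of_mem_replicate hL]
            obtain ⟨A, B, C, heq, h1, h2, h3, h4, h5, h6⟩ := hfinsplit j i hgt
            exact ⟨A, B, C, heq, h4, h5, h6, h1, h2, h3⟩
          by_cases hdj : d ≤ j.val
          · -- both i and j appear in the first (partial) round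
            have hsh : ∀ L ∈ rounds1, ∃ A B C, L = A ++ j :: (B ++ i :: C) ∧
                i ∉ A ∧ i ∉ B ∧ i ∉ C ∧ j ∉ A ∧ j ∉ B ∧ j ∉ C := by
              intro L hL
              rcases hrounds1_mem hm0 L hL with h | h
              · subst h
                obtain ⟨A, B, C, heq, h1, h2, h3, h4, h5, h6⟩ := EF1.split_pair hdj hgt
                exact ⟨A, B, C, heq, h4, h5, h6, h1, h2, h3⟩
              · subst h
                obtain ⟨A, B, C, heq, h1, h2, h3, h4, h5, h6⟩ := hfinsplit j i hgt
                exact ⟨A, B, C, heq, h4, h5, h6, h1, h2, h3⟩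
            obtain ⟨r, hle, hr⟩ := EF1.chores_shifted (f := f1) Hmem1 Hforce1 hij (HK1 i)
              rounds1 Sneg 0 (hch i) (hch i) hsh
            rw [← hT1, ← hπ1] at hle hr
            rw [add_zero] at hle
            rcases hr with ⟨z, hz, rfl⟩ | ⟨hemp, rfl⟩
            · exact Or.inr ⟨z, hz, hle⟩
            · exact Or.inl (by linarith)
          · -- j does not appear in the first round
            have hT1eq : T1 = ((List.finRange n).drop d) ++
                (List.replicate (q - 1) (List.finRange n)).flatten := by
              rw [hT1, hrounds1, if_neg hm0, List.flatten_cons]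
            by_cases hdi : d ≤ i.val
            · -- i appears alone in the first round : peel it off
              have hiR : i ∈ (List.finRange n).drop d := (EF1.mem_drop_finRange i).2 hdi
              have hjR : j ∉ (List.finRange n).drop d := fun h =>
                hdj ((EF1.mem_drop_finRange j).1 h)
              obtain ⟨A, C, hACeq, hiA, hiC, hjA, hjC⟩ :=
                EF1.single_split ((List.drop_sublist _ _).nodup (List.nodup_finRange n)) hiR hjR
              set F := (List.replicate (q - 1) (List.finRange n)).flatten with hF
              have hT1eq2 : T1 = A ++ (i :: (C ++ F)) := by
                rw [hT1eq, hACeq]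
                simp [List.append_assoc]
              set S₁ := (EF1.run f1 A Sneg).2 with hS₁
              have hS₁sub : S₁ ⊆ Sneg := EF1.rem_subset A Sneg
              have hb : ∀ b : Fin n, π1 b = (EF1.run f1 A Sneg).1 b ∪
                  (EF1.run f1 (i :: (C ++ F)) S₁).1 b := by
                intro b
                rw [hπ1, hT1eq2, EF1.run_append]
              have hbA : ∀ b : Fin n, b ∉ A → (EF1.run f1 A Sneg).1 b = ∅ :=
                fun b hb' => EF1.bundle_nonmem A Sneg b hb'
              cases hfi : f1 i S₁ with
              | none =>
                left
                have hS₁e : S₁ = ∅ := Hforce1 i S₁ hfi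
                have he : ∀ b, (EF1.run f1 (i :: (C ++ F)) S₁).1 b = ∅ := by
                  intro b
                  have h1 := EF1.bundle_subset Hmem1 (i :: (C ++ F)) S₁ b
                  have h2 : S₁ ⊆ (∅ : Finset ι) := le_of_eq hS₁e
                  exact Finset.subset_empty.1 (h1.trans h2)
                rw [hb i, hb j, hbA i hiA, hbA j hjA, he i, he j]
              | some z =>
                have hzS₁ : z ∈ S₁ := Hmem1 i S₁ z hfi
                have hrun : EF1.run f1 (i :: (C ++ F)) S₁ =
                    (fun b => if b = i then insert z ((EF1.run f1 (C ++ F) (S₁.erase z)).1 b)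
                      else (EF1.run f1 (C ++ F) (S₁.erase z)).1 b,
                     (EF1.run f1 (C ++ F) (S₁.erase z)).2) := EF1.run_cons_some hfi _
                set R₀ := (EF1.run f1 C (S₁.erase z)).2 with hR₀
                have hR₀sub : R₀ ⊆ S₁.erase z := EF1.rem_subset _ _
                have hcf : ∀ b : Fin n, (EF1.run f1 (C ++ F) (S₁.erase z)).1 b =
                    (EF1.run f1 C (S₁.erase z)).1 b ∪ (EF1.run f1 F R₀).1 b := by
                  intro b; rw [EF1.run_append]
                have hCi : (EF1.run f1 C (S₁.erase z)).1 i = ∅ :=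
                  EF1.bundle_nonmem _ _ _ hiC
                have hCj : (EF1.run f1 C (S₁.erase z)).1 j = ∅ :=
                  EF1.bundle_nonmem _ _ _ hjC
                have hji : ¬ j = i := fun h => hij h.symm
                have hπ1i : π1 i = insert z ((EF1.run f1 F R₀).1 i) := by
                  rw [hb i, hbA i hiA, hrun]
                  simp [hcf i, hCi]
                have hπ1j : π1 j = (EF1.run f1 F R₀).1 j := by
                  rw [hb j, hbA j hjA, hrun]
                  simp [hji, hcf j, hCj]
                have Hm' : ∀ x ∈ R₀, u i x ≤ u i z := by
                  intro x hx
                  have := HK1 i S₁ x (Finset.mem_of_mem_erase (hR₀sub hx))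
                  rwa [hfi, Option.elim_some] at this
                have Hch' : ∀ x ∈ R₀, u i x ≤ 0 := fun x hx =>
                  hch i x (hS₁sub (Finset.mem_of_mem_erase (hR₀sub hx)))
                obtain ⟨r, hle, hr⟩ := EF1.chores_shifted (f := f1) Hmem1 Hforce1 hij (HK1 i)
                  (List.replicate (q - 1) (List.finRange n)) R₀ (u i z) Hm' Hch' hshrest
                rw [← hF] at hle hr
                have hznot : z ∉ (EF1.run f1 F R₀).1 i := fun hmem =>
                  Finset.notMem_erase z S₁ (hR₀sub (EF1.bundle_subset Hmem1 F R₀ i hmem))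
                have hsome : ∑ x ∈ π1 i, u i x = u i z + ∑ x ∈ (EF1.run f1 F R₀).1 i, u i x := by
                  rw [hπ1i, Finset.sum_insert hznot]
                rcases hr with ⟨z', hz', rfl⟩ | ⟨hemp, rfl⟩
                · refine Or.inr ⟨z', by rw [hπ1i]; exact Finset.mem_insert_of_mem hz', ?_⟩
                  rw [hπ1j, hsome]; linarith
                · refine Or.inr ⟨z, by rw [hπ1i]; exact Finset.mem_insert_self _ _, ?_⟩
                  rw [hπ1j, hsome]; linarith
            · -- neither i nor j appears in the first round
              have hiR : i ∉ (List.finRange n).drop d := fun h =>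
                hdi ((EF1.mem_drop_finRange i).1 h)
              have hjR : j ∉ (List.finRange n).drop d := fun h =>
                hdj ((EF1.mem_drop_finRange j).1 h)
              set F := (List.replicate (q - 1) (List.finRange n)).flatten with hF
              set R₀ := (EF1.run f1 ((List.finRange n).drop d) Sneg).2 with hR₀
              have hb : ∀ b : Fin n, π1 b =
                  (EF1.run f1 ((List.finRange n).drop d) Sneg).1 b ∪ (EF1.run f1 F R₀).1 b := by
                intro b
                rw [hπ1, hT1eq, EF1.run_append]
              have hπ1i : π1 i = (EF1.run f1 F R₀).1 i := by
                rw [hb i, EF1.bundle_nonmem _ _ _ hiR, Finset.empty_union]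
              have hπ1j : π1 j = (EF1.run f1 F R₀).1 j := by
                rw [hb j, EF1.bundle_nonmem _ _ _ hjR, Finset.empty_union]
              have hR₀sub : R₀ ⊆ Sneg := EF1.rem_subset _ _
              obtain ⟨r, hle, hr⟩ := EF1.chores_shifted (f := f1) Hmem1 Hforce1 hij (HK1 i)
                (List.replicate (q - 1) (List.finRange n)) R₀ 0
                (fun x hx => hch i x (hR₀sub hx)) (fun x hx => hch i x (hR₀sub hx)) hshrest
              rw [← hF] at hle hr
              rw [← hπ1i] at hle hr
              rw [← hπ1j, add_zero] at hle
              rcases hr with ⟨z, hz, rfl⟩ | ⟨hemp, rfl⟩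
              · exact Or.inr ⟨z, hz, hle⟩
              · exact Or.inl (by linarith)
      -- combine for j < i
      rcases hP1 with hP1 | ⟨z, hz, hP1⟩
      · exact Or.inl (by rw [hsumsplit i, hsumsplit j]; linarith)
      · have hzπi : z ∈ π1 i ∪ π2 i := Finset.mem_union_left _ hz
        have hznπj : z ∉ π1 j ∪ π2 j := fun hmem =>
          (Finset.disjoint_left.1 (hπdisj i j hij)) hzπi hmem
        refine Or.inr ⟨z, Finset.mem_union_left _ hzπi, ?_⟩
        rw [Finset.erase_eq_of_notMem hznπj, Finset.sum_erase_eq_sub hzπi,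
          hsumsplit i, hsumsplit j]
        linarith
    -- ==================== CASE i < j ====================
    · -- phase 1: i picks before j, no envy
      have hP1 : ∑ x ∈ π1 j, u i x ≤ ∑ x ∈ π1 i, u i x := by
        by_cases hm0 : m = 0
        · have hT1nil : T1 = [] := by rw [hT1, hrounds1, if_pos hm0]; rfl
          rw [hπ1, hT1nil, EF1.run_nil]
        · have hsh : ∀ L ∈ rounds1,
              (∃ A B C, L = A ++ i :: (B ++ j :: C) ∧
                i ∉ A ∧ i ∉ B ∧ i ∉ C ∧ j ∉ A ∧ j ∉ B ∧ j ∉ C) ∨ i ∉ L := by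
            intro L hL
            rcases hrounds1_mem hm0 L hL with h | h
            · subst h
              by_cases hdi : d ≤ i.val
              · exact Or.inl (EF1.split_pair hdi hlt)
              · exact Or.inr (fun hmem => hdi ((EF1.mem_drop_finRange i).1 hmem))
            · subst h
              exact Or.inl (hfinsplit i j hlt)
          have := EF1.chores_aligned (f := f1) Hmem1 Hforce1 hij (HK1 i) rounds1 Sneg
            (hch i) (by rw [← hT1, hT1len]) hsh
          rwa [← hT1, ← hπ1] at this
      -- phase 2: j picks before i; i may envy up to j's first pick
      have hP2 : (∑ x ∈ π2 j, u i x ≤ ∑ x ∈ π2 i, u i x) ∨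
          (∃ y ∈ π2 j, ∑ x ∈ π2 j, u i x ≤ ∑ x ∈ π2 i, u i x + u i y) := by
        cases hc : Spos.card with
        | zero =>
          left
          have hSpe : Spos = ∅ := Finset.card_eq_zero.1 hc
          have he : ∀ b, π2 b = ∅ := by
            intro b
            have := hπ2sub b
            rw [hSpe] at this
            exact Finset.subset_empty.1 this
          rw [he i, he j]
        | succ k =>
          obtain ⟨A, B, C, heq, h1, h2, h3, h4, h5, h6⟩ := hfinsplit i j hlt
          have hRVeq : RV = C.reverse ++ j :: (B.reverse ++ i :: A.reverse) :=
            EF1.rev_split heq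
          have hnotins : i ∉ C.reverse ∧ i ∉ B.reverse ∧ i ∉ A.reverse ∧
              j ∉ C.reverse ∧ j ∉ B.reverse ∧ j ∉ A.reverse := by
            simp only [List.mem_reverse]
            exact ⟨h3, h2, h1, h6, h5, h4⟩
          obtain ⟨hiC, hiB, hiA, hjC, hjB, hjA⟩ := hnotins
          have hT2eq : T2 = RV ++ (List.replicate k RV).flatten := by
            rw [hT2, hrounds2, hc, List.replicate_succ, List.flatten_cons]
          obtain ⟨S₁, S₂, hS₁, hS₂, hS₂sub, hbj, hbi, hrem⟩ :=
            EF1.run_round (f := f2) Hmem2 (Ne.symm hij) hjC hjB hjA hiC hiB hiA Spos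
          rw [← hRVeq] at hbj hbi hrem
          set R₀ := (EF1.run f2 RV Spos).2 with hR₀
          have hR₀sub : R₀ ⊆ (f2 i S₂).elim S₂ (fun x => S₂.erase x) := by
            rw [hrem]
            exact EF1.rem_subset _ _
          have hR₀S₂ : R₀ ⊆ S₂ := by
            refine hR₀sub.trans ?_
            cases hfi : f2 i S₂ <;> simp [hfi, Finset.erase_subset]
          have hb : ∀ b : Fin n, π2 b =
              (EF1.run f2 RV Spos).1 b ∪ (EF1.run f2 (List.replicate k RV).flatten R₀).1 b := by
            intro b
            rw [hπ2, hT2eq, EF1.run_append]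
          have hdisjb : ∀ b : Fin n, Disjoint ((EF1.run f2 RV Spos).1 b)
              ((EF1.run f2 (List.replicate k RV).flatten R₀).1 b) := by
            intro b
            exact Finset.disjoint_of_subset_right (EF1.bundle_subset Hmem2 _ _ b)
              (EF1.bundle_disj_rem Hmem2 RV Spos b)
          have hshrep : ∀ L ∈ List.replicate k RV,
              ∃ A' B' C', L = A' ++ j :: (B' ++ i :: C') ∧
              i ∉ A' ∧ i ∉ B' ∧ i ∉ C' ∧ j ∉ A' ∧ j ∉ B' ∧ j ∉ C' := by
            intro L hL
            rw [List.eq_of_mem_replicate hL, hRVeq]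
            exact ⟨C.reverse, B.reverse, A.reverse, rfl, hiC, hiB, hiA, hjC, hjB, hjA⟩
          have Hm' : ∀ x ∈ R₀, u i x ≤ (f2 i S₂).elim 0 (u i) := by
            intro x hx
            exact HK2 i S₂ x (hR₀S₂ hx)
          have hrest := EF1.goods_shifted (f := f2) Hmem2 hij (HK2 i) (HD2 i)
            (List.replicate k RV) R₀ ((f2 i S₂).elim 0 (u i)) Hm' (HD2 i S₂) hshrep
          have hvi : ∑ x ∈ (EF1.run f2 RV Spos).1 i, u i x = (f2 i S₂).elim 0 (u i) := by
            rw [hbi]; cases hfi : f2 i S₂ <;> simp [hfi]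
          have hsumi : ∑ x ∈ π2 i, u i x =
              (f2 i S₂).elim 0 (u i) +
                ∑ x ∈ (EF1.run f2 (List.replicate k RV).flatten R₀).1 i, u i x := by
            rw [hb i, Finset.sum_union (hdisjb i), hvi]
          cases hfj : f2 j S₁ with
          | none =>
            left
            have hsumj : ∑ x ∈ π2 j, u i x =
                ∑ x ∈ (EF1.run f2 (List.replicate k RV).flatten R₀).1 j, u i x := by
              rw [hb j, Finset.sum_union (hdisjb j), hbj, hfj]
              simp
            rw [hsumj, hsumi]
            linarith
          | some y =>
            right
            have hyb : y ∈ (EF1.run f2 RV Spos).1 j := by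
              rw [hbj, hfj]; simp
            refine ⟨y, by rw [hb j]; exact Finset.mem_union_left _ hyb, ?_⟩
            have hsumj : ∑ x ∈ π2 j, u i x =
                u i y + ∑ x ∈ (EF1.run f2 (List.replicate k RV).flatten R₀).1 j, u i x := by
              rw [hb j, Finset.sum_union (hdisjb j), hbj, hfj]
              simp [Finset.sum_singleton]
            rw [hsumj, hsumi]
            linarith
      -- combine for i < j
      rcases hP2 with hP2 | ⟨y, hy, hP2⟩
      · exact Or.inl (by rw [hsumsplit i, hsumsplit j]; linarith)
      · have hyπj : y ∈ π1 j ∪ π2 j := Finset.mem_union_right _ hy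
        have hynπi : y ∉ π1 i ∪ π2 i := fun hmem =>
          (Finset.disjoint_left.1 (hπdisj i j hij)) hmem hyπj
        refine Or.inr ⟨y, Finset.mem_union_right _ hyπj, ?_⟩
        rw [Finset.erase_eq_of_notMem hynπi, Finset.sum_erase_eq_sub hyπj,
          hsumsplit i, hsumsplit j]
        linarith
end

section
/- Let N = {1,…,n} be a set of agents, O a finite set of indivisible items, and for each agent i a doubly monotonic utility function u_i : 2^O → ℝ: there is a partition of O into disjoint sets G_i and C_i such that for every item o ∈ O and every bundle X ⊆ O∖{o}, u_i(X ∪ {o}) ≥ u_i(X) if o ∈ G_i and u_i(X ∪ {o}) ≤ u_i(X) if o ∈ C_i. Then there exists a complete allocation π that is EF1: for all agents i, j, either u_i(π(i)) ≥ u_i(π(j)) or there is an item o ∈ π(i) ∪ π(j) with u_i(π(i)∖{o}) ≥ u_i(π(j)∖{o}). -/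
open Finset

section Helpers

variable {ι : Type*} [DecidableEq ι]

/-- max of `v` over subsets of `Y` -/
noncomputable def ustar (v : Finset ι → ℝ) (Y : Finset ι) : ℝ :=
  Y.powerset.sup' ⟨∅, Finset.empty_mem_powerset Y⟩ v

lemma le_ustar {v : Finset ι → ℝ} {X Y : Finset ι} (h : X ⊆ Y) : v X ≤ ustar v Y :=
  Finset.le_sup' v (Finset.mem_powerset.2 h)

lemma ustar_le {v : Finset ι → ℝ} {Y : Finset ι} {c : ℝ} (h : ∀ X ⊆ Y, v X ≤ c) :
    ustar v Y ≤ c :=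
  Finset.sup'_le _ _ fun X hX => h X (Finset.mem_powerset.1 hX)

lemma ustar_mono {v : Finset ι → ℝ} {Y Z : Finset ι} (h : Y ⊆ Z) : ustar v Y ≤ ustar v Z :=
  ustar_le fun X hX => le_ustar (hX.trans h)

lemma exists_ustar (v : Finset ι → ℝ) (Y : Finset ι) : ∃ X, X ⊆ Y ∧ v X = ustar v Y := by
  obtain ⟨X, hX, hEq⟩ := Finset.exists_mem_eq_sup' ⟨∅, Finset.empty_mem_powerset Y⟩ v
  exact ⟨X, Finset.mem_powerset.1 hX, hEq.symm⟩

variable {O Gv Cv : Finset ι} {v : Finset ι → ℝ}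

lemma up_of_goods (hvG : ∀ o ∈ Gv, ∀ X ⊆ O.erase o, v X ≤ v (insert o X)) :
    ∀ (k : ℕ) {A B : Finset ι}, (B \ A).card = k → A ⊆ B → B ⊆ O → B \ A ⊆ Gv →
      v A ≤ v B := by
  intro k
  induction k with
  | zero =>
    intro A B hcard hAB hBO _
    have h0 : B \ A = ∅ := Finset.card_eq_zero.1 hcard
    have hBA : B ⊆ A := Finset.sdiff_eq_empty_iff_subset.1 h0
    rw [Finset.Subset.antisymm hAB hBA]
  | succ m ih =>
    intro A B hcard hAB hBO hG
    have hne : (B \ A).Nonempty := Finset.card_pos.1 (by omega)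
    obtain ⟨o, ho⟩ := hne
    have hoB : o ∈ B := (Finset.mem_sdiff.1 ho).1
    have hoA : o ∉ A := (Finset.mem_sdiff.1 ho).2
    have h1 : v A ≤ v (insert o A) := by
      refine hvG o (hG ho) A fun x hx => Finset.mem_erase.2 ⟨?_, hBO (hAB hx)⟩
      rintro rfl; exact hoA hx
    refine h1.trans (ih ?_ (Finset.insert_subset hoB hAB) hBO ?_)
    · have hset : B \ insert o A = (B \ A).erase o := by
        ext x
        simp only [Finset.mem_sdiff, Finset.mem_insert, Finset.mem_erase]
        tauto
      rw [hset, Finset.card_erase_of_mem ho, hcard]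
      omega
    · exact fun x hx => hG (Finset.sdiff_subset_sdiff (le_refl B) (Finset.subset_insert o A) hx)

lemma down_of_chores (hvC : ∀ o ∈ Cv, ∀ X ⊆ O.erase o, v (insert o X) ≤ v X) :
    ∀ (k : ℕ) {A B : Finset ι}, (B \ A).card = k → A ⊆ B → B ⊆ O → B \ A ⊆ Cv →
      v B ≤ v A := by
  intro k
  induction k with
  | zero =>
    intro A B hcard hAB hBO _
    have h0 : B \ A = ∅ := Finset.card_eq_zero.1 hcard
    have hBA : B ⊆ A := Finset.sdiff_eq_empty_iff_subset.1 h0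
    rw [Finset.Subset.antisymm hAB hBA]
  | succ m ih =>
    intro A B hcard hAB hBO hC
    have hne : (B \ A).Nonempty := Finset.card_pos.1 (by omega)
    obtain ⟨o, ho⟩ := hne
    have hoB : o ∈ B := (Finset.mem_sdiff.1 ho).1
    have hoA : o ∉ A := (Finset.mem_sdiff.1 ho).2
    have h1 : v (insert o A) ≤ v A := by
      refine hvC o (hC ho) A fun x hx => Finset.mem_erase.2 ⟨?_, hBO (hAB hx)⟩
      rintro rfl; exact hoA hx
    refine le_trans (ih ?_ (Finset.insert_subset hoB hAB) hBO ?_) h1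
    · have hset : B \ insert o A = (B \ A).erase o := by
        ext x
        simp only [Finset.mem_sdiff, Finset.mem_insert, Finset.mem_erase]
        tauto
      rw [hset, Finset.card_erase_of_mem ho, hcard]
      omega
    · exact fun x hx => hC (Finset.sdiff_subset_sdiff (le_refl B) (Finset.subset_insert o A) hx)

lemma down_of_chores' (hvC : ∀ o ∈ Cv, ∀ X ⊆ O.erase o, v (insert o X) ≤ v X)
    {A B : Finset ι} (hAB : A ⊆ B) (hBO : B ⊆ O) (hd : B \ A ⊆ Cv) : v B ≤ v A :=
  down_of_chores hvC _ rfl hAB hBO hd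

lemma up_of_goods' (hvG : ∀ o ∈ Gv, ∀ X ⊆ O.erase o, v X ≤ v (insert o X))
    {A B : Finset ι} (hAB : A ⊆ B) (hBO : B ⊆ O) (hd : B \ A ⊆ Gv) : v A ≤ v B :=
  up_of_goods hvG _ rfl hAB hBO hd

lemma ustar_eq_self (hvG : ∀ o ∈ Gv, ∀ X ⊆ O.erase o, v X ≤ v (insert o X))
    {P : Finset ι} (hPG : P ⊆ Gv) (hPO : P ⊆ O) : ustar v P = v P := by
  refine le_antisymm (ustar_le fun X hX => ?_) (le_ustar (Finset.Subset.refl P))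
  exact up_of_goods' hvG hX hPO fun x hx => hPG (Finset.mem_sdiff.1 hx).1

lemma ustar_insert_chore (hvC : ∀ o ∈ Cv, ∀ X ⊆ O.erase o, v (insert o X) ≤ v X)
    {Y : Finset ι} (hY : Y ⊆ O) {o : ι} (ho : o ∈ Cv) (hoO : o ∈ O) :
    ustar v (insert o Y) = ustar v Y := by
  refine le_antisymm (ustar_le fun X hX => ?_) (ustar_mono (Finset.subset_insert o Y))
  have h1 : v X ≤ v (X.erase o) := by
    refine down_of_chores' hvC (Finset.erase_subset o X) (hX.trans (Finset.insert_subset hoO hY)) ?_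
    intro x hx
    have hx' := Finset.mem_sdiff.1 hx
    have hxo : x = o := by
      by_contra hne
      exact hx'.2 (Finset.mem_erase.2 ⟨hne, hx'.1⟩)
    rw [hxo]; exact ho
  refine h1.trans (le_ustar ?_)
  intro x hx
  have hx' := Finset.mem_erase.1 hx
  rcases Finset.mem_insert.1 (hX hx'.2) with h | h
  · exact absurd h hx'.1
  · exact h

lemma exists_best (hvC : ∀ o ∈ Cv, ∀ X ⊆ O.erase o, v (insert o X) ≤ v X)
    (hcover : O ⊆ Gv ∪ Cv) {Y : Finset ι} (hY : Y ⊆ O) :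
    ∃ X, X ⊆ Y ∧ X ⊆ Gv ∧ v X = ustar v Y := by
  obtain ⟨X₀, hX₀Y, hX₀⟩ := exists_ustar v Y
  refine ⟨X₀ \ Cv, (Finset.sdiff_subset).trans hX₀Y, ?_, ?_⟩
  · intro x hx
    have hx' := Finset.mem_sdiff.1 hx
    rcases Finset.mem_union.1 (hcover (hY (hX₀Y hx'.1))) with h | h
    · exact h
    · exact absurd h hx'.2
  · have h1 : v X₀ ≤ v (X₀ \ Cv) := by
      refine down_of_chores' hvC Finset.sdiff_subset (hX₀Y.trans hY) ?_
      intro x hx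
      have hx' := Finset.mem_sdiff.1 hx
      by_contra hxc
      exact hx'.2 (Finset.mem_sdiff.2 ⟨hx'.1, hxc⟩)
    have h2 : v (X₀ \ Cv) ≤ ustar v Y := le_ustar ((Finset.sdiff_subset).trans hX₀Y)
    refine le_antisymm h2 ?_
    rw [← hX₀]
    exact h1

end Helpers

section Cycle

lemma cycle_lemma {α : Type*} [Fintype α] [DecidableEq α] (f : α → α) (H : Finset α)
    (hH : ∀ i ∈ H, f i ∈ H) {p : α} (hp : p ∈ H) :
    ∃ (Cy : Finset α) (g : α → α), Cy.Nonempty ∧ Cy ⊆ H ∧ (∀ j ∈ Cy, f j ∈ Cy) ∧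
      (∀ j ∈ Cy, g j ∈ Cy) ∧ (∀ j ∈ Cy, f (g j) = j) ∧ (∀ j ∈ Cy, g (f j) = j) := by
  have hit : ∀ t : ℕ, f^[t] p ∈ H := by
    intro t
    induction t with
    | zero => exact hp
    | succ s ih => rw [Function.iterate_succ_apply']; exact hH _ ih
  have hex : ∃ a b : ℕ, a < b ∧ f^[a] p = f^[b] p := by
    obtain ⟨x, y, hxy, hfe⟩ := Finite.exists_ne_map_eq_of_infinite (fun t : ℕ => f^[t] p)
    rcases lt_or_gt_of_ne hxy with h | h
    · exact ⟨x, y, h, hfe⟩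
    · exact ⟨y, x, h, hfe.symm⟩
  obtain ⟨a, b, hab, heq⟩ := hex
  set q := f^[a] p with hq
  set d := b - a with hd
  have hd0 : 0 < d := by omega
  have hqq : f^[d] q = q := by
    rw [hq, ← Function.iterate_add_apply]
    have hba : d + a = b := by omega
    rw [hba, ← heq]
  have hmul : ∀ m : ℕ, f^[m * d] q = q := by
    intro m
    induction m with
    | zero => simp
    | succ s ih =>
      have h1 : (s + 1) * d = s * d + d := by ring
      rw [h1, Function.iterate_add_apply, hqq, ih]
  have hmod : ∀ m : ℕ, f^[m] q = f^[m % d] q := by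
    intro m
    conv_lhs => rw [← Nat.mod_add_div m d]
    rw [Function.iterate_add_apply]
    congr 1
    rw [Nat.mul_comm]
    exact hmul _
  have hqH : ∀ t : ℕ, f^[t] q ∈ H := by
    intro t
    rw [hq, ← Function.iterate_add_apply]
    exact hit _
  have hshift : ∀ t : ℕ, f^[t + d] q = f^[t] q := by
    intro t
    rw [Function.iterate_add_apply, hqq]
  refine ⟨(Finset.range d).image (fun t => f^[t] q), f^[d-1], ⟨q, ?_⟩, ?_, ?_, ?_, ?_, ?_⟩
  · exact Finset.mem_image.2 ⟨0, Finset.mem_range.2 hd0, rfl⟩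
  · intro x hx
    obtain ⟨t, _, rfl⟩ := Finset.mem_image.1 hx
    exact hqH t
  · intro j hj
    obtain ⟨t, _, rfl⟩ := Finset.mem_image.1 hj
    have h0 : f (f^[t] q) = f^[t+1] q := (Function.iterate_succ_apply' f t q).symm
    have h1 : f (f^[t] q) = f^[(t+1) % d] q := by rw [h0, hmod]
    rw [h1]
    exact Finset.mem_image.2 ⟨(t+1) % d, Finset.mem_range.2 (Nat.mod_lt _ hd0), rfl⟩
  · intro j hj
    obtain ⟨t, _, rfl⟩ := Finset.mem_image.1 hj
    rw [← Function.iterate_add_apply, hmod]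
    exact Finset.mem_image.2 ⟨(d - 1 + t) % d, Finset.mem_range.2 (Nat.mod_lt _ hd0), rfl⟩
  · intro j hj
    obtain ⟨t, _, rfl⟩ := Finset.mem_image.1 hj
    have h1 : f^[d-1] (f^[t] q) = f^[d - 1 + t] q := (Function.iterate_add_apply f (d-1) t q).symm
    have h2 : f (f^[d-1+t] q) = f^[d-1+t+1] q := (Function.iterate_succ_apply' f (d-1+t) q).symm
    rw [h1, h2]
    have h3 : d - 1 + t + 1 = t + d := by omega
    rw [h3, hshift]
  · intro j hj
    obtain ⟨t, _, rfl⟩ := Finset.mem_image.1 hj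
    have h1 : f (f^[t] q) = f^[t+1] q := (Function.iterate_succ_apply' f t q).symm
    have h2 : f^[d-1] (f^[t+1] q) = f^[d-1+(t+1)] q := (Function.iterate_add_apply f (d-1) (t+1) q).symm
    rw [h1, h2]
    have h3 : d - 1 + (t + 1) = t + d := by omega
    rw [h3, hshift]

end Cycle

section Phase1

variable {n : ℕ} {ι : Type*} [DecidableEq ι]

lemma phase1 (O : Finset ι) (u : Fin n → Finset ι → ℝ) (G C : Fin n → Finset ι)
    (hpart : ∀ i, G i ∪ C i = O)
    (hmono : ∀ (i : Fin n) (o : ι) (X : Finset ι), o ∈ O → X ⊆ O.erase o →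
      (o ∈ G i → u i X ≤ u i (insert o X)) ∧
      (o ∈ C i → u i (insert o X) ≤ u i X)) :
    ∃ π : Fin n → Finset ι,
      (∀ i, π i ⊆ G i) ∧
      (∀ i j : Fin n, i ≠ j → Disjoint (π i) (π j)) ∧
      (∀ k j : Fin n, k ≠ j →
        ustar (u k) (π j) ≤ u k (π k) ∨
        ∃ o ∈ π j, ustar (u k) ((π j).erase o) ≤ u k (π k)) ∧
      Finset.univ.biUnion π = O.filter (fun o => ∃ i, o ∈ G i) := by
  classical
  have hGO : ∀ i, G i ⊆ O := fun i => (hpart i) ▸ Finset.subset_union_left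
  have hCO : ∀ i, C i ⊆ O := fun i => (hpart i) ▸ Finset.subset_union_right
  have hcover : ∀ i, O ⊆ G i ∪ C i := fun i => by rw [hpart i]
  have hvG : ∀ i, ∀ o ∈ G i, ∀ X ⊆ O.erase o, u i X ≤ u i (insert o X) :=
    fun i o ho X hX => (hmono i o X (hGO i ho) hX).1 ho
  have hvC : ∀ i, ∀ o ∈ C i, ∀ X ⊆ O.erase o, u i (insert o X) ≤ u i X :=
    fun i o ho X hX => (hmono i o X (hCO i ho) hX).2 ho
  set S : Finset ι := O.filter (fun o => ∃ i, o ∈ G i) with hS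
  set V : Set (Fin n → Finset ι) := {π |
    (∀ i, π i ⊆ G i) ∧
    (∀ i j : Fin n, i ≠ j → Disjoint (π i) (π j)) ∧
    (∀ k j : Fin n, k ≠ j →
      ustar (u k) (π j) ≤ u k (π k) ∨
      ∃ o ∈ π j, ustar (u k) ((π j).erase o) ≤ u k (π k))} with hV
  have hVfin : V.Finite := by
    refine Set.Finite.subset (Set.Finite.pi (fun i : Fin n => (G i).powerset.finite_toSet)) ?_
    intro π hπ
    intro i _
    exact Finset.mem_coe.2 (Finset.mem_powerset.2 (hπ.1 i))
  have hself : ∀ π ∈ V, ∀ k, ustar (u k) (π k) = u k (π k) := by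
    intro π hπ k
    exact ustar_eq_self (hvG k) (hπ.1 k) ((hπ.1 k).trans (hGO k))
  have hemp : (fun _ : Fin n => (∅ : Finset ι)) ∈ V := by
    refine ⟨fun i => Finset.empty_subset _, fun i j _ => Finset.disjoint_empty_left _, ?_⟩
    intro k j _
    left
    have h0 : ustar (u k) (∅ : Finset ι) = u k ∅ :=
      ustar_eq_self (hvG k) (Finset.empty_subset _) (Finset.empty_subset _)
    rw [h0]
  set VF : Finset (Fin n → Finset ι) := hVfin.toFinset with hVF
  have hVmem : ∀ π, π ∈ VF ↔ π ∈ V := fun π => Set.Finite.mem_toFinset hVfin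
  have hVFne : VF.Nonempty := ⟨_, (hVmem _).2 hemp⟩
  set Φ : (Fin n → Finset ι) → ℝ := fun π => ∑ i, u i (π i) with hΦ
  obtain ⟨π₀, hπ₀, hmax⟩ := VF.exists_max_image Φ hVFne
  set VF2 : Finset (Fin n → Finset ι) := VF.filter (fun π => Φ π = Φ π₀) with hVF2
  obtain ⟨π, hπmem, hmax2⟩ := VF2.exists_max_image (fun π => (Finset.univ.biUnion π).card)
    ⟨π₀, Finset.mem_filter.2 ⟨hπ₀, rfl⟩⟩
  have hπVF : π ∈ VF := (Finset.mem_filter.1 hπmem).1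
  have hπΦ : Φ π = Φ π₀ := (Finset.mem_filter.1 hπmem).2
  have hπV : π ∈ V := (hVmem _).1 hπVF
  obtain ⟨hπG, hπdis, hπE⟩ := hπV
  refine ⟨π, hπG, hπdis, hπE, ?_⟩
  apply Finset.Subset.antisymm
  · intro x hx
    obtain ⟨i, _, hxi⟩ := Finset.mem_biUnion.1 hx
    exact Finset.mem_filter.2 ⟨hGO i (hπG i hxi), ⟨i, hπG i hxi⟩⟩
  intro o hoS
  by_contra honot
  have hoO : o ∈ O := (Finset.mem_filter.1 hoS).1
  have hoπ : ∀ j, o ∉ π j := by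
    intro j hj
    exact honot (Finset.mem_biUnion.2 ⟨j, Finset.mem_univ j, hj⟩)
  set H : Finset (Fin n) := Finset.univ.filter (fun i => o ∈ G i) with hH
  have hHne : H.Nonempty := by
    obtain ⟨i, hi⟩ := (Finset.mem_filter.1 hoS).2
    exact ⟨i, Finset.mem_filter.2 ⟨Finset.mem_univ i, hi⟩⟩
  by_cases hA : ∃ i ∈ H, ∀ k ∈ H, k ≠ i → ustar (u k) (π i) ≤ u k (π k)
  · -- Case A : give o to i
    obtain ⟨i, hiH, hiA⟩ := hA
    have hioG : o ∈ G i := (Finset.mem_filter.1 hiH).2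
    set π' : Fin n → Finset ι := Function.update π i (insert o (π i)) with hπ'
    have hπ'i : π' i = insert o (π i) := Function.update_self i _ π
    have hπ'j : ∀ j, j ≠ i → π' j = π j := fun j hj => Function.update_of_ne hj _ π
    have hπiO : π i ⊆ O.erase o := by
      intro x hx
      exact Finset.mem_erase.2 ⟨fun h => hoπ i (h ▸ hx), hGO i (hπG i hx)⟩
    have hup : u i (π i) ≤ u i (insert o (π i)) := hvG i o hioG (π i) hπiO
    have hπ'V : π' ∈ V := by
      refine ⟨?_, ?_, ?_⟩
      · intro j
        by_cases hj : j = i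
        · subst hj; rw [hπ'i]; exact Finset.insert_subset hioG (hπG j)
        · rw [hπ'j j hj]; exact hπG j
      · intro a b hab
        by_cases ha : a = i <;> by_cases hb : b = i
        · subst ha; subst hb; exact absurd rfl hab
        · subst ha
          rw [hπ'i, hπ'j b hb]
          exact Finset.disjoint_insert_left.2 ⟨hoπ b, hπdis _ _ hab⟩
        · subst hb
          rw [hπ'i, hπ'j a ha]
          exact Finset.disjoint_insert_right.2 ⟨hoπ a, hπdis _ _ hab⟩
        · rw [hπ'j a ha, hπ'j b hb]; exact hπdis _ _ hab
      · intro k l hkl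
        by_cases hl : l = i
        · subst hl
          have hk : k ≠ l := hkl
          rw [hπ'i, hπ'j k hk]
          by_cases hkH : k ∈ H
          · right
            refine ⟨o, Finset.mem_insert_self o _, ?_⟩
            rw [Finset.erase_insert (hoπ l)]
            exact hiA k hkH hk
          · -- o is a chore for k
            have hoCk : o ∈ C k := by
              rcases Finset.mem_union.1 (hcover k hoO) with h | h
              · exact absurd (Finset.mem_filter.2 ⟨Finset.mem_univ k, h⟩) hkH
              · exact h
            rcases hπE k l hkl with h | ⟨o', ho', h⟩
            · left
              rw [ustar_insert_chore (hvC k) ((hπG l).trans (hGO l)) hoCk hoO]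
              exact h
            · right
              have ho'o : o ≠ o' := fun hh => hoπ l (hh ▸ ho')
              refine ⟨o', Finset.mem_insert_of_mem ho', ?_⟩
              rw [Finset.erase_insert_of_ne ho'o]
              rw [ustar_insert_chore (hvC k)
                (((π l).erase_subset o').trans ((hπG l).trans (hGO l))) hoCk hoO]
              exact h
        · rw [hπ'j l hl]
          by_cases hk : k = i
          · subst hk
            rcases hπE k l hkl with h | ⟨o', ho', h⟩
            · left; rw [hπ'i]; exact h.trans hup
            · right; exact ⟨o', ho', by rw [hπ'i]; exact h.trans hup⟩
          · rw [hπ'j k hk]; exact hπE k l hkl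
    -- Φ does not decrease, coverage strictly increases : contradiction
    have hΦle : Φ π ≤ Φ π' := by
      apply Finset.sum_le_sum
      intro j _
      by_cases hj : j = i
      · subst hj; rw [hπ'i]; exact hup
      · rw [hπ'j j hj]
    have hπ'VF : π' ∈ VF := (hVmem _).2 hπ'V
    have hΦeq : Φ π' = Φ π₀ := le_antisymm (hmax π' hπ'VF) (hπΦ ▸ hΦle)
    have hπ'VF2 : π' ∈ VF2 := Finset.mem_filter.2 ⟨hπ'VF, hΦeq⟩
    have hbU : Finset.univ.biUnion π' = insert o (Finset.univ.biUnion π) := by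
      ext x
      simp only [Finset.mem_biUnion, Finset.mem_insert, Finset.mem_univ, true_and]
      constructor
      · rintro ⟨j, hj⟩
        by_cases hji : j = i
        · subst hji
          rw [hπ'i] at hj
          rcases Finset.mem_insert.1 hj with h | h
          · exact Or.inl h
          · exact Or.inr ⟨j, h⟩
        · rw [hπ'j j hji] at hj
          exact Or.inr ⟨j, hj⟩
      · rintro (rfl | ⟨j, hj⟩)
        · exact ⟨i, by rw [hπ'i]; exact Finset.mem_insert_self _ _⟩
        · by_cases hji : j = i
          · subst hji
            exact ⟨j, by rw [hπ'i]; exact Finset.mem_insert_of_mem hj⟩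
          · exact ⟨j, by rw [hπ'j j hji]; exact hj⟩
    have hcard := hmax2 π' hπ'VF2
    rw [hbU, Finset.card_insert_of_notMem honot] at hcard
    omega
  · -- Case B : rotate along a star-envy cycle inside H
    push_neg at hA
    have hB : ∀ i, ∃ k, i ∈ H → (k ∈ H ∧ k ≠ i ∧ u k (π k) < ustar (u k) (π i)) := by
      intro i
      by_cases hi : i ∈ H
      · obtain ⟨k, hk1, hk2, hk3⟩ := hA i hi
        exact ⟨k, fun _ => ⟨hk1, hk2, hk3⟩⟩
      · exact ⟨i, fun h => absurd h hi⟩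
    choose f hf using hB
    have hmaps : ∀ i ∈ H, f i ∈ H := fun i hi => (hf i hi).1
    obtain ⟨p, hp⟩ := hHne
    obtain ⟨Cy, g, hCyne, hCyH, _hfC, hgC, hfg, _hgf⟩ := cycle_lemma f H hmaps hp
    have hkey : ∀ j ∈ Cy, j ≠ g j ∧ u j (π j) < ustar (u j) (π (g j)) := by
      intro j hj
      have hgjH : g j ∈ H := hCyH (hgC j hj)
      obtain ⟨_, h2, h3⟩ := hf (g j) hgjH
      rw [hfg j hj] at h2 h3
      exact ⟨h2, h3⟩
    have hbest : ∀ j, ∃ X, X ⊆ π (g j) ∧ X ⊆ G j ∧ u j X = ustar (u j) (π (g j)) :=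
      fun j => exists_best (hvC j) (hcover j) ((hπG (g j)).trans (hGO (g j)))
    choose Xb hXb1 hXb2 hXb3 using hbest
    set π' : Fin n → Finset ι := fun j => if j ∈ Cy then Xb j else π j with hπ'
    have hπ'in : ∀ j ∈ Cy, π' j = Xb j := fun j hj => if_pos hj
    have hπ'out : ∀ j, j ∉ Cy → π' j = π j := fun j hj => if_neg hj
    have hginj : ∀ j1 ∈ Cy, ∀ j2 ∈ Cy, g j1 = g j2 → j1 = j2 := by
      intro j1 h1 j2 h2 h
      rw [← hfg j1 h1, ← hfg j2 h2, h]
    have hLHS : ∀ k, u k (π k) ≤ u k (π' k) := by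
      intro k
      by_cases hk : k ∈ Cy
      · rw [hπ'in k hk, hXb3 k]
        exact (hkey k hk).2.le
      · rw [hπ'out k hk]
    have hπ'V : π' ∈ V := by
      refine ⟨?_, ?_, ?_⟩
      · intro j
        by_cases hj : j ∈ Cy
        · rw [hπ'in j hj]; exact hXb2 j
        · rw [hπ'out j hj]; exact hπG j
      · intro a b hab
        by_cases ha : a ∈ Cy <;> by_cases hb : b ∈ Cy
        · rw [hπ'in a ha, hπ'in b hb]
          have hgab : g a ≠ g b := fun h => hab (hginj a ha b hb h)
          exact Finset.disjoint_of_subset_left (hXb1 a)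
            (Finset.disjoint_of_subset_right (hXb1 b) (hπdis _ _ hgab))
        · rw [hπ'in a ha, hπ'out b hb]
          have : g a ≠ b := fun h => hb (h ▸ hgC a ha)
          exact Finset.disjoint_of_subset_left (hXb1 a) (hπdis _ _ this)
        · rw [hπ'out a ha, hπ'in b hb]
          have : a ≠ g b := fun h => ha (h ▸ hgC b hb)
          exact Finset.disjoint_of_subset_right (hXb1 b) (hπdis _ _ this)
        · rw [hπ'out a ha, hπ'out b hb]; exact hπdis _ _ hab
      · intro k l hkl
        by_cases hl : l ∈ Cy
        · rw [hπ'in l hl]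
          by_cases hkm : k = g l
          · -- k's own old bundle is the source of l's new bundle
            left
            have h1 : ustar (u k) (Xb l) ≤ ustar (u k) (π k) :=
              ustar_mono (hkm ▸ hXb1 l)
            have h2 : ustar (u k) (π k) = u k (π k) :=
              ustar_eq_self (hvG k) (hπG k) ((hπG k).trans (hGO k))
            exact (h1.trans h2.le).trans (hLHS k)
          · rcases hπE k (g l) hkm with h | ⟨o', ho', h⟩
            · left
              exact ((ustar_mono (hXb1 l)).trans h).trans (hLHS k)
            · by_cases ho'l : o' ∈ Xb l
              · right
                refine ⟨o', ho'l, ?_⟩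
                exact ((ustar_mono (Finset.erase_subset_erase o' (hXb1 l))).trans h).trans (hLHS k)
              · left
                have hsub : Xb l ⊆ (π (g l)).erase o' := by
                  intro x hx
                  exact Finset.mem_erase.2 ⟨fun hh => ho'l (hh ▸ hx), hXb1 l hx⟩
                exact ((ustar_mono hsub).trans h).trans (hLHS k)
        · rw [hπ'out l hl]
          rcases hπE k l hkl with h | ⟨o', ho', h⟩
          · left; exact h.trans (hLHS k)
          · right; exact ⟨o', ho', h.trans (hLHS k)⟩
    -- Φ strictly increases : contradiction
    have hΦlt : Φ π < Φ π' := by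
      apply Finset.sum_lt_sum
      · intro j _; exact hLHS j
      · obtain ⟨j, hj⟩ := hCyne
        refine ⟨j, Finset.mem_univ j, ?_⟩
        rw [hπ'in j hj, hXb3 j]
        exact (hkey j hj).2
    have hπ'VF : π' ∈ VF := (hVmem _).2 hπ'V
    have := hmax π' hπ'VF
    rw [← hπΦ] at this
    exact absurd hΦlt (not_lt.2 this)

end Phase1

section Phase2

variable {n : ℕ} {ι : Type*} [DecidableEq ι]

theorem exists_ef1_doubly_monotonic'
    (hn : 0 < n) (O : Finset ι)
    (u : Fin n → Finset ι → ℝ)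
    (G C : Fin n → Finset ι)
    (hpart : ∀ i, G i ∪ C i = O)
    (hmono : ∀ (i : Fin n) (o : ι) (X : Finset ι), o ∈ O → X ⊆ O.erase o →
      (o ∈ G i → u i X ≤ u i (insert o X)) ∧
      (o ∈ C i → u i (insert o X) ≤ u i X)) :
    ∃ π : Fin n → Finset ι,
      (∀ i, π i ⊆ O) ∧
      (∀ i j : Fin n, i ≠ j → Disjoint (π i) (π j)) ∧
      (Finset.univ.biUnion π = O) ∧
      (∀ i j : Fin n,
        (u i (π j) ≤ u i (π i)) ∨
        (∃ o ∈ π i ∪ π j, u i ((π j).erase o) ≤ u i ((π i).erase o))) := by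
  classical
  have hGO : ∀ i, G i ⊆ O := fun i => (hpart i) ▸ Finset.subset_union_left
  have hCO : ∀ i, C i ⊆ O := fun i => (hpart i) ▸ Finset.subset_union_right
  have hcover : ∀ i, O ⊆ G i ∪ C i := fun i => by rw [hpart i]
  have hvC : ∀ i, ∀ o ∈ C i, ∀ X ⊆ O.erase o, u i (insert o X) ≤ u i X :=
    fun i o ho X hX => (hmono i o X (hCO i ho) hX).2 ho
  set S : Finset ι := O.filter (fun o => ∃ i, o ∈ G i) with hS
  obtain ⟨σ, hσG, hσdis, hσE, hσU⟩ := phase1 O u G C hpart hmono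
  -- EF1 predicate
  set EF1 : (Fin n → Finset ι) → Prop := fun π => ∀ i j : Fin n,
      (u i (π j) ≤ u i (π i)) ∨
      (∃ o ∈ π i ∪ π j, u i ((π j).erase o) ≤ u i ((π i).erase o)) with hEF1
  set V : Set (Fin n → Finset ι) := {π |
    (∀ i, π i ⊆ O) ∧
    (∀ i j : Fin n, i ≠ j → Disjoint (π i) (π j)) ∧
    (S ⊆ Finset.univ.biUnion π) ∧ EF1 π} with hV
  have hVfin : V.Finite := by
    refine Set.Finite.subset (Set.Finite.pi (fun i : Fin n => O.powerset.finite_toSet)) ?_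
    intro π hπ
    intro i _
    exact Finset.mem_coe.2 (Finset.mem_powerset.2 (hπ.1 i))
  have hσV : σ ∈ V := by
    refine ⟨fun i => (hσG i).trans (hGO i), hσdis, by rw [hσU], ?_⟩
    intro i j
    by_cases hij : i = j
    · subst hij; exact Or.inl le_rfl
    · rcases hσE i j hij with h | ⟨o, ho, h⟩
      · exact Or.inl ((le_ustar (Finset.Subset.refl _)).trans h)
      · right
        refine ⟨o, Finset.mem_union_right _ ho, ?_⟩
        have h1 : u i ((σ j).erase o) ≤ ustar (u i) ((σ j).erase o) :=
          le_ustar (Finset.Subset.refl _)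
        have h2 : o ∉ σ i := fun hh => (Finset.disjoint_left.1 (hσdis i j hij)) hh ho
        rw [Finset.erase_eq_of_notMem h2]
        exact h1.trans h
  set VF : Finset (Fin n → Finset ι) := hVfin.toFinset with hVF
  have hVmem : ∀ π, π ∈ VF ↔ π ∈ V := fun π => Set.Finite.mem_toFinset hVfin
  have hVFne : VF.Nonempty := ⟨σ, (hVmem _).2 hσV⟩
  obtain ⟨π₀, hπ₀, hmax⟩ := VF.exists_max_image (fun π => (Finset.univ.biUnion π).card) hVFne
  set Φ : (Fin n → Finset ι) → ℝ := fun π => ∑ i, u i (π i) with hΦ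
  set VF2 : Finset (Fin n → Finset ι) :=
    VF.filter (fun π => (Finset.univ.biUnion π).card = (Finset.univ.biUnion π₀).card) with hVF2
  obtain ⟨π, hπmem, hmax2⟩ := VF2.exists_max_image Φ ⟨π₀, Finset.mem_filter.2 ⟨hπ₀, rfl⟩⟩
  have hπVF : π ∈ VF := (Finset.mem_filter.1 hπmem).1
  have hπcard : (Finset.univ.biUnion π).card = (Finset.univ.biUnion π₀).card :=
    (Finset.mem_filter.1 hπmem).2
  obtain ⟨hπO, hπdis, hπS, hπE⟩ := (hVmem _).1 hπVF
  refine ⟨π, hπO, hπdis, ?_, hπE⟩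
  apply Finset.Subset.antisymm
  · intro x hx
    obtain ⟨i, _, hxi⟩ := Finset.mem_biUnion.1 hx
    exact hπO i hxi
  intro o hoO
  by_contra honot
  have hoπ : ∀ j, o ∉ π j := by
    intro j hj
    exact honot (Finset.mem_biUnion.2 ⟨j, Finset.mem_univ j, hj⟩)
  have hoC : ∀ i, o ∈ C i := by
    intro i
    rcases Finset.mem_union.1 (hcover i hoO) with h | h
    · exact absurd (hπS (Finset.mem_filter.2 ⟨hoO, ⟨i, h⟩⟩)) honot
    · exact h
  by_cases hA : ∃ i, ∀ j, u i (π j) ≤ u i (π i)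
  · -- give the chore o to an agent that envies nobody
    obtain ⟨i, hiA⟩ := hA
    set π' : Fin n → Finset ι := Function.update π i (insert o (π i)) with hπ'
    have hπ'i : π' i = insert o (π i) := Function.update_self i _ π
    have hπ'j : ∀ j, j ≠ i → π' j = π j := fun j hj => Function.update_of_ne hj _ π
    have hXerase : ∀ (X : Finset ι), X ⊆ O → o ∉ X → X ⊆ O.erase o := by
      intro X hXO hoX x hx
      exact Finset.mem_erase.2 ⟨fun h => hoX (h ▸ hx), hXO hx⟩
    have hπ'V : π' ∈ V := by
      refine ⟨?_, ?_, ?_, ?_⟩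
      · intro j
        by_cases hj : j = i
        · subst hj; rw [hπ'i]; exact Finset.insert_subset hoO (hπO j)
        · rw [hπ'j j hj]; exact hπO j
      · intro a b hab
        by_cases ha : a = i <;> by_cases hb : b = i
        · subst ha; subst hb; exact absurd rfl hab
        · subst ha
          rw [hπ'i, hπ'j b hb]
          exact Finset.disjoint_insert_left.2 ⟨hoπ b, hπdis _ _ hab⟩
        · subst hb
          rw [hπ'i, hπ'j a ha]
          exact Finset.disjoint_insert_right.2 ⟨hoπ a, hπdis _ _ hab⟩
        · rw [hπ'j a ha, hπ'j b hb]; exact hπdis _ _ hab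
      · refine hπS.trans ?_
        intro x hx
        obtain ⟨j, _, hxj⟩ := Finset.mem_biUnion.1 hx
        by_cases hj : j = i
        · subst hj
          exact Finset.mem_biUnion.2 ⟨j, Finset.mem_univ j,
            by rw [hπ'i]; exact Finset.mem_insert_of_mem hxj⟩
        · exact Finset.mem_biUnion.2 ⟨j, Finset.mem_univ j, by rw [hπ'j j hj]; exact hxj⟩
      · intro k l
        by_cases hk : k = i <;> by_cases hl : l = i
        · subst hk; subst hl; exact Or.inl le_rfl
        · -- k = i gained a chore; use the witness o in own bundle
          subst hk
          right
          refine ⟨o, Finset.mem_union_left _ (by rw [hπ'i]; exact Finset.mem_insert_self _ _), ?_⟩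
          rw [hπ'i, Finset.erase_insert (hoπ k), hπ'j l hl, Finset.erase_eq_of_notMem (hoπ l)]
          exact hiA l
        · -- l = i received a chore (for k)
          subst hl
          rw [hπ'i, hπ'j k hk]
          rcases hπE k l with h | ⟨o', ho', h⟩
          · left
            refine le_trans ?_ h
            exact hvC k o (hoC k) (π l) (hXerase _ (hπO l) (hoπ l))
          · right
            have ho'o : o ≠ o' := by
              rintro rfl
              rcases Finset.mem_union.1 ho' with hh | hh
              · exact hoπ k hh
              · exact hoπ l hh
            refine ⟨o', Finset.mem_union.2 ?_, ?_⟩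
            · rcases Finset.mem_union.1 ho' with hh | hh
              · exact Or.inl hh
              · exact Or.inr (Finset.mem_insert_of_mem hh)
            · rw [Finset.erase_insert_of_ne ho'o]
              refine le_trans ?_ h
              refine hvC k o (hoC k) ((π l).erase o') (hXerase _ ?_ ?_)
              · exact ((π l).erase_subset o').trans (hπO l)
              · intro hh
                exact hoπ l (Finset.mem_of_mem_erase hh)
        · rw [hπ'j k hk, hπ'j l hl]; exact hπE k l
    -- coverage strictly increases : contradiction with maximality of card
    have hπ'VF : π' ∈ VF := (hVmem _).2 hπ'V
    have hbU : Finset.univ.biUnion π' = insert o (Finset.univ.biUnion π) := by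
      ext x
      simp only [Finset.mem_biUnion, Finset.mem_insert, Finset.mem_univ, true_and]
      constructor
      · rintro ⟨j, hj⟩
        by_cases hji : j = i
        · subst hji
          rw [hπ'i] at hj
          rcases Finset.mem_insert.1 hj with h | h
          · exact Or.inl h
          · exact Or.inr ⟨j, h⟩
        · rw [hπ'j j hji] at hj
          exact Or.inr ⟨j, hj⟩
      · rintro (rfl | ⟨j, hj⟩)
        · exact ⟨i, by rw [hπ'i]; exact Finset.mem_insert_self _ _⟩
        · by_cases hji : j = i
          · subst hji
            exact ⟨j, by rw [hπ'i]; exact Finset.mem_insert_of_mem hj⟩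
          · exact ⟨j, by rw [hπ'j j hji]; exact hj⟩
    have hcard := hmax π' hπ'VF
    rw [hbU, Finset.card_insert_of_notMem honot, hπcard] at hcard
    omega
  · -- rotate along a top-trading envy cycle
    push_neg at hA
    have hBmax : ∀ i : Fin n, ∃ t : Fin n, ∀ j, u i (π j) ≤ u i (π t) := by
      intro i
      obtain ⟨t, _, ht⟩ := Finset.univ.exists_max_image (fun j => u i (π j)) ⟨⟨0, hn⟩, Finset.mem_univ _⟩
      exact ⟨t, fun j => ht j (Finset.mem_univ j)⟩
    choose t ht using hBmax
    have htstrict : ∀ i, u i (π i) < u i (π (t i)) := by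
      intro i
      obtain ⟨j, hj⟩ := hA i
      exact lt_of_lt_of_le hj (ht i j)
    obtain ⟨Cy, g, hCyne, _hCyH, hfC, hgC, hfg, hgf⟩ :=
      cycle_lemma t (Finset.univ : Finset (Fin n)) (fun i _ => Finset.mem_univ _)
        (Finset.mem_univ (⟨0, hn⟩ : Fin n))
    set π' : Fin n → Finset ι := fun j => if j ∈ Cy then π (t j) else π j with hπ'
    have hπ'in : ∀ j ∈ Cy, π' j = π (t j) := fun j hj => if_pos hj
    have hπ'out : ∀ j, j ∉ Cy → π' j = π j := fun j hj => if_neg hj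
    have htinj : ∀ j1 ∈ Cy, ∀ j2 ∈ Cy, t j1 = t j2 → j1 = j2 := by
      intro j1 h1 j2 h2 h
      rw [← hgf j1 h1, ← hgf j2 h2, h]
    have hπ'V : π' ∈ V := by
      refine ⟨?_, ?_, ?_, ?_⟩
      · intro j
        by_cases hj : j ∈ Cy
        · rw [hπ'in j hj]; exact hπO _
        · rw [hπ'out j hj]; exact hπO j
      · intro a b hab
        by_cases ha : a ∈ Cy <;> by_cases hb : b ∈ Cy
        · rw [hπ'in a ha, hπ'in b hb]
          exact hπdis _ _ (fun h => hab (htinj a ha b hb h))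
        · rw [hπ'in a ha, hπ'out b hb]
          exact hπdis _ _ (fun h => hb (h ▸ hfC a ha))
        · rw [hπ'out a ha, hπ'in b hb]
          exact hπdis _ _ (fun h => ha (h.symm ▸ hfC b hb))
        · rw [hπ'out a ha, hπ'out b hb]; exact hπdis _ _ hab
      · refine hπS.trans ?_
        intro x hx
        obtain ⟨j, _, hxj⟩ := Finset.mem_biUnion.1 hx
        by_cases hj : j ∈ Cy
        · refine Finset.mem_biUnion.2 ⟨g j, Finset.mem_univ _, ?_⟩
          rw [hπ'in (g j) (hgC j hj), hfg j hj]
          exact hxj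
        · exact Finset.mem_biUnion.2 ⟨j, Finset.mem_univ j, by rw [hπ'out j hj]; exact hxj⟩
      · intro k l
        by_cases hk : k ∈ Cy
        · left
          rw [hπ'in k hk]
          by_cases hl : l ∈ Cy
          · rw [hπ'in l hl]; exact ht k (t l)
          · rw [hπ'out l hl]; exact ht k l
        · rw [hπ'out k hk]
          by_cases hl : l ∈ Cy
          · rw [hπ'in l hl]; exact hπE k (t l)
          · rw [hπ'out l hl]; exact hπE k l
    have hπ'VF : π' ∈ VF := (hVmem _).2 hπ'V
    -- coverage is unchanged
    have hbU : Finset.univ.biUnion π' = Finset.univ.biUnion π := by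
      apply Finset.Subset.antisymm
      · intro x hx
        obtain ⟨j, _, hxj⟩ := Finset.mem_biUnion.1 hx
        by_cases hj : j ∈ Cy
        · rw [hπ'in j hj] at hxj
          exact Finset.mem_biUnion.2 ⟨t j, Finset.mem_univ _, hxj⟩
        · rw [hπ'out j hj] at hxj
          exact Finset.mem_biUnion.2 ⟨j, Finset.mem_univ j, hxj⟩
      · intro x hx
        obtain ⟨j, _, hxj⟩ := Finset.mem_biUnion.1 hx
        by_cases hj : j ∈ Cy
        · refine Finset.mem_biUnion.2 ⟨g j, Finset.mem_univ _, ?_⟩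
          rw [hπ'in (g j) (hgC j hj), hfg j hj]
          exact hxj
        · exact Finset.mem_biUnion.2 ⟨j, Finset.mem_univ j, by rw [hπ'out j hj]; exact hxj⟩
    have hπ'VF2 : π' ∈ VF2 := Finset.mem_filter.2 ⟨hπ'VF, by rw [hbU, hπcard]⟩
    have hΦlt : Φ π < Φ π' := by
      apply Finset.sum_lt_sum
      · intro j _
        by_cases hj : j ∈ Cy
        · rw [hπ'in j hj]; exact (htstrict j).le
        · rw [hπ'out j hj]
      · obtain ⟨j, hj⟩ := hCyne
        refine ⟨j, Finset.mem_univ j, ?_⟩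
        rw [hπ'in j hj]
        exact htstrict j
    exact absurd hΦlt (not_lt.2 (hmax2 π' hπ'VF2))

end Phase2

/-- For doubly monotonic utilities over bundles, an EF1 complete
allocation exists. Each agent `i` partitions `O` into desirable items `G i`
and undesirable items `C i`. -/
theorem exists_ef1_doubly_monotonic
    (n : ℕ) (hn : 0 < n) (ι : Type*) [DecidableEq ι] (O : Finset ι)
    (u : Fin n → Finset ι → ℝ)
    (G C : Fin n → Finset ι)
    (hpart : ∀ i, G i ∪ C i = O)
    (hGC : ∀ i, Disjoint (G i) (C i))
    (hmono : ∀ (i : Fin n) (o : ι) (X : Finset ι), o ∈ O → X ⊆ O.erase o →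
      (o ∈ G i → u i X ≤ u i (insert o X)) ∧
      (o ∈ C i → u i (insert o X) ≤ u i X)) :
    ∃ π : Fin n → Finset ι,
      (∀ i, π i ⊆ O) ∧
      (∀ i j : Fin n, i ≠ j → Disjoint (π i) (π j)) ∧
      (Finset.univ.biUnion π = O) ∧
      (∀ i j : Fin n,
        (u i (π j) ≤ u i (π i)) ∨
        (∃ o ∈ π i ∪ π j, u i ((π j).erase o) ≤ u i ((π i).erase o))) :=
  exists_ef1_doubly_monotonic' hn O u G C hpart hmono
end

section
/- For every instance with two agents (N = {1,2}), a finite set O of indivisible items, and additive utilities u_1, u_2 : O → ℝ, there exists a complete allocation π that is simultaneously Pareto-optimal (no complete allocation π' satisfies u_i(π'(i)) ≥ u_i(π(i)) for both agents with strict inequality for at least one agent) and EF1 (for each agent i and the other agent j, either u_i(π(i)) ≥ u_i(π(j)) or there is an item o ∈ π(i) ∪ π(j) with u_i(π(i)∖{o}) ≥ u_i(π(j)∖{o})). -/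
namespace AW4
open Finset

set_option linter.unusedSectionVars false
set_option maxHeartbeats 1000000

variable {ι : Type*} [DecidableEq ι]

def good (u1 u2 : ι → ℝ) (o : ι) : Prop := 0 < u1 o ∧ 0 < u2 o
def bad (u1 u2 : ι → ℝ) (o : ι) : Prop := u1 o < 0 ∧ u2 o < 0
def Fc (u1 u2 : ι → ℝ) (o : ι) : Prop := 0 ≤ u1 o ∧ u2 o ≤ 0
noncomputable def tt (u1 u2 : ι → ℝ) (o : ι) : ℝ := u2 o / (u1 o + u2 o)

lemma key_good {u1 u2 : ι → ℝ} {o : ι} (h : good u1 u2 o) :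
    tt u1 u2 o * (u1 o + u2 o) = u2 o := by
  have hs : 0 < u1 o + u2 o := by have := h.1; have := h.2; linarith
  rw [tt, div_mul_cancel₀ _ (ne_of_gt hs)]

lemma key_bad {u1 u2 : ι → ℝ} {o : ι} (h : bad u1 u2 o) :
    tt u1 u2 o * (u1 o + u2 o) = u2 o := by
  have hs : u1 o + u2 o < 0 := by have := h.1; have := h.2; linarith
  rw [tt, div_mul_cancel₀ _ (ne_of_lt hs)]

lemma tt_mem {u1 u2 : ι → ℝ} {o : ι} (h : good u1 u2 o ∨ bad u1 u2 o) :
    0 < tt u1 u2 o ∧ tt u1 u2 o < 1 := by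
  rcases h with h | h
  · have h1 := h.1; have h2 := h.2
    have key := key_good h
    constructor <;> nlinarith
  · have h1 := h.1; have h2 := h.2
    have key := key_bad h
    constructor <;> nlinarith

lemma good_ge {u1 u2 : ι → ℝ} {o : ι} (h : good u1 u2 o) {t : ℝ}
    (ht : tt u1 u2 o ≤ t) : (1 - t) * u2 o ≤ t * u1 o := by
  have h1 := h.1; have h2 := h.2; have key := key_good h
  nlinarith

lemma good_le {u1 u2 : ι → ℝ} {o : ι} (h : good u1 u2 o) {t : ℝ}
    (ht : t ≤ tt u1 u2 o) : t * u1 o ≤ (1 - t) * u2 o := by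
  have h1 := h.1; have h2 := h.2; have key := key_good h
  nlinarith

lemma bad_ge {u1 u2 : ι → ℝ} {o : ι} (h : bad u1 u2 o) {t : ℝ}
    (ht : t ≤ tt u1 u2 o) : (1 - t) * u2 o ≤ t * u1 o := by
  have h1 := h.1; have h2 := h.2; have key := key_bad h
  nlinarith

lemma bad_le {u1 u2 : ι → ℝ} {o : ι} (h : bad u1 u2 o) {t : ℝ}
    (ht : tt u1 u2 o ≤ t) : t * u1 o ≤ (1 - t) * u2 o := by
  have h1 := h.1; have h2 := h.2; have key := key_bad h
  nlinarith

lemma not_bad_of_good {u1 u2 : ι → ℝ} {o : ι} (h : good u1 u2 o) : ¬ bad u1 u2 o := by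
  rintro ⟨h1, _⟩; exact absurd h.1 (by linarith)

open Classical in
noncomputable def Aset (u1 u2 : ι → ℝ) (O : Finset ι) (L : List ι) (k : ℕ) : Finset ι :=
  O.filter (fun o => (good u1 u2 o ∧ o ∈ L.take k) ∨ (bad u1 u2 o ∧ o ∈ L.drop k) ∨
    (¬(good u1 u2 o ∨ bad u1 u2 o) ∧ Fc u1 u2 o))

lemma mem_Aset {u1 u2 : ι → ℝ} {O : Finset ι} {L : List ι} {k : ℕ} {o : ι} :
    o ∈ Aset u1 u2 O L k ↔ o ∈ O ∧ ((good u1 u2 o ∧ o ∈ L.take k) ∨ (bad u1 u2 o ∧ o ∈ L.drop k) ∨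
      (¬(good u1 u2 o ∨ bad u1 u2 o) ∧ Fc u1 u2 o)) := by
  classical
  simp only [Aset, Finset.mem_filter]

lemma Aset_subset {u1 u2 : ι → ℝ} {O : Finset ι} {L : List ι} {k : ℕ} :
    Aset u1 u2 O L k ⊆ O := fun _ h => (mem_Aset.mp h).1

lemma mem_take_idx {L : List ι} {n : ℕ} {o : ι} (h : o ∈ L.take n) :
    ∃ j : Fin L.length, j.1 < n ∧ L.get j = o := by
  obtain ⟨i, hi⟩ := List.mem_iff_get.mp h
  have hlen : (L.take n).length = min n L.length := List.length_take
  have h1 : i.1 < min n L.length := hlen ▸ i.2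
  have hiL : i.1 < L.length := lt_of_lt_of_le h1 (min_le_right _ _)
  have hin : i.1 < n := lt_of_lt_of_le h1 (min_le_left _ _)
  exact ⟨⟨i.1, hiL⟩, hin, by rw [← hi]; simp⟩

lemma mem_drop_idx {L : List ι} {n : ℕ} {o : ι} (h : o ∈ L.drop n) :
    ∃ j : Fin L.length, n ≤ j.1 ∧ L.get j = o := by
  obtain ⟨i, hi⟩ := List.mem_iff_get.mp h
  have h2 : i.1 < L.length - n := List.length_drop ▸ i.2
  have hiL : n + i.1 < L.length := by omega
  exact ⟨⟨n + i.1, hiL⟩, Nat.le_add_right _ _, by rw [← hi]; simp⟩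

lemma not_mem_take {L : List ι} {k : ℕ} (hnd : L.Nodup) (hk : k < L.length) :
    L.get ⟨k, hk⟩ ∉ L.take k := by
  intro h
  obtain ⟨j, hj, hje⟩ := mem_take_idx h
  have : j = ⟨k, hk⟩ := (List.Nodup.get_inj_iff hnd).mp hje
  simp only [Fin.ext_iff] at this
  omega

lemma not_mem_drop {L : List ι} {k : ℕ} (hnd : L.Nodup) (hk : k < L.length) :
    L.get ⟨k, hk⟩ ∉ L.drop (k+1) := by
  intro h
  obtain ⟨j, hj, hje⟩ := mem_drop_idx h
  have : j = ⟨k, hk⟩ := (List.Nodup.get_inj_iff hnd).mp hje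
  simp only [Fin.ext_iff] at this
  omega

lemma step_good {u1 u2 : ι → ℝ} {O : Finset ι} {L : List ι} (hnd : L.Nodup)
    {k : ℕ} (hk : k < L.length) (hoO : L.get ⟨k, hk⟩ ∈ O)
    (hg : good u1 u2 (L.get ⟨k, hk⟩)) :
    L.get ⟨k, hk⟩ ∉ Aset u1 u2 O L k ∧
    Aset u1 u2 O L (k+1) = insert (L.get ⟨k, hk⟩) (Aset u1 u2 O L k) := by
  set o := L.get ⟨k, hk⟩ with ho
  have htake : L.take (k+1) = L.take k ++ [o] := by
    rw [List.take_succ, List.getElem?_eq_getElem hk]; rfl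
  have hdrop : L.drop k = o :: L.drop (k+1) := List.drop_eq_getElem_cons hk
  have hnt : o ∉ L.take k := not_mem_take hnd hk
  have hndp : o ∉ L.drop (k+1) := not_mem_drop hnd hk
  have hnb : ¬ bad u1 u2 o := not_bad_of_good hg
  constructor
  · rw [mem_Aset]
    rintro ⟨-, (⟨-, h⟩ | ⟨h, -⟩ | ⟨h, -⟩)⟩
    · exact hnt h
    · exact hnb h
    · exact h (Or.inl hg)
  · ext x
    rw [mem_Aset, Finset.mem_insert, mem_Aset]
    by_cases hx : x = o
    · subst hx
      simp only [htake, List.mem_append, List.mem_singleton]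
      tauto
    · have h1 : x ∈ L.take (k+1) ↔ x ∈ L.take k := by
        rw [htake, List.mem_append, List.mem_singleton]; tauto
      have h2 : x ∈ L.drop (k+1) ↔ x ∈ L.drop k := by
        rw [hdrop, List.mem_cons]; tauto
      rw [h1, h2]; tauto

lemma step_bad {u1 u2 : ι → ℝ} {O : Finset ι} {L : List ι} (hnd : L.Nodup)
    {k : ℕ} (hk : k < L.length) (hoO : L.get ⟨k, hk⟩ ∈ O)
    (hb : bad u1 u2 (L.get ⟨k, hk⟩)) :
    L.get ⟨k, hk⟩ ∈ Aset u1 u2 O L k ∧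
    Aset u1 u2 O L (k+1) = (Aset u1 u2 O L k).erase (L.get ⟨k, hk⟩) := by
  set o := L.get ⟨k, hk⟩ with ho
  have htake : L.take (k+1) = L.take k ++ [o] := by
    rw [List.take_succ, List.getElem?_eq_getElem hk]; rfl
  have hdrop : L.drop k = o :: L.drop (k+1) := List.drop_eq_getElem_cons hk
  have hnt : o ∉ L.take k := not_mem_take hnd hk
  have hndp : o ∉ L.drop (k+1) := not_mem_drop hnd hk
  have hng : ¬ good u1 u2 o := fun h => not_bad_of_good h hb
  constructor
  · rw [mem_Aset]
    exact ⟨hoO, Or.inr (Or.inl ⟨hb, by rw [hdrop]; exact List.mem_cons_self⟩)⟩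
  · ext x
    rw [mem_Aset, Finset.mem_erase, mem_Aset]
    by_cases hx : x = o
    · subst hx
      simp only [htake, List.mem_append, List.mem_singleton]
      tauto
    · have h1 : x ∈ L.take (k+1) ↔ x ∈ L.take k := by
        rw [htake, List.mem_append, List.mem_singleton]; tauto
      have h2 : x ∈ L.drop (k+1) ↔ x ∈ L.drop k := by
        rw [hdrop, List.mem_cons]; tauto
      rw [h1, h2]; tauto

def Ineq (u1 u2 : ι → ℝ) (O : Finset ι) (t : ℝ) (B : Finset ι) : Prop :=
  (∀ o ∈ B, (1 - t) * u2 o ≤ t * u1 o) ∧ (∀ o ∈ O, o ∉ B → t * u1 o ≤ (1 - t) * u2 o)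

lemma ineq_of_bounds {u1 u2 : ι → ℝ} {O : Finset ι} {L : List ι}
    (hmem : ∀ o, o ∈ L ↔ o ∈ O ∧ (good u1 u2 o ∨ bad u1 u2 o))
    {t : ℝ} (ht0 : 0 < t) (ht1 : t < 1) {k : ℕ}
    (htk : ∀ o ∈ L.take k, tt u1 u2 o ≤ t) (hdk : ∀ o ∈ L.drop k, t ≤ tt u1 u2 o) :
    Ineq u1 u2 O t (Aset u1 u2 O L k) := by
  constructor
  · intro o ho
    rw [mem_Aset] at ho
    rcases ho.2 with ⟨hg, hm⟩ | ⟨hb, hm⟩ | ⟨-, hF⟩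
    · exact good_ge hg (htk o hm)
    · exact bad_ge hb (hdk o hm)
    · calc (1 - t) * u2 o ≤ 0 := mul_nonpos_of_nonneg_of_nonpos (by linarith) hF.2
        _ ≤ t * u1 o := mul_nonneg (le_of_lt ht0) hF.1
  · intro o hoO ho
    rw [mem_Aset] at ho
    push_neg at ho
    have hcond := ho hoO
    by_cases hg : good u1 u2 o
    · have hoL : o ∈ L := (hmem o).mpr ⟨hoO, Or.inl hg⟩
      have : o ∈ L.take k ∨ o ∈ L.drop k := by
        rw [← List.mem_append, List.take_append_drop]; exact hoL
      rcases this with h | h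
      · exact absurd h (hcond.1 hg)
      · exact good_le hg (hdk o h)
    · by_cases hb : bad u1 u2 o
      · have hoL : o ∈ L := (hmem o).mpr ⟨hoO, Or.inr hb⟩
        have : o ∈ L.take k ∨ o ∈ L.drop k := by
          rw [← List.mem_append, List.take_append_drop]; exact hoL
        rcases this with h | h
        · exact bad_le hb (htk o h)
        · exact absurd h (hcond.2.1 hb)
      · have hnF : ¬ Fc u1 u2 o := fun hF => (hcond.2.2 (by tauto)) hF
        rw [Fc, not_and_or, not_le, not_le] at hnF
        rcases hnF with h | h
        · have h2 : 0 ≤ u2 o := by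
            by_contra hc; push_neg at hc; exact hb ⟨h, hc⟩
          calc t * u1 o ≤ 0 := mul_nonpos_of_nonneg_of_nonpos (le_of_lt ht0) (le_of_lt h)
            _ ≤ (1 - t) * u2 o := mul_nonneg (by linarith) h2
        · have h1 : u1 o ≤ 0 := by
            by_contra hc; push_neg at hc; exact hg ⟨hc, h⟩
          calc t * u1 o ≤ 0 := mul_nonpos_of_nonneg_of_nonpos (le_of_lt ht0) h1
            _ ≤ (1 - t) * u2 o := mul_nonneg (by linarith) (le_of_lt h)

lemma itemwise {u1 u2 : ι → ℝ} {O : Finset ι} {L : List ι}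
    (hmem : ∀ o, o ∈ L ↔ o ∈ O ∧ (good u1 u2 o ∨ bad u1 u2 o))
    (hsort : ∀ i j : Fin L.length, i.1 ≤ j.1 → tt u1 u2 (L.get i) ≤ tt u1 u2 (L.get j))
    {k : ℕ} (hk : k ≤ L.length) :
    ∃ t : ℝ, 0 < t ∧ t < 1 ∧ Ineq u1 u2 O t (Aset u1 u2 O L k) ∧
      (1 ≤ k → Ineq u1 u2 O t (Aset u1 u2 O L (k-1))) := by
  rcases Nat.eq_zero_or_pos L.length with hL | hL
  · have hk0 : k = 0 := by omega
    subst hk0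
    have hLnil : L = [] := List.length_eq_zero_iff.mp hL
    refine ⟨1/2, by norm_num, by norm_num, ?_, fun h => absurd h (by omega)⟩
    apply ineq_of_bounds hmem (by norm_num) (by norm_num)
    · intro o ho
      simp [hLnil] at ho
    · intro o ho
      simp [hLnil] at ho
  · have hi0 : k - 1 < L.length := by omega
    set i0 : Fin L.length := ⟨k - 1, hi0⟩ with hi0def
    have hsw : good u1 u2 (L.get i0) ∨ bad u1 u2 (L.get i0) :=
      ((hmem _).mp (L.get_mem _)).2
    obtain ⟨ht0, ht1⟩ := tt_mem hsw
    set t := tt u1 u2 (L.get i0) with htdef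
    have htk : ∀ m, m ≤ k → ∀ o ∈ L.take m, tt u1 u2 o ≤ t := by
      intro m hm o ho
      obtain ⟨j, hj, hje⟩ := mem_take_idx ho
      rw [← hje]
      exact hsort j i0 (show j.1 ≤ k - 1 by omega)
    have hdk : ∀ m, k - 1 ≤ m → ∀ o ∈ L.drop m, t ≤ tt u1 u2 o := by
      intro m hm o ho
      obtain ⟨j, hj, hje⟩ := mem_drop_idx ho
      rw [← hje]
      exact hsort i0 j (show k - 1 ≤ j.1 by omega)
    refine ⟨t, ht0, ht1, ?_, fun h1k => ?_⟩
    · exact ineq_of_bounds hmem ht0 ht1 (htk k le_rfl) (hdk k (by omega))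
    · exact ineq_of_bounds hmem ht0 ht1 (htk (k-1) (by omega)) (hdk (k-1) le_rfl)

lemma no_improve {u1 u2 : ι → ℝ} {O A : Finset ι} (hA : A ⊆ O) {t : ℝ}
    (ht0 : 0 < t) (ht1 : t < 1) (hI : Ineq u1 u2 O t A)
    {B1 B2 : Finset ι} (h12 : Disjoint B1 B2) (hcov : B1 ∪ B2 = O)
    (h1 : ∑ o ∈ A, u1 o ≤ ∑ o ∈ B1, u1 o) (h2 : ∑ o ∈ O \ A, u2 o ≤ ∑ o ∈ B2, u2 o) :
    ∑ o ∈ B1, u1 o ≤ ∑ o ∈ A, u1 o ∧ ∑ o ∈ B2, u2 o ≤ ∑ o ∈ O \ A, u2 o := by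
  set M : ι → ℝ := fun o => max (t * u1 o) ((1 - t) * u2 o) with hM
  have e1 : ∑ o ∈ B1, t * u1 o ≤ ∑ o ∈ B1, M o :=
    Finset.sum_le_sum (fun o _ => le_max_left _ _)
  have e2 : ∑ o ∈ B2, (1 - t) * u2 o ≤ ∑ o ∈ B2, M o :=
    Finset.sum_le_sum (fun o _ => le_max_right _ _)
  have e3 : ∑ o ∈ B1, M o + ∑ o ∈ B2, M o = ∑ o ∈ O, M o := by
    rw [← Finset.sum_union h12, hcov]
  have e4 : ∑ o ∈ O \ A, M o + ∑ o ∈ A, M o = ∑ o ∈ O, M o := Finset.sum_sdiff hA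
  have e5 : ∑ o ∈ A, M o = ∑ o ∈ A, t * u1 o :=
    Finset.sum_congr rfl (fun o ho => max_eq_left (hI.1 o ho))
  have e6 : ∑ o ∈ O \ A, M o = ∑ o ∈ O \ A, (1 - t) * u2 o :=
    Finset.sum_congr rfl (fun o ho => max_eq_right
      (hI.2 o (Finset.mem_sdiff.mp ho).1 (Finset.mem_sdiff.mp ho).2))
  have key : t * ∑ o ∈ B1, u1 o + (1 - t) * ∑ o ∈ B2, u2 o ≤
      t * ∑ o ∈ A, u1 o + (1 - t) * ∑ o ∈ O \ A, u2 o := by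
    rw [Finset.mul_sum, Finset.mul_sum, Finset.mul_sum, Finset.mul_sum]
    linarith
  constructor
  · have hcd : (1 - t) * ∑ o ∈ O \ A, u2 o ≤ (1 - t) * ∑ o ∈ B2, u2 o :=
      mul_le_mul_of_nonneg_left h2 (by linarith)
    have : t * ∑ o ∈ B1, u1 o ≤ t * ∑ o ∈ A, u1 o := by linarith
    exact le_of_mul_le_mul_left this ht0
  · have hab : t * ∑ o ∈ A, u1 o ≤ t * ∑ o ∈ B1, u1 o :=
      mul_le_mul_of_nonneg_left h1 (le_of_lt ht0)
    have : (1 - t) * ∑ o ∈ B2, u2 o ≤ (1 - t) * ∑ o ∈ O \ A, u2 o := by linarith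
    exact le_of_mul_le_mul_left this (by linarith)

-- sign lemmas at the extremes
lemma signs_top {u1 u2 : ι → ℝ} {O : Finset ι} {L : List ι}
    (hmem : ∀ o, o ∈ L ↔ o ∈ O ∧ (good u1 u2 o ∨ bad u1 u2 o)) :
    (∀ o ∈ Aset u1 u2 O L L.length, 0 ≤ u1 o) ∧
    (∀ o ∈ O \ Aset u1 u2 O L L.length, u1 o ≤ 0) := by
  constructor
  · intro o ho
    rw [mem_Aset] at ho
    rcases ho.2 with ⟨hg, -⟩ | ⟨-, hm⟩ | ⟨-, hF⟩
    · exact le_of_lt hg.1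
    · rw [List.drop_length] at hm; exact absurd hm List.not_mem_nil
    · exact hF.1
  · intro o ho
    obtain ⟨hoO, hno⟩ := Finset.mem_sdiff.mp ho
    rw [mem_Aset] at hno
    push_neg at hno
    have hcond := hno hoO
    by_cases hg : good u1 u2 o
    · exfalso
      have hoL : o ∈ L := (hmem o).mpr ⟨hoO, Or.inl hg⟩
      rw [List.take_length] at hcond
      exact hcond.1 hg hoL
    · by_cases hb : bad u1 u2 o
      · exact le_of_lt hb.1
      · have hnF : ¬ Fc u1 u2 o := fun hF => (hcond.2.2 (by tauto)) hF
        rw [Fc, not_and_or, not_le, not_le] at hnF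
        rcases hnF with h | h
        · exact le_of_lt h
        · by_contra hc; push_neg at hc; exact hg ⟨hc, h⟩

lemma signs_bot {u1 u2 : ι → ℝ} {O : Finset ι} {L : List ι}
    (hmem : ∀ o, o ∈ L ↔ o ∈ O ∧ (good u1 u2 o ∨ bad u1 u2 o)) :
    (∀ o ∈ Aset u1 u2 O L 0, u2 o ≤ 0) ∧
    (∀ o ∈ O \ Aset u1 u2 O L 0, 0 ≤ u2 o) := by
  constructor
  · intro o ho
    rw [mem_Aset] at ho
    rcases ho.2 with ⟨-, hm⟩ | ⟨hb, -⟩ | ⟨-, hF⟩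
    · rw [List.take_zero] at hm; exact absurd hm List.not_mem_nil
    · exact le_of_lt hb.2
    · exact hF.2
  · intro o ho
    obtain ⟨hoO, hno⟩ := Finset.mem_sdiff.mp ho
    rw [mem_Aset] at hno
    push_neg at hno
    have hcond := hno hoO
    by_cases hb : bad u1 u2 o
    · exfalso
      have hoL : o ∈ L := (hmem o).mpr ⟨hoO, Or.inr hb⟩
      rw [List.drop_zero] at hcond
      exact hcond.2.1 hb hoL
    · by_cases hg : good u1 u2 o
      · exact le_of_lt hg.2
      · have hnF : ¬ Fc u1 u2 o := fun hF => (hcond.2.2 (by tauto)) hF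
        rw [Fc, not_and_or, not_le, not_le] at hnF
        rcases hnF with h | h
        · by_contra hc; push_neg at hc; exact hb ⟨h, hc⟩
        · exact le_of_lt h

end AW4
open AW4 in
/-- For two agents with additive utilities, a complete allocation that
is simultaneously Pareto-optimal and EF1 always exists (generalized Adjusted Winner). -/
theorem exists_pareto_optimal_ef1_two_agents
    (ι : Type*) [DecidableEq ι] (O : Finset ι)
    (u : Fin 2 → ι → ℝ) :
    ∃ π : Fin 2 → Finset ι,
      (∀ i, π i ⊆ O) ∧
      (∀ i j : Fin 2, i ≠ j → Disjoint (π i) (π j)) ∧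
      (Finset.univ.biUnion π = O) ∧
      -- Pareto-optimality
      (¬ ∃ π' : Fin 2 → Finset ι,
        (∀ i, π' i ⊆ O) ∧
        (∀ i j : Fin 2, i ≠ j → Disjoint (π' i) (π' j)) ∧
        (Finset.univ.biUnion π' = O) ∧
        (∀ i : Fin 2, ∑ o ∈ π i, u i o ≤ ∑ o ∈ π' i, u i o) ∧
        (∃ i : Fin 2, ∑ o ∈ π i, u i o < ∑ o ∈ π' i, u i o)) ∧
      -- EF1
      (∀ i j : Fin 2,
        (∑ o ∈ π j, u i o ≤ ∑ o ∈ π i, u i o) ∨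
        (∃ o ∈ π i ∪ π j,
          ∑ p ∈ (π j).erase o, u i p ≤ ∑ p ∈ (π i).erase o, u i p)) := by
  classical
  -- the sorted list of "switching" items
  obtain ⟨L, hmem, hnd, hsort⟩ : ∃ L : List ι,
      (∀ o, o ∈ L ↔ o ∈ O ∧ (good (u 0) (u 1) o ∨ bad (u 0) (u 1) o)) ∧
      L.Nodup ∧
      (∀ i j : Fin L.length, i.1 ≤ j.1 → tt (u 0) (u 1) (L.get i) ≤ tt (u 0) (u 1) (L.get j)) := by
    refine ⟨((O.filter (fun o => good (u 0) (u 1) o ∨ bad (u 0) (u 1) o)).toList).mergeSort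
      (fun a b => decide (tt (u 0) (u 1) a ≤ tt (u 0) (u 1) b)), ?_, ?_, ?_⟩
    · intro o
      rw [(List.mergeSort_perm _ _).mem_iff, Finset.mem_toList, Finset.mem_filter]
    · exact (List.mergeSort_perm _ _).nodup_iff.mpr (Finset.nodup_toList _)
    · have hpair := List.pairwise_mergeSort
        (le := fun a b => decide (tt (u 0) (u 1) a ≤ tt (u 0) (u 1) b))
        (fun a b c hab hbc => by
          simp only [decide_eq_true_eq] at *
          exact le_trans hab hbc)
        (fun a b => by
          simp only [Bool.or_eq_true, decide_eq_true_eq]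
          exact le_total _ _)
        ((O.filter (fun o => good (u 0) (u 1) o ∨ bad (u 0) (u 1) o)).toList)
      intro i j hij
      rcases eq_or_lt_of_le hij with h | h
      · have : i = j := Fin.ext h
        subst this; exact le_rfl
      · have := List.pairwise_iff_get.mp hpair i j (Fin.lt_def.mpr h)
        simpa only [decide_eq_true_eq] using this
  -- notation
  have hAsub : ∀ k, Aset (u 0) (u 1) O L k ⊆ O := fun k => Aset_subset
  -- the EF1-for-agent-0 predicate
  let P : ℕ → Prop := fun k =>
    (∑ o ∈ O \ Aset (u 0) (u 1) O L k, u 0 o ≤ ∑ o ∈ Aset (u 0) (u 1) O L k, u 0 o) ∨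
    ∃ o ∈ O, ∑ p ∈ (O \ Aset (u 0) (u 1) O L k).erase o, u 0 p ≤
      ∑ p ∈ (Aset (u 0) (u 1) O L k).erase o, u 0 p
  have hPtop : P L.length := by
    left
    obtain ⟨hs1, hs2⟩ := signs_top hmem
    calc ∑ o ∈ O \ Aset (u 0) (u 1) O L L.length, u 0 o ≤ 0 :=
          Finset.sum_nonpos (fun o ho => hs2 o ho)
      _ ≤ ∑ o ∈ Aset (u 0) (u 1) O L L.length, u 0 o :=
          Finset.sum_nonneg (fun o ho => hs1 o ho)
  have hex : ∃ k, P k := ⟨L.length, hPtop⟩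
  have hk0le : Nat.find hex ≤ L.length := Nat.find_le hPtop
  have hPk0 :
    (∑ o ∈ O \ Aset (u 0) (u 1) O L (Nat.find hex), u 0 o ≤
      ∑ o ∈ Aset (u 0) (u 1) O L (Nat.find hex), u 0 o) ∨
    ∃ o ∈ O, ∑ p ∈ (O \ Aset (u 0) (u 1) O L (Nat.find hex)).erase o, u 0 p ≤
      ∑ p ∈ (Aset (u 0) (u 1) O L (Nat.find hex)).erase o, u 0 p := Nat.find_spec hex
  obtain ⟨t, ht0, ht1, hIk, hIprev⟩ := itemwise hmem hsort hk0le
  set k0 := Nat.find hex with hk0def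
  set A : Finset ι := Aset (u 0) (u 1) O L k0 with hAdef
  refine ⟨![A, O \ A], ?_, ?_, ?_, ?_, ?_⟩
  · intro i
    fin_cases i
    · simpa using hAsub k0
    · simpa using Finset.sdiff_subset
  · intro i j hij
    fin_cases i <;> fin_cases j
    · exact absurd rfl hij
    · simpa using Finset.sdiff_disjoint.symm
    · simpa using Finset.sdiff_disjoint
    · exact absurd rfl hij
  · ext x
    simp only [Finset.mem_biUnion, Finset.mem_univ, true_and, Fin.exists_fin_two,
      Matrix.cons_val_zero, Matrix.cons_val_one, Matrix.head_cons, Finset.mem_sdiff]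
    constructor
    · rintro (h | ⟨h, -⟩)
      · exact hAsub k0 h
      · exact h
    · intro hx
      by_cases h : x ∈ A
      · exact Or.inl h
      · exact Or.inr ⟨hx, h⟩
  -- Pareto optimality
  · rintro ⟨π', hsub', hdisj', hcov', hwk, i, hstr⟩
    have hd : Disjoint (π' 0) (π' 1) := hdisj' 0 1 (by decide)
    have hcov2 : π' 0 ∪ π' 1 = O := by
      rw [← hcov']
      ext x
      simp [Fin.exists_fin_two]
    have hwk0 := hwk 0
    have hwk1 := hwk 1
    simp only [Matrix.cons_val_zero, Matrix.cons_val_one, Matrix.head_cons] at hwk0 hwk1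
    obtain ⟨hb1, hb2⟩ := no_improve (hAsub k0) ht0 ht1 hIk hd hcov2 hwk0 hwk1
    fin_cases i
    · simp only [Matrix.cons_val_zero] at hstr
      exact absurd hstr (not_lt.mpr hb1)
    · simp only [Matrix.cons_val_one, Matrix.head_cons] at hstr
      exact absurd hstr (not_lt.mpr hb2)
  -- EF1
  · intro i j
    fin_cases i <;> fin_cases j
    · exact Or.inl le_rfl
    · -- agent 0 versus agent 1
      show (∑ x ∈ O \ A, u 0 x ≤ ∑ x ∈ A, u 0 x) ∨
        ∃ o ∈ A ∪ (O \ A), ∑ p ∈ (O \ A).erase o, u 0 p ≤ ∑ p ∈ A.erase o, u 0 p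
      rcases hPk0 with h | ⟨o, hoO, hle⟩
      · exact Or.inl h
      · refine Or.inr ⟨o, ?_, hle⟩
        rw [Finset.mem_union]
        by_cases hoA : o ∈ A
        · exact Or.inl hoA
        · exact Or.inr (Finset.mem_sdiff.mpr ⟨hoO, hoA⟩)
    · -- agent 1 versus agent 0
      show (∑ x ∈ A, u 1 x ≤ ∑ x ∈ O \ A, u 1 x) ∨
        ∃ o ∈ (O \ A) ∪ A, ∑ p ∈ A.erase o, u 1 p ≤ ∑ p ∈ (O \ A).erase o, u 1 p
      rcases Nat.eq_zero_or_pos k0 with hk00 | hk0pos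
      · left
        obtain ⟨hs1, hs2⟩ := signs_bot hmem
        rw [hAdef, hk00]
        calc ∑ o ∈ Aset (u 0) (u 1) O L 0, u 1 o ≤ 0 :=
              Finset.sum_nonpos (fun o ho => hs1 o ho)
          _ ≤ ∑ o ∈ O \ Aset (u 0) (u 1) O L 0, u 1 o :=
              Finset.sum_nonneg (fun o ho => hs2 o ho)
      · -- k0 ≥ 1
        have hh : k0 - 1 < L.length := by omega
        set o : ι := L.get ⟨k0 - 1, hh⟩ with hodef
        have hoL : o ∈ L := L.get_mem _
        have hoO : o ∈ O := ((hmem o).mp hoL).1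
        have hsw : good (u 0) (u 1) o ∨ bad (u 0) (u 1) o := ((hmem o).mp hoL).2
        have hnP : ¬ ((∑ x ∈ O \ Aset (u 0) (u 1) O L (k0 - 1), u 0 x ≤
              ∑ x ∈ Aset (u 0) (u 1) O L (k0 - 1), u 0 x) ∨
            ∃ x ∈ O, ∑ p ∈ (O \ Aset (u 0) (u 1) O L (k0 - 1)).erase x, u 0 p ≤
              ∑ p ∈ (Aset (u 0) (u 1) O L (k0 - 1)).erase x, u 0 p) :=
          Nat.find_min hex (by omega)
        push_neg at hnP
        have hstro := hnP.2 o hoO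
        have hIp : Ineq (u 0) (u 1) O t (Aset (u 0) (u 1) O L (k0 - 1)) := hIprev (by omega)
        have hk0eq : (k0 - 1) + 1 = k0 := by omega
        set A' : Finset ι := Aset (u 0) (u 1) O L (k0 - 1) with hA'def
        rcases hsw with hg | hb
        · -- good item was transferred to agent 0
          obtain ⟨hno, heq⟩ := step_good (O := O) hnd hh hoO hg
          have heq' : A = insert o A' := by
            rw [hAdef, ← hk0eq]
            exact heq
          have hnsd : o ∉ O \ A :=
            fun hm => (Finset.mem_sdiff.mp hm).2 (heq' ▸ Finset.mem_insert_self o _)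
          have hsd : O \ A = (O \ A').erase o := by rw [heq', Finset.sdiff_insert]
          have herase1 : A.erase o = A' := by rw [heq', Finset.erase_insert hno]
          have hstro' : ∑ p ∈ A', u 0 p < ∑ p ∈ O \ A, u 0 p := by
            rw [hsd]
            rw [Finset.erase_eq_of_notMem hno] at hstro
            exact hstro
          have s1 : (1 - t) * ∑ p ∈ A', u 1 p ≤ t * ∑ p ∈ A', u 0 p := by
            rw [Finset.mul_sum, Finset.mul_sum]
            exact Finset.sum_le_sum (fun p hp => hIp.1 p hp)
          have s2 : t * ∑ p ∈ O \ A, u 0 p ≤ (1 - t) * ∑ p ∈ O \ A, u 1 p := by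
            rw [Finset.mul_sum, Finset.mul_sum]
            refine Finset.sum_le_sum (fun p hp => ?_)
            obtain ⟨hpO, hpn⟩ := Finset.mem_sdiff.mp hp
            exact hIp.2 p hpO (fun hm => hpn (heq' ▸ Finset.mem_insert_of_mem hm))
          have s3 : t * ∑ p ∈ A', u 0 p < t * ∑ p ∈ O \ A, u 0 p :=
            mul_lt_mul_of_pos_left hstro' ht0
          have final : ∑ p ∈ A', u 1 p ≤ ∑ p ∈ O \ A, u 1 p := by
            have h5 : (1 - t) * ∑ p ∈ A', u 1 p ≤ (1 - t) * ∑ p ∈ O \ A, u 1 p := by linarith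
            exact le_of_mul_le_mul_left h5 (by linarith)
          refine Or.inr ⟨o, ?_, ?_⟩
          · rw [Finset.mem_union]
            exact Or.inr (heq' ▸ Finset.mem_insert_self o _)
          · rw [herase1, Finset.erase_eq_of_notMem hnsd]
            exact final
        · -- bad item was transferred to agent 1
          obtain ⟨hin, heq⟩ := step_bad (O := O) hnd hh hoO hb
          have heq' : A = A'.erase o := by
            rw [hAdef, ← hk0eq]
            exact heq
          have hnAk0 : o ∉ A := heq' ▸ Finset.notMem_erase o _
          have hoπ1 : o ∈ O \ A := Finset.mem_sdiff.mpr ⟨hoO, hnAk0⟩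
          have herase0 : A.erase o = A'.erase o := by
            rw [Finset.erase_eq_of_notMem hnAk0, heq']
          have hsd : (O \ A).erase o = O \ A' := by
            rw [heq']
            ext x
            constructor
            · intro hx
              have hxo := (Finset.mem_erase.mp hx).1
              obtain ⟨hxO, hxnA⟩ := Finset.mem_sdiff.mp (Finset.mem_erase.mp hx).2
              exact Finset.mem_sdiff.mpr
                ⟨hxO, fun hxA => hxnA (Finset.mem_erase.mpr ⟨hxo, hxA⟩)⟩
            · intro hx
              obtain ⟨hxO, hxnA⟩ := Finset.mem_sdiff.mp hx
              have hxo : x ≠ o := fun h => hxnA (h ▸ hin)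
              exact Finset.mem_erase.mpr ⟨hxo, Finset.mem_sdiff.mpr
                ⟨hxO, fun hh' => hxnA (Finset.mem_of_mem_erase hh')⟩⟩
          have hstro' : ∑ p ∈ A'.erase o, u 0 p < ∑ p ∈ O \ A', u 0 p := by
            rwa [Finset.erase_eq_of_notMem
              (fun hm => (Finset.mem_sdiff.mp hm).2 hin)] at hstro
          have s1 : (1 - t) * ∑ p ∈ A'.erase o, u 1 p ≤ t * ∑ p ∈ A'.erase o, u 0 p := by
            rw [Finset.mul_sum, Finset.mul_sum]
            exact Finset.sum_le_sum (fun p hp => hIp.1 p (Finset.mem_of_mem_erase hp))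
          have s2 : t * ∑ p ∈ O \ A', u 0 p ≤ (1 - t) * ∑ p ∈ O \ A', u 1 p := by
            rw [Finset.mul_sum, Finset.mul_sum]
            refine Finset.sum_le_sum (fun p hp => ?_)
            obtain ⟨hpO, hpn⟩ := Finset.mem_sdiff.mp hp
            exact hIp.2 p hpO hpn
          have s3 : t * ∑ p ∈ A'.erase o, u 0 p < t * ∑ p ∈ O \ A', u 0 p :=
            mul_lt_mul_of_pos_left hstro' ht0
          have final : ∑ p ∈ A'.erase o, u 1 p ≤ ∑ p ∈ O \ A', u 1 p := by
            have h5 : (1 - t) * ∑ p ∈ A'.erase o, u 1 p ≤ (1 - t) * ∑ p ∈ O \ A', u 1 p := by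
              linarith
            exact le_of_mul_le_mul_left h5 (by linarith)
          refine Or.inr ⟨o, ?_, ?_⟩
          · rw [Finset.mem_union]
            exact Or.inl hoπ1
          · rw [herase0, hsd]
            exact final
    · exact Or.inl le_rfl
end

section
/- Let O = (o_1,…,o_m) be items placed on a line and let n agents have additive utilities u_i : O → ℝ. Consider the mixed cake [0,m] where agent i has constant value density u_i(o_j) on the subinterval [j−1, j] for each j ∈ {1,…,m}, so that agent i's value of a subinterval [a,b] ⊆ [0,m] is V_i([a,b]) = ∑_{j=1}^m u_i(o_j)·length([a,b] ∩ [j−1,j]). Then there exist cut points 0 = x_0 ≤ x_1 ≤ ⋯ ≤ x_n = m and a bijection σ from the agents to {1,…,n} such that for every agent i, V_i([x_{σ(i)−1}, x_{σ(i)}]) ≥ V_i([0,m])/n; that is, a contiguous proportional allocation of the mixed cake exists. -/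
/-- The value of the subinterval `[a,b]` of the mixed cake `[0,m]` for an agent with
piecewise-constant density: density `u j` on the unit interval `[j, j+1]` for
`j = 0, …, m-1` (these are the items `o_1, …, o_m`). -/
noncomputable def pieceValue (m : ℕ) (u : Fin m → ℝ) (a b : ℝ) : ℝ :=
  ∑ j : Fin m, u j * max 0 (min b ((j : ℝ) + 1) - max a (j : ℝ))

lemma pieceValue_self (m : ℕ) (u : Fin m → ℝ) (a : ℝ) : pieceValue m u a a = 0 := by
  unfold pieceValue
  apply Finset.sum_eq_zero
  intro j _
  have h1 : min a ((j : ℝ) + 1) - max a (j : ℝ) ≤ 0 := by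
    have h2 := min_le_left a ((j : ℝ) + 1)
    have h3 := le_max_left a (j : ℝ)
    linarith
  rw [max_eq_left h1, mul_zero]

lemma seg_add {a t b c e : ℝ} (h1 : a ≤ t) (h2 : t ≤ b) :
    max 0 (min b e - max a c) = max 0 (min t e - max a c) + max 0 (min b e - max t c) := by
  rcases le_total t c with h | h
  · have hac : max a c = c := max_eq_right (h1.trans h)
    have htc : max t c = c := max_eq_right h
    have h3 : min t e - c ≤ 0 := by
      have := min_le_left t e; linarith
    rw [hac, htc, max_eq_left h3, zero_add]
  · rcases le_total e t with h' | h'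
    · have h3 : min t e = e := min_eq_right h'
      have h4 : min b e = e := min_eq_right (h'.trans h2)
      have h5 : e - max t c ≤ 0 := by
        have := le_max_left t c; linarith
      rw [h3, h4, max_eq_left h5, add_zero]
    · have h3 : max t c = t := max_eq_left h
      have h4 : min t e = t := min_eq_left h'
      have h5 : max a c ≤ t := max_le h1 h
      have h6 : t ≤ min b e := le_min h2 h'
      rw [h3, h4]
      rw [max_eq_right (by linarith : (0:ℝ) ≤ t - max a c),
        max_eq_right (by linarith : (0:ℝ) ≤ min b e - t),
        max_eq_right (by linarith : (0:ℝ) ≤ min b e - max a c)]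
      ring

lemma pieceValue_add (m : ℕ) (u : Fin m → ℝ) {a t b : ℝ} (h1 : a ≤ t) (h2 : t ≤ b) :
    pieceValue m u a b = pieceValue m u a t + pieceValue m u t b := by
  unfold pieceValue
  rw [← Finset.sum_add_distrib]
  refine Finset.sum_congr rfl fun j _ => ?_
  rw [← mul_add, seg_add h1 h2]

lemma pieceValue_continuous (m : ℕ) (u : Fin m → ℝ) (a : ℝ) :
    Continuous (fun t => pieceValue m u a t) := by
  unfold pieceValue
  apply continuous_finset_sum
  intro j _
  exact continuous_const.mul
    (continuous_const.max ((continuous_id.min continuous_const).sub continuous_const))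

/-- The key topological step: if each agent values the whole `[a,b]` at least `(s'+1)`
times her demand, and all demands have the same sign, then there is a cut `t` and an
agent `i0` such that `i0` is happy with `[a,t]` and all others can still share `[t,b]`. -/
lemma good_t (s' : ℕ) (hs : 1 ≤ s') (d : Fin (s' + 1) → ℝ) (f : Fin (s' + 1) → ℝ → ℝ)
    (hf : ∀ i, Continuous (f i)) (a b : ℝ) (hab : a ≤ b) (hfa : ∀ i, f i a = 0)
    (hinv : ∀ i, ((s' : ℝ) + 1) * d i ≤ f i b)
    (hsign : (∀ i, 0 < d i) ∨ (∀ i, d i ≤ 0)) :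
    ∃ t ∈ Set.Icc a b, ∃ i0, d i0 ≤ f i0 t ∧
      ∀ j, j ≠ i0 → f j t ≤ f j b - (s' : ℝ) * d j := by
  by_contra hcon
  push_neg at hcon
  set L : Set ℝ := {t : ℝ | ∀ i, f i t < d i} with hL
  set R : Set ℝ := {t : ℝ | ∃ i j, i ≠ j ∧
      (f i b - (s' : ℝ) * d i < f i t) ∧ (f j b - (s' : ℝ) * d j < f j t)} with hR
  have hLopen : IsOpen L := by
    have : L = ⋂ i, (f i) ⁻¹' Set.Iio (d i) := by
      ext t; simp [hL, Set.mem_iInter]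
    rw [this]
    exact isOpen_iInter_of_finite fun i => (isOpen_Iio).preimage (hf i)
  have hRopen : IsOpen R := by
    have : R = ⋃ i, ⋃ j, ⋃ (_ : i ≠ j),
        ((f i) ⁻¹' Set.Ioi (f i b - (s' : ℝ) * d i) ∩
         (f j) ⁻¹' Set.Ioi (f j b - (s' : ℝ) * d j)) := by
      ext t
      simp only [hR, Set.mem_setOf_eq, Set.mem_iUnion, Set.mem_inter_iff, Set.mem_preimage,
        Set.mem_Ioi]
      tauto
    rw [this]
    exact isOpen_iUnion fun i => isOpen_iUnion fun j => isOpen_iUnion fun _ =>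
      ((isOpen_Ioi).preimage (hf i)).inter ((isOpen_Ioi).preimage (hf j))
  have hcover : Set.Icc a b ⊆ L ∪ R := by
    intro t ht
    by_cases hRt : t ∈ R
    · exact Or.inr hRt
    · refine Or.inl fun i => ?_
      by_contra hi
      push_neg at hi
      by_cases hEx : ∃ j, f j b - (s' : ℝ) * d j < f j t
      · obtain ⟨j0, hj0⟩ := hEx
        have hd : d j0 ≤ f j0 t := by
          have := hinv j0; linarith
        obtain ⟨k, hk, hk2⟩ := hcon t ht j0 hd
        exact hRt ⟨k, j0, hk, hk2, hj0⟩
      · push_neg at hEx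
        obtain ⟨k, hk, hk2⟩ := hcon t ht i hi
        exact absurd hk2 (not_lt.2 (hEx k))
  have hdisj : ∀ t, t ∈ L → t ∈ R → False := by
    intro t htL htR
    obtain ⟨i, j, _, hi, _⟩ := htR
    have h1 := htL i
    have h2 := hinv i
    linarith
  have hend : (Set.Icc a b ∩ L).Nonempty ∧ (Set.Icc a b ∩ R).Nonempty := by
    rcases hsign with hp | hn
    · constructor
      · exact ⟨a, ⟨le_refl a, hab⟩, fun i => by rw [hfa i]; exact hp i⟩
      · refine ⟨b, ⟨hab, le_refl b⟩, ?_⟩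
        rcases hcover ⟨hab, le_refl b⟩ with hbL | hbR
        · exfalso
          have h1 := hbL 0
          have h2 := hinv 0
          have h3 := hp 0
          have h4 : (1 : ℝ) ≤ (s' : ℝ) := by exact_mod_cast hs
          nlinarith
        · exact hbR
    · constructor
      · refine ⟨b, ⟨hab, le_refl b⟩, ?_⟩
        rcases hcover ⟨hab, le_refl b⟩ with hbL | hbR
        · exact hbL
        · exfalso
          obtain ⟨i, j, _, hi, _⟩ := hbR
          have : (s' : ℝ) * d i ≤ 0 :=
            mul_nonpos_of_nonneg_of_nonpos (Nat.cast_nonneg _) (hn i)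
          linarith
      · refine ⟨a, ⟨le_refl a, hab⟩, ?_⟩
        rcases hcover ⟨le_refl a, hab⟩ with haL | haR
        · exfalso
          have h1 := haL 0
          rw [hfa 0] at h1
          have := hn 0
          linarith
        · exact haR
  obtain ⟨x, hx⟩ := isPreconnected_Icc (a := a) (b := b) L R hLopen hRopen hcover
    (hend.1.imp fun t ht => ⟨ht.1, ht.2⟩) (hend.2.imp fun t ht => ⟨ht.1, ht.2⟩)
  exact hdisj x hx.2.1 hx.2.2

/-- Assembling: one agent takes `[a, t]` (where `t = y' 0`), the remaining agents use the
recursive solution on `[t, b]`. -/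
lemma assemble (m s : ℕ) (w : Fin (s + 2) → Fin m → ℝ) (d : Fin (s + 2) → ℝ)
    (a b : ℝ) (i0 : Fin (s + 2))
    (y' : ℕ → ℝ) (τ' : Equiv.Perm (Fin (s + 1)))
    (hat : a ≤ y' 0)
    (hi0 : d i0 ≤ pieceValue m (w i0) a (y' 0))
    (hys : y' (s + 1) = b) (hmono : ∀ k, k < s + 1 → y' k ≤ y' (k + 1))
    (hval : ∀ j, d (i0.succAbove j) ≤
      pieceValue m (w (i0.succAbove j)) (y' (τ' j)) (y' ((τ' j : ℕ) + 1))) :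
    ∃ (y : ℕ → ℝ) (τ : Equiv.Perm (Fin (s + 2))),
      y 0 = a ∧ y (s + 2) = b ∧ (∀ k, k < s + 2 → y k ≤ y (k + 1)) ∧
      ∀ i, d i ≤ pieceValue m (w i) (y (τ i)) (y ((τ i : ℕ) + 1)) := by
  refine ⟨fun k => if k = 0 then a else y' (k - 1),
    (finSuccEquiv' i0).trans ((Equiv.optionCongr τ').trans (finSuccEquiv' 0).symm),
    rfl, by simpa using hys, ?_, ?_⟩
  · intro k hk
    cases k with
    | zero => simpa using hat
    | succ k' =>
      simp only [Nat.succ_ne_zero, if_false, Nat.add_sub_cancel]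
      exact hmono k' (by omega)
  · intro i
    by_cases hi : i = i0
    · subst hi
      have hτ : ((finSuccEquiv' i).trans ((Equiv.optionCongr τ').trans
          (finSuccEquiv' 0).symm)) i = 0 := by
        simp [Equiv.trans_apply, finSuccEquiv'_at]
      rw [hτ]
      simpa using hi0
    · obtain ⟨j, rfl⟩ := Fin.exists_succAbove_eq (Ne.symm (fun h => hi h.symm))
      have hτ : ((finSuccEquiv' i0).trans ((Equiv.optionCongr τ').trans
          (finSuccEquiv' 0).symm)) (i0.succAbove j) = (τ' j).succ := by
        simp [Equiv.trans_apply, finSuccEquiv'_succAbove, Fin.succAbove_zero]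
      rw [hτ]
      have h1 : ((τ' j).succ : ℕ) = (τ' j : ℕ) + 1 := rfl
      simp only [h1, Nat.add_sub_cancel, if_neg (Nat.succ_ne_zero _),
        if_neg (Nat.succ_ne_zero _)]
      exact hval j

lemma main (m : ℕ) (s' : ℕ) :
    ∀ (w : Fin (s' + 1) → Fin m → ℝ) (d : Fin (s' + 1) → ℝ) (a b : ℝ),
    a ≤ b →
    (∀ i, 0 < d i → ((s' : ℝ) + 1) * d i ≤ pieceValue m (w i) a b) →
    ((∀ i, d i ≤ 0) → ∀ i, ((s' : ℝ) + 1) * d i ≤ pieceValue m (w i) a b) →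
    ∃ (y : ℕ → ℝ) (τ : Equiv.Perm (Fin (s' + 1))),
      y 0 = a ∧ y (s' + 1) = b ∧ (∀ k, k < s' + 1 → y k ≤ y (k + 1)) ∧
      ∀ i, d i ≤ pieceValue m (w i) (y (τ i)) (y ((τ i : ℕ) + 1)) := by
  induction s' with
  | zero =>
    intro w d a b hab h1 h2
    refine ⟨fun k => if k = 0 then a else b, 1, rfl, rfl, ?_, ?_⟩
    · intro k hk
      interval_cases k
      simpa using hab
    · intro i
      have hval : d i ≤ pieceValue m (w i) a b := by
        rcases lt_or_ge 0 (d i) with h | h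
        · have := h1 i h; push_cast at this; linarith
        · have := h2 (fun j => by
            have hji : j = i := by
              have hj := j.isLt; have hi2 := i.isLt; exact Fin.ext (by omega)
            rwa [hji]) i
          push_cast at this; linarith
      have hτ : (((1 : Equiv.Perm (Fin (0 + 1))) i : ℕ)) = 0 := by
        have := i.isLt
        simp only [Equiv.Perm.one_apply]
        omega
      rw [hτ]
      simpa using hval
  | succ s ih =>
    intro w d a b hab h1 h2
    by_cases hsign : (∀ i, 0 < d i) ∨ (∀ i, d i ≤ 0)
    · -- same-sign case: use the topological cut lemma
      have hinv : ∀ i, (((s : ℝ) + 1) + 1) * d i ≤ pieceValue m (w i) a b := by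
        rcases hsign with hp | hn
        · intro i
          have := h1 i (hp i)
          push_cast at this ⊢
          linarith
        · intro i
          have := h2 hn i
          push_cast at this ⊢
          linarith
      obtain ⟨t, ht, i0, hi0, hrest⟩ := good_t (s + 1) (by omega) d
        (fun i t => pieceValue m (w i) a t)
        (fun i => pieceValue_continuous m (w i) a) a b hab
        (fun i => pieceValue_self m (w i) a)
        (by intro i; push_cast; have := hinv i; linarith) hsign
      have hat : a ≤ t := ht.1
      have htb : t ≤ b := ht.2
      have key : ∀ j : Fin (s + 1), ((s : ℝ) + 1) * d (i0.succAbove j) ≤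
          pieceValue m (w (i0.succAbove j)) t b := by
        intro j
        have hne : i0.succAbove j ≠ i0 := Fin.succAbove_ne i0 j
        have h3 := hrest _ hne
        have hadd := pieceValue_add m (w (i0.succAbove j)) hat htb
        push_cast at h3
        linarith
      obtain ⟨y', τ', hy0, hys, hmono, hval⟩ := ih (fun j => w (i0.succAbove j))
        (fun j => d (i0.succAbove j)) t b htb (fun j _ => key j) (fun _ j => key j)
      exact assemble m s w d a b i0 y' τ' (hy0 ▸ hat) (by rw [hy0]; exact hi0)
        hys hmono hval
    · -- mixed signs: give an empty piece to a non-positive agent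
      push_neg at hsign
      obtain ⟨⟨i0, hi0⟩, ⟨i1, hi1⟩⟩ := hsign
      have key : ∀ j : Fin (s + 1), 0 < d (i0.succAbove j) →
          ((s : ℝ) + 1) * d (i0.succAbove j) ≤
            pieceValue m (w (i0.succAbove j)) a b := by
        intro j hj
        have := h1 (i0.succAbove j) hj
        push_cast at this
        nlinarith
      have hnotall : ¬ (∀ j : Fin (s + 1), d (i0.succAbove j) ≤ 0) := by
        intro hall
        have hne : i1 ≠ i0 := fun h => by rw [h] at hi1; linarith
        obtain ⟨j1, hj1⟩ := Fin.exists_succAbove_eq hne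
        have := hall j1
        rw [hj1] at this
        linarith
      obtain ⟨y', τ', hy0, hys, hmono, hval⟩ := ih (fun j => w (i0.succAbove j))
        (fun j => d (i0.succAbove j)) a b hab (fun j hj => key j hj)
        (fun hall => absurd hall hnotall)
      refine assemble m s w d a b i0 y' τ' (le_of_eq hy0.symm) ?_ hys hmono hval
      rw [hy0, pieceValue_self]
      exact hi0
  
/-- A contiguous proportional allocation of a mixed cake exists:
there are cut points `0 = x_0 ≤ x_1 ≤ ⋯ ≤ x_n = m` and a bijection `σ` of the agents
to the pieces such that every agent values her piece at least `V_i([0,m])/n`. -/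
theorem exists_contiguous_proportional_mixed_cake
    (n m : ℕ) (hn : 0 < n) (u : Fin n → Fin m → ℝ) :
    ∃ (x : ℕ → ℝ) (σ : Equiv.Perm (Fin n)),
      x 0 = 0 ∧ x n = (m : ℝ) ∧
      (∀ k, k < n → x k ≤ x (k + 1)) ∧
      (∀ i : Fin n,
        pieceValue m (u i) 0 (m : ℝ) / n ≤
          pieceValue m (u i) (x (σ i : ℕ)) (x ((σ i : ℕ) + 1))) := by
  obtain ⟨s', rfl⟩ : ∃ s', n = s' + 1 := ⟨n - 1, by omega⟩
  set d : Fin (s' + 1) → ℝ := fun i => pieceValue m (u i) 0 m / ((s' : ℝ) + 1) with hd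
  have hcoef : ∀ i, ((s' : ℝ) + 1) * d i = pieceValue m (u i) 0 m := fun i =>
    mul_div_cancel₀ _ (by positivity)
  obtain ⟨y, τ, h0, hs, hmono, hval⟩ := main m s' u d 0 m (Nat.cast_nonneg m)
    (fun i _ => (hcoef i).le) (fun _ i => (hcoef i).le)
  refine ⟨y, τ, h0, hs, hmono, fun i => ?_⟩
  have h := hval i
  rw [hd] at h
  have hcast : ((s' + 1 : ℕ) : ℝ) = (s' : ℝ) + 1 := by push_cast; ring
  rw [hcast]
  exact h
end

section
/- Let o_1,…,o_m be indivisible items arranged on a path in this order, and let N = {1,…,n} be agents with additive utilities u_i : O → ℝ. Then there exists a complete allocation π in which every bundle π(i) is connected on the path (a set of consecutive items, possibly empty) and which satisfies PROP1: for every agent i, either u_i(π(i)) ≥ u_i(O)/n, or u_i(π(i)) + u_i(o) ≥ u_i(O)/n for some o ∈ O∖π(i), or u_i(π(i)) − u_i(o) ≥ u_i(O)/n for some o ∈ π(i). -/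
open Finset

namespace Prop1Aux

/-- interval of items `[a, b)` inside `Fin m` -/
def itv (m a b : ℕ) : Finset (Fin m) := univ.filter (fun o => a ≤ (o:ℕ) ∧ (o:ℕ) < b)

lemma mem_itv {m a b : ℕ} {o : Fin m} : o ∈ itv m a b ↔ a ≤ (o:ℕ) ∧ (o:ℕ) < b := by
  simp [itv]

lemma itv_eq_empty {m a b : ℕ} (h : b ≤ a) : itv m a b = ∅ := by
  ext o; simp only [mem_itv, notMem_empty, iff_false]; omega

lemma itv_zero_m (m : ℕ) : itv m 0 m = univ := by
  ext o; simp [mem_itv, o.isLt]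

lemma itv_disj {m a b c d : ℕ} (h : b ≤ c) : Disjoint (itv m a b) (itv m c d) := by
  rw [Finset.disjoint_left]; intro o h1 h2
  rw [mem_itv] at h1 h2; omega

lemma itv_union {m a b : ℕ} (h : a ≤ b) : itv m a b ∪ itv m b m = itv m a m := by
  ext o; have := o.isLt
  simp only [mem_union, mem_itv]
  omega

variable {n m : ℕ}

/-- value of the remaining suffix starting at position `c` -/
noncomputable def rem (u : Fin n → Fin m → ℝ) (i : Fin n) (c : ℕ) : ℝ := ∑ o ∈ itv m c m, u i o

lemma rem_def (u : Fin n → Fin m → ℝ) (i : Fin n) (c : ℕ) :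
    rem u i c = ∑ o ∈ itv m c m, u i o := rfl

lemma rem_m (u : Fin n → Fin m → ℝ) (i : Fin n) : rem u i m = 0 := by
  rw [rem, itv_eq_empty le_rfl, sum_empty]

lemma sum_itv (u : Fin n → Fin m → ℝ) (i : Fin n) {a b : ℕ} (h : a ≤ b) :
    ∑ o ∈ itv m a b, u i o = rem u i a - rem u i b := by
  have hd : Disjoint (itv m a b) (itv m b m) := itv_disj le_rfl
  have hu : itv m a b ∪ itv m b m = itv m a m := itv_union h
  have hs := Finset.sum_union hd (f := u i)
  rw [hu] at hs
  rw [rem_def, rem_def]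
  linarith

lemma rem_succ (u : Fin n → Fin m → ℝ) (i : Fin n) {c : ℕ} (hc : c < m) :
    rem u i c = u i ⟨c, hc⟩ + rem u i (c+1) := by
  have he : itv m c m = insert (⟨c, hc⟩ : Fin m) (itv m (c+1) m) := by
    ext o; have := o.isLt
    rw [mem_itv, mem_insert, mem_itv]
    simp only [Fin.ext_iff, Fin.val_mk]
    omega
  have hni : (⟨c, hc⟩ : Fin m) ∉ itv m (c+1) m := by
    rw [mem_itv]; simp only [Fin.val_mk]; omega
  rw [rem, he, Finset.sum_insert hni, rem]

/-- credit: best value among items strictly before position `c` (or 0). -/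
noncomputable def cred (u : Fin n → Fin m → ℝ) (i : Fin n) (c : ℕ) : ℝ :=
  (insert (0:ℝ) ((univ.filter (fun o : Fin m => (o:ℕ) < c)).image (u i))).max'
    (insert_nonempty _ _)

lemma cred_nonneg (u : Fin n → Fin m → ℝ) (i : Fin n) (c : ℕ) : 0 ≤ cred u i c :=
  le_max' _ _ (mem_insert_self _ _)

lemma cred_mono (u : Fin n → Fin m → ℝ) (i : Fin n) {c c' : ℕ} (h : c ≤ c') :
    cred u i c ≤ cred u i c' := by
  apply Finset.max'_subset
  intro x hx
  rcases mem_insert.mp hx with h0 | hx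
  · exact mem_insert.mpr (Or.inl h0)
  · obtain ⟨o, ho, rfl⟩ := mem_image.mp hx
    refine mem_insert.mpr (Or.inr (mem_image.mpr ⟨o, ?_, rfl⟩))
    simp only [mem_filter, mem_univ, true_and] at ho ⊢
    omega

lemma cred_attain (u : Fin n → Fin m → ℝ) (i : Fin n) (c : ℕ) :
    cred u i c = 0 ∨ ∃ o : Fin m, (o:ℕ) < c ∧ u i o = cred u i c := by
  have hmem := Finset.max'_mem
    (insert (0:ℝ) ((univ.filter (fun o : Fin m => (o:ℕ) < c)).image (u i)))
    (insert_nonempty _ _)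
  rcases mem_insert.mp hmem with h0 | h1
  · exact Or.inl h0
  · obtain ⟨o, ho, he⟩ := mem_image.mp h1
    simp only [mem_filter, mem_univ, true_and] at ho
    exact Or.inr ⟨o, ho, he⟩

lemma cred_zero (u : Fin n → Fin m → ℝ) (i : Fin n) : cred u i 0 = 0 := by
  rcases cred_attain u i 0 with h | ⟨o, ho, _⟩
  · exact h
  · omega

/-- proportional share -/
noncomputable def tgt (n : ℕ) {m : ℕ} (u : Fin n → Fin m → ℝ) (i : Fin n) : ℝ := (∑ o : Fin m, u i o) / n

/-- PROP1 happiness of agent `i` with bundle `B`. -/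
def happy (n : ℕ) {m : ℕ} (u : Fin n → Fin m → ℝ) (i : Fin n) (B : Finset (Fin m)) : Prop :=
  (tgt n u i ≤ ∑ o ∈ B, u i o) ∨
  (∃ o ∈ univ \ B, tgt n u i ≤ (∑ p ∈ B, u i p) + u i o) ∨
  (∃ o ∈ B, tgt n u i ≤ (∑ p ∈ B, u i p) - u i o)

lemma happy_of_credit {u : Fin n → Fin m → ℝ} {i : Fin n} {B : Finset (Fin m)} {c : ℕ}
    (h : tgt n u i ≤ (∑ o ∈ B, u i o) + cred u i c)
    (hB : ∀ o ∈ B, c ≤ (o:ℕ)) : happy n u i B := by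
  rcases cred_attain u i c with h0 | ⟨o, hoc, hou⟩
  · left; rw [h0, add_zero] at h; exact h
  · right; left
    refine ⟨o, mem_sdiff.mpr ⟨mem_univ _, fun hoB => absurd (hB o hoB) (by omega)⟩, ?_⟩
    rw [hou]; exact h

lemma assemble (u : Fin n → Fin m → ℝ) {A : Finset (Fin n)} {i : Fin n} (hi : i ∈ A)
    {s c : ℕ} (hsc : s ≤ c)
    {π' : Fin n → Finset (Fin m)}
    (h1 : ∀ j, j ∉ A.erase i → π' j = ∅)
    (h2 : ∀ j, ∃ a b : ℕ, π' j = itv m a b)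
    (h3 : ∀ j j', j ≠ j' → Disjoint (π' j) (π' j'))
    (h4 : univ.biUnion π' = itv m c m)
    (h5 : ∀ j ∈ A.erase i, happy n u j (π' j))
    (h6 : happy n u i (itv m s c)) :
    ∃ π : Fin n → Finset (Fin m),
      (∀ j, j ∉ A → π j = ∅) ∧ (∀ j, ∃ a b : ℕ, π j = itv m a b) ∧
      (∀ j j', j ≠ j' → Disjoint (π j) (π j')) ∧
      (univ.biUnion π = itv m s m) ∧ (∀ j ∈ A, happy n u j (π j)) := by
  classical
  have hsub : ∀ j, π' j ⊆ itv m c m := fun j =>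
    h4 ▸ subset_biUnion_of_mem π' (mem_univ j)
  refine ⟨fun j => if j = i then itv m s c else π' j, ?_, ?_, ?_, ?_, ?_⟩
  · intro j hj
    dsimp only
    have hji : j ≠ i := fun h => hj (h ▸ hi)
    rw [if_neg hji]
    exact h1 j (fun hj' => hj (mem_of_mem_erase hj'))
  · intro j; by_cases hj : j = i
    · exact ⟨s, c, by dsimp only; rw [if_pos hj]⟩
    · obtain ⟨a, b, hab⟩ := h2 j; exact ⟨a, b, by dsimp only; rw [if_neg hj, hab]⟩
  · intro j j' hne; dsimp only; by_cases hj : j = i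
    · rw [if_pos hj, if_neg (fun h => hne (hj.trans h.symm))]
      exact (itv_disj le_rfl).mono_right (hsub j')
    · rw [if_neg hj]; by_cases hj' : j' = i
      · rw [if_pos hj']
        exact ((itv_disj le_rfl).mono_right (hsub j)).symm
      · rw [if_neg hj']; exact h3 j j' hne
  · ext o
    simp only [mem_biUnion, mem_univ, true_and]
    rw [← itv_union (m := m) hsc, mem_union]
    constructor
    · rintro ⟨j, hj⟩
      by_cases h : j = i
      · rw [if_pos h] at hj; exact Or.inl hj
      · rw [if_neg h] at hj; exact Or.inr (hsub j hj)
    · rintro (h | h)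
      · exact ⟨i, by rw [if_pos rfl]; exact h⟩
      · rw [← h4] at h; obtain ⟨j, _, hj⟩ := mem_biUnion.mp h
        refine ⟨j, ?_⟩
        by_cases hji : j = i
        · rw [hji] at hj; rw [h1 i (notMem_erase i A)] at hj
          exact absurd hj (notMem_empty o)
        · rw [if_neg hji]; exact hj
  · intro j hj; dsimp only; by_cases h : j = i
    · rw [if_pos h, h]; exact h6
    · rw [if_neg h]; exact h5 j (mem_erase.mpr ⟨h, hj⟩)


lemma core (hn : 0 < n) (u : Fin n → Fin m → ℝ) (k : ℕ) :
    ∀ (A : Finset (Fin n)) (s : ℕ), A.card = k → A.Nonempty → s ≤ m →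
      ((∀ i ∈ A, 0 < tgt n u i) ∨ (∀ i ∈ A, tgt n u i ≤ 0)) →
      (∀ i ∈ A, (k : ℝ) * tgt n u i ≤ rem u i s + cred u i s) →
      ∃ π : Fin n → Finset (Fin m),
        (∀ j, j ∉ A → π j = ∅) ∧
        (∀ j, ∃ a b : ℕ, π j = itv m a b) ∧
        (∀ j j', j ≠ j' → Disjoint (π j) (π j')) ∧
        (univ.biUnion π = itv m s m) ∧
        (∀ j ∈ A, happy n u j (π j)) := by
  classical
  induction k with
  | zero =>
      intro A s hcard hne
      exact absurd hcard (by simpa using hne.card_pos.ne')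
  | succ k ih =>
      intro A s hcard hne hs hsign hInv
      have hInv' : ∀ i ∈ A, ((k:ℝ)+1) * tgt n u i ≤ rem u i s + cred u i s := by
        intro i hi; have := hInv i hi; push_cast at this; linarith
      rcases Nat.eq_zero_or_pos k with hk | hk
      · -- one agent left: give it the whole remaining window
        obtain ⟨i0, hA⟩ := card_eq_one.mp (by rw [hcard, hk])
        have hi0 : i0 ∈ A := by rw [hA]; exact mem_singleton_self i0
        refine ⟨fun j => if j = i0 then itv m s m else ∅, ?_, ?_, ?_, ?_, ?_⟩
        · intro j hj; dsimp only
          have hji : j ≠ i0 := fun h => hj (h ▸ hi0)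
          rw [if_neg hji]
        · intro j; dsimp only; by_cases hj : j = i0
          · exact ⟨s, m, by rw [if_pos hj]⟩
          · exact ⟨0, 0, by rw [if_neg hj, itv_eq_empty le_rfl]⟩
        · intro j j' hne'; dsimp only; by_cases hj : j = i0
          · rw [if_pos hj, if_neg (fun h => hne' (hj.trans h.symm))]
            exact disjoint_empty_right _
          · rw [if_neg hj]
            exact disjoint_empty_left _
        · ext o
          simp only [mem_biUnion, mem_univ, true_and]
          constructor
          · rintro ⟨j, hj⟩
            by_cases h : j = i0
            · rwa [if_pos h] at hj
            · rw [if_neg h] at hj; exact absurd hj (notMem_empty o)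
          · intro h; exact ⟨i0, by rw [if_pos rfl]; exact h⟩
        · intro j hj
          rw [hA, mem_singleton] at hj
          subst hj
          dsimp only; rw [if_pos rfl]
          have h1 := hInv' j hi0
          rw [hk] at h1; push_cast at h1
          refine happy_of_credit (c := s) ?_ ?_
          · rw [← rem_def]; linarith
          · intro o ho; exact (mem_itv.mp ho).1
      · -- at least two agents left
        rcases hsign with hpos | hneg
        · -- positive world
          have hPs : ∀ j ∈ A, (k:ℝ) * tgt n u j ≤ rem u j s + cred u j s := by
            intro j hj
            have h1 := hInv' j hj
            have h2 := hpos j hj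
            nlinarith
          by_cases hex : ∃ c, (∃ j ∈ A, rem u j c + cred u j c < (k:ℝ) * tgt n u j)
              ∧ s ≤ c ∧ c ≤ m
          · -- goods-style exit at the last safe cut
            obtain ⟨cm, ⟨⟨i, hiA, hilt⟩, hscm, hcmm⟩, hcmmin⟩ :
                ∃ cm, ((∃ j ∈ A, rem u j cm + cred u j cm < (k:ℝ) * tgt n u j)
                    ∧ s ≤ cm ∧ cm ≤ m) ∧
                  ∀ c, c < cm →
                    ¬((∃ j ∈ A, rem u j c + cred u j c < (k:ℝ) * tgt n u j)
                      ∧ s ≤ c ∧ c ≤ m) :=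
              ⟨Nat.find hex, Nat.find_spec hex, fun c hc => Nat.find_min hex hc⟩
            have hcms : s < cm := by
              rcases eq_or_lt_of_le hscm with h | h
              · exfalso; rw [← h] at hilt; linarith [hPs i hiA]
              · exact h
            have hc1m : cm - 1 < m := by omega
            have hgood : ∀ j ∈ A, (k:ℝ) * tgt n u j ≤ rem u j (cm-1) + cred u j (cm-1) := by
              by_contra hbad
              push_neg at hbad
              obtain ⟨j, hjA, hjlt⟩ := hbad
              exact hcmmin (cm-1) (by omega) ⟨⟨j, hjA, hjlt⟩, by omega, by omega⟩
            obtain ⟨π', p1, p2, p3, p4, p5⟩ := ih (A.erase i) (cm - 1)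
              (by rw [card_erase_of_mem hiA, hcard]; omega)
              (card_pos.mp (by rw [card_erase_of_mem hiA, hcard]; omega))
              (by omega)
              (Or.inl fun j hj => hpos j (mem_of_mem_erase hj))
              (fun j hj => hgood j (mem_of_mem_erase hj))
            have hstep : rem u i (cm-1) = u i ⟨cm-1, hc1m⟩ + rem u i cm := by
              have h := rem_succ u i hc1m
              rw [show cm - 1 + 1 = cm by omega] at h; exact h
            have hsum : ∑ o ∈ itv m s (cm-1), u i o = rem u i s - rem u i (cm-1) :=
              sum_itv u i (by omega)
            have hcm1 : cred u i s ≤ cred u i cm := cred_mono u i (by omega)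
            have hhappy : happy n u i (itv m s (cm-1)) := by
              right; left
              refine ⟨⟨cm-1, hc1m⟩, ?_, ?_⟩
              · rw [mem_sdiff, mem_itv]
                exact ⟨mem_univ _, by simp only [Fin.val_mk]; omega⟩
              · have h1 := hInv' i hiA
                rw [hsum]
                linarith [hstep]
            exact assemble u hiA (by omega) p1 p2 p3 p4 p5 hhappy
          · -- no unsafe cut at all: one agent takes everything, rest are credit-happy
            have hcm : ∀ j ∈ A, (k:ℝ) * tgt n u j ≤ cred u j m := by
              intro j hj
              by_contra hlt
              push_neg at hlt
              exact hex ⟨m, ⟨j, hj, by rw [rem_m]; linarith⟩, hs, le_rfl⟩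
            obtain ⟨i0, hi0⟩ := hne
            refine ⟨fun j => if j = i0 then itv m s m else ∅, ?_, ?_, ?_, ?_, ?_⟩
            · intro j hj; dsimp only
              have hji : j ≠ i0 := fun h => hj (h ▸ hi0)
              rw [if_neg hji]
            · intro j; dsimp only; by_cases hj : j = i0
              · exact ⟨s, m, by rw [if_pos hj]⟩
              · exact ⟨0, 0, by rw [if_neg hj, itv_eq_empty le_rfl]⟩
            · intro j j' hne'; dsimp only; by_cases hj : j = i0
              · rw [if_pos hj, if_neg (fun h => hne' (hj.trans h.symm))]
                exact disjoint_empty_right _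
              · rw [if_neg hj]
                exact disjoint_empty_left _
            · ext o
              simp only [mem_biUnion, mem_univ, true_and]
              constructor
              · rintro ⟨j, hj⟩
                by_cases h : j = i0
                · rwa [if_pos h] at hj
                · rw [if_neg h] at hj; exact absurd hj (notMem_empty o)
              · intro h; exact ⟨i0, by rw [if_pos rfl]; exact h⟩
            · intro j hj; dsimp only; by_cases h : j = i0
              · rw [if_pos h]
                have h1 := hInv' j hj
                have h2 := hpos j hj
                have h3 : (0:ℝ) ≤ (k:ℝ) := Nat.cast_nonneg k
                refine happy_of_credit (c := s) ?_ ?_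
                · rw [← rem_def]; nlinarith
                · intro o ho; exact (mem_itv.mp ho).1
              · rw [if_neg h]
                have h1 := hcm j hj
                have h2 := hpos j hj
                have h3 : (1:ℝ) ≤ (k:ℝ) := by exact_mod_cast hk
                refine happy_of_credit (c := m) ?_ ?_
                · rw [sum_empty]; nlinarith
                · intro o ho; exact absurd ho (notMem_empty o)
        · -- chores world
          have hPm : ∀ j ∈ A, (k:ℝ) * tgt n u j ≤ rem u j m + cred u j m := by
            intro j hj
            have h2 := hneg j hj
            have h3 : (0:ℝ) ≤ (k:ℝ) := Nat.cast_nonneg k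
            have h4 := cred_nonneg u j m
            rw [rem_m]
            nlinarith
          have hexQ : ∃ c, (∀ j ∈ A, (k:ℝ) * tgt n u j ≤ rem u j c + cred u j c) ∧ s ≤ c :=
            ⟨m, hPm, hs⟩
          obtain ⟨c0, ⟨hgood0, hsc0⟩, hc0min⟩ :
              ∃ c0, ((∀ j ∈ A, (k:ℝ) * tgt n u j ≤ rem u j c0 + cred u j c0) ∧ s ≤ c0) ∧
                ∀ c, c < c0 →
                  ¬((∀ j ∈ A, (k:ℝ) * tgt n u j ≤ rem u j c + cred u j c) ∧ s ≤ c) :=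
            ⟨Nat.find hexQ, Nat.find_spec hexQ, fun c hc => Nat.find_min hexQ hc⟩
          have hc0m : c0 ≤ m := by
            by_contra hgt
            exact hc0min m (by omega) ⟨hPm, hs⟩
          rcases eq_or_lt_of_le hsc0 with heq | hlt
          · -- give the empty bundle to some agent
            obtain ⟨i0, hi0⟩ := hne
            have hgs : ∀ j ∈ A, (k:ℝ) * tgt n u j ≤ rem u j s + cred u j s := by
              rw [heq]; exact hgood0
            obtain ⟨π', p1, p2, p3, p4, p5⟩ := ih (A.erase i0) s
              (by rw [card_erase_of_mem hi0, hcard]; omega)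
              (card_pos.mp (by rw [card_erase_of_mem hi0, hcard]; omega))
              hs
              (Or.inr fun j hj => hneg j (mem_of_mem_erase hj))
              (fun j hj => hgs j (mem_of_mem_erase hj))
            refine ⟨π', ?_, p2, p3, p4, ?_⟩
            · intro j hj; exact p1 j (fun h => hj (mem_of_mem_erase h))
            · intro j hj; by_cases hji : j = i0
              · have he : π' j = ∅ := p1 j (by rw [hji]; exact notMem_erase _ _)
                rw [he]
                left; rw [sum_empty]; exact hneg j hj
              · exact p5 j (mem_erase.mpr ⟨hji, hj⟩)
          · -- chores-style exit
            have hc1 : ∃ j ∈ A, rem u j (c0-1) + cred u j (c0-1) < (k:ℝ) * tgt n u j := by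
              by_contra hnp
              push_neg at hnp
              exact hc0min (c0-1) (by omega) ⟨hnp, by omega⟩
            obtain ⟨i, hiA, hilt⟩ := hc1
            have hc0m' : c0 - 1 < m := by omega
            obtain ⟨π', p1, p2, p3, p4, p5⟩ := ih (A.erase i) c0
              (by rw [card_erase_of_mem hiA, hcard]; omega)
              (card_pos.mp (by rw [card_erase_of_mem hiA, hcard]; omega))
              hc0m
              (Or.inr fun j hj => hneg j (mem_of_mem_erase hj))
              (fun j hj => hgood0 j (mem_of_mem_erase hj))
            have hstep : rem u i (c0-1) = u i ⟨c0-1, hc0m'⟩ + rem u i c0 := by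
              have h := rem_succ u i hc0m'
              rw [show c0 - 1 + 1 = c0 by omega] at h; exact h
            have hsum : ∑ o ∈ itv m s c0, u i o = rem u i s - rem u i c0 :=
              sum_itv u i (by omega)
            have hcm1 : cred u i s ≤ cred u i (c0-1) := cred_mono u i (by omega)
            have hhappy : happy n u i (itv m s c0) := by
              right; right
              refine ⟨⟨c0-1, hc0m'⟩, ?_, ?_⟩
              · rw [mem_itv]; simp only [Fin.val_mk]; omega
              · have h1 := hInv' i hiA
                rw [hsum]
                linarith [hstep]
            exact assemble u hiA (by omega) p1 p2 p3 p4 p5 hhappy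

end Prop1Aux


/-- For items `o_1, …, o_m` arranged on a path (modeled as `Fin m` with
its natural order) and additive utilities, there exists a complete allocation in which
every bundle is a set of consecutive items (possibly empty) and which satisfies PROP1. -/
theorem exists_connected_prop1_allocation
    (n m : ℕ) (hn : 0 < n)
    (u : Fin n → Fin m → ℝ) :
    ∃ π : Fin n → Finset (Fin m),
      (∀ i j : Fin n, i ≠ j → Disjoint (π i) (π j)) ∧
      (Finset.univ.biUnion π = Finset.univ) ∧
      -- each bundle is connected on the path (a set of consecutive items)
      (∀ i : Fin n, ∀ a b c : Fin m,
        a ∈ π i → c ∈ π i → a ≤ b → b ≤ c → b ∈ π i) ∧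
      -- PROP1
      (∀ i : Fin n,
        ((∑ o : Fin m, u i o) / n ≤ ∑ o ∈ π i, u i o) ∨
        (∃ o ∈ Finset.univ \ π i,
          (∑ o : Fin m, u i o) / n ≤ (∑ p ∈ π i, u i p) + u i o) ∨
        (∃ o ∈ π i,
          (∑ o : Fin m, u i o) / n ≤ (∑ p ∈ π i, u i p) - u i o)) := by
  classical
  open Finset Prop1Aux in
  have hnR : ((n:ℝ)) ≠ 0 := Nat.cast_ne_zero.mpr hn.ne'
  have hrem0 : ∀ i : Fin n, rem u i 0 = ∑ o : Fin m, u i o := by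
    intro i; rw [rem_def, itv_zero_m]
  have hntgt : ∀ i : Fin n, (n:ℝ) * tgt n u i = ∑ o : Fin m, u i o := by
    intro i; rw [tgt, mul_div_cancel₀ _ hnR]
  have hmain : ∃ π : Fin n → Finset (Fin m),
      (∀ j, ∃ a b : ℕ, π j = itv m a b) ∧
      (∀ j j', j ≠ j' → Disjoint (π j) (π j')) ∧
      (univ.biUnion π = itv m 0 m) ∧
      (∀ j, happy n u j (π j)) := by
    by_cases hA : (univ.filter (fun i : Fin n => 0 < tgt n u i)).Nonempty
    · set A := univ.filter (fun i : Fin n => 0 < tgt n u i) with hAdef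
      have hApos : ∀ i ∈ A, 0 < tgt n u i := fun i hi => (mem_filter.mp hi).2
      obtain ⟨π, q1, q2, q3, q4, q5⟩ := core hn u A.card A 0 rfl hA (Nat.zero_le m)
        (Or.inl hApos)
        (by
          intro i hi
          rw [hrem0 i, cred_zero, add_zero, ← hntgt i]
          have hcard : (A.card : ℝ) ≤ (n : ℝ) := by
            have := card_le_univ A
            rw [Fintype.card_fin] at this
            exact_mod_cast this
          nlinarith [hApos i hi])
      refine ⟨π, q2, q3, q4, ?_⟩
      intro j
      by_cases hj : j ∈ A
      · exact q5 j hj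
      · have hT : tgt n u j ≤ 0 := by
          by_contra h
          exact hj (mem_filter.mpr ⟨mem_univ j, by linarith⟩)
        rw [q1 j hj]
        left; rw [sum_empty]; exact hT
    · have hneg : ∀ i : Fin n, tgt n u i ≤ 0 := by
        intro i
        by_contra h
        exact hA ⟨i, mem_filter.mpr ⟨mem_univ i, by linarith⟩⟩
      have hune : (univ : Finset (Fin n)).Nonempty := ⟨⟨0, hn⟩, mem_univ _⟩
      obtain ⟨π, q1, q2, q3, q4, q5⟩ := core hn u (univ : Finset (Fin n)).card univ 0 rfl
        hune (Nat.zero_le m)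
        (Or.inr fun i _ => hneg i)
        (by
          intro i _
          rw [hrem0 i, cred_zero, add_zero, ← hntgt i, card_univ, Fintype.card_fin])
      exact ⟨π, q2, q3, q4, fun j => q5 j (mem_univ j)⟩
  obtain ⟨π, hshape, hdisj, hunion, hhappy⟩ := hmain
  refine ⟨π, hdisj, by rw [hunion, Prop1Aux.itv_zero_m], ?_, ?_⟩
  · intro i a b c ha hc hab hbc
    obtain ⟨p, q, hpq⟩ := hshape i
    rw [hpq, Prop1Aux.mem_itv] at ha hc ⊢
    rw [Fin.le_def] at hab hbc
    omega
  · intro i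
    have := hhappy i
    simpa [Prop1Aux.happy, Prop1Aux.tgt] using this
end

section
/- Let there be two agents w and ℓ with additive utilities u_w, u_ℓ : O → ℝ over a finite set O of objective items, i.e., O is partitioned into goods G = {o : u_w(o) > 0 and u_ℓ(o) > 0} and chores C = {o : u_w(o) < 0 and u_ℓ(o) < 0} with G ∪ C = O. Let π be a complete allocation of O to {w, ℓ}, and suppose there exists α ≥ 0 such that |u_ℓ(o)| ≥ α·|u_w(o)| for every item o ∈ (G ∩ π(ℓ)) ∪ (C ∩ π(w)), and |u_ℓ(o)| ≤ α·|u_w(o)| for every item o ∈ (G ∩ π(w)) ∪ (C ∩ π(ℓ)). Then π is Pareto-optimal: no complete allocation π' of O to {w, ℓ} satisfies u_i(π'(i)) ≥ u_i(π(i)) for both agents with strict inequality for at least one agent. -/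
/-- The key invariant of the generalized Adjusted Winner rule.
Two agents `w` (winner, index 0) and `ℓ` (loser, index 1) with additive utilities over
objective items (each item is a good for both or a chore for both). If there is a
threshold `α ≥ 0` such that `|u_ℓ(o)| ≥ α·|u_w(o)|` for every good held by the loser and
every chore held by the winner, and `|u_ℓ(o)| ≤ α·|u_w(o)|` for every good held by the
winner and every chore held by the loser, then the allocation is Pareto-optimal. -/
theorem adjusted_winner_threshold_pareto_optimal
    (ι : Type*) [DecidableEq ι] (O : Finset ι)
    (uw ul : ι → ℝ)
    -- every item is an objective good or an objective chore
    (hobj : ∀ o ∈ O, (0 < uw o ∧ 0 < ul o) ∨ (uw o < 0 ∧ ul o < 0))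
    (A B : Finset ι)  -- A = π(w), B = π(ℓ)
    (hAsub : A ⊆ O) (hBsub : B ⊆ O)
    (hdisj : Disjoint A B) (hcomplete : A ∪ B = O)
    (α : ℝ) (hα : 0 ≤ α)
    (hlow : ∀ o ∈ O, ((0 < uw o ∧ 0 < ul o ∧ o ∈ B) ∨ (uw o < 0 ∧ ul o < 0 ∧ o ∈ A)) →
      α * |uw o| ≤ |ul o|)
    (hhigh : ∀ o ∈ O, ((0 < uw o ∧ 0 < ul o ∧ o ∈ A) ∨ (uw o < 0 ∧ ul o < 0 ∧ o ∈ B)) →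
      |ul o| ≤ α * |uw o|) :
    ¬ ∃ A' B' : Finset ι,
      A' ⊆ O ∧ B' ⊆ O ∧ Disjoint A' B' ∧ A' ∪ B' = O ∧
      (∑ o ∈ A, uw o ≤ ∑ o ∈ A', uw o) ∧ (∑ o ∈ B, ul o ≤ ∑ o ∈ B', ul o) ∧
      ((∑ o ∈ A, uw o < ∑ o ∈ A', uw o) ∨ (∑ o ∈ B, ul o < ∑ o ∈ B', ul o)) := by
  rintro ⟨A', B', hA's, hB's, hdisj', hcomp', hw, hl, hstrict⟩
  -- pointwise potential comparison
  have hmemAB : ∀ o ∈ O, o ∉ A → o ∈ B := by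
    intro o ho hA
    have : o ∈ A ∪ B := hcomplete ▸ ho
    rcases Finset.mem_union.mp this with h | h
    · exact absurd h hA
    · exact h
  have hmemAB' : ∀ o ∈ O, o ∉ A' → o ∈ B' := by
    intro o ho hA
    have : o ∈ A' ∪ B' := hcomp' ▸ ho
    rcases Finset.mem_union.mp this with h | h
    · exact absurd h hA
    · exact h
  have hAnB : ∀ o, o ∈ A → o ∉ B := fun o h => Finset.disjoint_left.mp hdisj h
  have hAnB' : ∀ o, o ∈ A' → o ∉ B' := fun o h => Finset.disjoint_left.mp hdisj' h
  have hptwise : ∀ o ∈ O,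
      ((if o ∈ A' then α * uw o else 0) + (if o ∈ B' then ul o else 0)) ≤
      ((if o ∈ A then α * uw o else 0) + (if o ∈ B then ul o else 0)) := by
    intro o ho
    by_cases hA : o ∈ A
    · have hB : o ∉ B := hAnB o hA
      by_cases hA' : o ∈ A'
      · simp [hA, hB, hA', hAnB' o hA']
      · have hB' : o ∈ B' := hmemAB' o ho hA'
        simp only [hA, hB, hA', hB', if_true, if_false, if_neg, add_zero, zero_add]
        rcases hobj o ho with ⟨hwp, hlp⟩ | ⟨hwn, hln⟩
        · have := hhigh o ho (Or.inl ⟨hwp, hlp, hA⟩)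
          rw [abs_of_pos hlp, abs_of_pos hwp] at this
          linarith
        · have := hlow o ho (Or.inr ⟨hwn, hln, hA⟩)
          rw [abs_of_neg hln, abs_of_neg hwn] at this
          linarith
    · have hB : o ∈ B := hmemAB o ho hA
      by_cases hA' : o ∈ A'
      · have hB' : o ∉ B' := hAnB' o hA'
        simp only [hA, hB, hA', hB', if_true, if_false, if_neg, add_zero, zero_add]
        rcases hobj o ho with ⟨hwp, hlp⟩ | ⟨hwn, hln⟩
        · have := hlow o ho (Or.inl ⟨hwp, hlp, hB⟩)
          rw [abs_of_pos hlp, abs_of_pos hwp] at this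
          linarith
        · have := hhigh o ho (Or.inr ⟨hwn, hln, hB⟩)
          rw [abs_of_neg hln, abs_of_neg hwn] at this
          linarith
      · simp [hA, hB, hA', hmemAB' o ho hA']
  have esum : ∀ (S T : Finset ι), S ⊆ O → T ⊆ O →
      ∑ o ∈ O, ((if o ∈ S then α * uw o else 0) + (if o ∈ T then ul o else 0)) =
      α * ∑ o ∈ S, uw o + ∑ o ∈ T, ul o := by
    intro S T hS hT
    rw [Finset.sum_add_distrib, Finset.sum_ite_mem, Finset.sum_ite_mem,
      Finset.inter_eq_right.mpr hS, Finset.inter_eq_right.mpr hT, Finset.mul_sum]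
  have hpot : α * ∑ o ∈ A', uw o + ∑ o ∈ B', ul o ≤ α * ∑ o ∈ A, uw o + ∑ o ∈ B, ul o := by
    rw [← esum A' B' hA's hB's, ← esum A B hAsub hBsub]
    exact Finset.sum_le_sum hptwise
  rcases hstrict with hsw | hsl
  · -- strict improvement for the winner
    rcases hα.lt_or_eq with hpos | h0
    · have := mul_lt_mul_of_pos_left hsw hpos
      linarith
    · -- α = 0
      subst h0
      have hBeq : B' = B := by
        by_contra hne
        obtain ⟨o, ho⟩ : ∃ o, (o ∈ B ∧ o ∉ B') ∨ (o ∈ B' ∧ o ∉ B) := by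
          by_contra h
          push_neg at h
          apply hne
          ext o
          have := h o
          tauto
        have hoO : o ∈ O := by
          rcases ho with ⟨h1, _⟩ | ⟨h1, _⟩
          · exact hBsub h1
          · exact hB's h1
        have hstrictpt :
            ((if o ∈ A' then (0:ℝ) * uw o else 0) + (if o ∈ B' then ul o else 0)) <
            ((if o ∈ A then (0:ℝ) * uw o else 0) + (if o ∈ B then ul o else 0)) := by
          rcases ho with ⟨hB1, hB2⟩ | ⟨hB1, hB2⟩
          · have hA1 : o ∉ A := fun h => hAnB o h hB1
            have hA2 : o ∈ A' := by
              by_contra hA2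
              exact hB2 (hmemAB' o hoO hA2)
            have hlpos : 0 < ul o := by
              rcases hobj o hoO with ⟨_, hlp⟩ | ⟨hwn, hln⟩
              · exact hlp
              · have := hhigh o hoO (Or.inr ⟨hwn, hln, hB1⟩)
                rw [abs_of_neg hln] at this
                linarith
            simp [hA1, hA2, hB1, hB2, hlpos]
          · have hA1 : o ∈ A := by
              by_contra hA1
              exact hB2 (hmemAB o hoO hA1)
            have hA2 : o ∉ A' := fun h => hAnB' o h hB1
            have hlneg : ul o < 0 := by
              rcases hobj o hoO with ⟨hwp, hlp⟩ | ⟨_, hln⟩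
              · have := hhigh o hoO (Or.inl ⟨hwp, hlp, hA1⟩)
                rw [abs_of_pos hlp] at this
                linarith
              · exact hln
            simp [hA1, hA2, hB1, hB2, hlneg]
        have hlt := Finset.sum_lt_sum hptwise ⟨o, hoO, hstrictpt⟩
        rw [esum A' B' hA's hB's, esum A B hAsub hBsub] at hlt
        simp only [zero_mul, zero_add] at hlt
        linarith
      have hAeq : A' = A := by
        have e1 : A' = O \ B' := by
          ext x
          simp only [Finset.mem_sdiff, ← hcomp', Finset.mem_union]
          constructor
          · intro hx
            exact ⟨Or.inl hx, hAnB' x hx⟩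
          · rintro ⟨hx | hx, hx2⟩
            · exact hx
            · exact absurd hx hx2
        have e2 : A = O \ B := by
          ext x
          simp only [Finset.mem_sdiff, ← hcomplete, Finset.mem_union]
          constructor
          · intro hx
            exact ⟨Or.inl hx, hAnB x hx⟩
          · rintro ⟨hx | hx, hx2⟩
            · exact hx
            · exact absurd hx hx2
        rw [e1, e2, hBeq]
      rw [hAeq] at hsw
      exact lt_irrefl _ hsw
  · linarith [mul_le_mul_of_nonneg_left hw hα]
end
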